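/- arXiv:1611.07758 — 7 statements merged into one kernel-verified Lean document; each statement's English description precedes it below -/
import Mathlib

section
/- Let K₁, K₂, L₁, L₂, L₃, M₁, M₂ ∈ ℂ, let U ⊆ ℂ∖{0,1} be open, and let y : U → ℂ be holomorphic and satisfy on U the third-order ODE y''' + ((K₁ z + K₂(z−1))/(z(z−1))) y'' + ((L₁ z² + L₂(z−1)² + L₃ z(z−1))/(z²(z−1)²)) y' + ((M₁ z + M₂(z−1))/(z²(z−1)²)) y = 0. Let η, ζ ∈ ℂ satisfy M₂ + ηζ + ηK₂ − η = 0 and L₂ + ζK₂ + ζ² − ζ = 0. Define f : U → ℂ³ by f(z) = (y(z), (z−1)y'(z), (η/z)y(z) + ζ((z−1)/z)y'(z) + (z−1)² y''(z)). Then f satisfies on U the Fuchsian system f'(z) = (A/z + B/(z−1)) f(z), where A = [[0,0,0],[η,ζ,0],[−M₁−M₂+(ζ+2−K₁)η, −η−L₂−L₃+ζ²+(1−K₁)ζ, −ζ−K₂]] and B = [[0,1,0],[−η,1−ζ,1],[(K₁−ζ−2)η, η−L₁−ζ²−(1−K₁)ζ, 2+ζ−K₁]]. -/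
open Matrix

/-- The residue matrix `A` at `z = 0` of the Fuchsian system of Proposition 4. -/
noncomputable def fuchsA (K₁ K₂ L₁ L₂ L₃ M₁ M₂ η ζ : ℂ) : Matrix (Fin 3) (Fin 3) ℂ :=
  !![0, 0, 0;
     η, ζ, 0;
     -M₁ - M₂ + (ζ + 2 - K₁) * η, -η - L₂ - L₃ + ζ ^ 2 + (1 - K₁) * ζ, -ζ - K₂]

/-- The residue matrix `B` at `z = 1` of the Fuchsian system of Proposition 4. -/
noncomputable def fuchsB (K₁ K₂ L₁ L₂ L₃ M₁ M₂ η ζ : ℂ) : Matrix (Fin 3) (Fin 3) ℂ :=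
  !![0, 1, 0;
     -η, 1 - ζ, 1;
     (K₁ - ζ - 2) * η, η - L₁ - ζ ^ 2 - (1 - K₁) * ζ, 2 + ζ - K₁]

set_option maxHeartbeats 1000000 in
/-- main part of Proposition 4.  A holomorphic solution `y` of the
third-order Fuchsian ODE (8.1) gives rise, via the gauge transformation
`y ↦ (y, (z−1)y', (η/z)y + ζ((z−1)/z)y' + (z−1)²y'')`, to a solution `f` of the
first-order Fuchsian system `f' = (A/z + B/(z−1)) f`. -/
theorem dotsenko_fateev_fuchsian_system (K₁ K₂ L₁ L₂ L₃ M₁ M₂ : ℂ)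
    (U : Set ℂ) (hU : IsOpen U) (hU01 : U ⊆ {0, 1}ᶜ)
    (y : ℂ → ℂ) (hy : DifferentiableOn ℂ y U)
    (hode : ∀ z ∈ U,
      deriv (deriv (deriv y)) z
        + ((K₁ * z + K₂ * (z - 1)) / (z * (z - 1))) * deriv (deriv y) z
        + ((L₁ * z ^ 2 + L₂ * (z - 1) ^ 2 + L₃ * z * (z - 1)) / (z ^ 2 * (z - 1) ^ 2)) * deriv y z
        + ((M₁ * z + M₂ * (z - 1)) / (z ^ 2 * (z - 1) ^ 2)) * y z = 0)
    (η ζ : ℂ) (hη : M₂ + η * ζ + η * K₂ - η = 0) (hζ : L₂ + ζ * K₂ + ζ ^ 2 - ζ = 0)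
    (f : ℂ → Fin 3 → ℂ)
    (hf : ∀ z, f z = ![y z, (z - 1) * deriv y z,
      (η / z) * y z + ζ * ((z - 1) / z) * deriv y z + (z - 1) ^ 2 * deriv (deriv y) z]) :
    ∀ z ∈ U, HasDerivAt f
      ((z⁻¹ • fuchsA K₁ K₂ L₁ L₂ L₃ M₁ M₂ η ζ
        + (z - 1)⁻¹ • fuchsB K₁ K₂ L₁ L₂ L₃ M₁ M₂ η ζ).mulVec (f z)) z := by
  have hM₂ : M₂ = η - η * ζ - η * K₂ := by linear_combination hη
  have hL₂ : L₂ = ζ - ζ * K₂ - ζ ^ 2 := by linear_combination hζ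
  subst hM₂ hL₂
  have hfe : f = fun z => ![y z, (z - 1) * deriv y z,
      (η / z) * y z + ζ * ((z - 1) / z) * deriv y z + (z - 1) ^ 2 * deriv (deriv y) z] :=
    funext hf
  subst hfe
  intro z hz
  have hz' := hU01 hz
  simp only [Set.mem_compl_iff, Set.mem_insert_iff, Set.mem_singleton_iff, not_or] at hz'
  obtain ⟨hz0, hz1⟩ := hz'
  have hz1' : z - 1 ≠ 0 := sub_ne_zero.mpr hz1
  have hya : AnalyticOnNhd ℂ y U := hy.analyticOnNhd hU
  have hy1 : AnalyticOnNhd ℂ (deriv y) U := hya.deriv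
  have hy2 : AnalyticOnNhd ℂ (deriv (deriv y)) U := hy1.deriv
  have h0 : HasDerivAt y (deriv y z) z := ((hya z hz).differentiableAt).hasDerivAt
  have h1 : HasDerivAt (deriv y) (deriv (deriv y) z) z := ((hy1 z hz).differentiableAt).hasDerivAt
  have h2 : HasDerivAt (deriv (deriv y)) (deriv (deriv (deriv y)) z) z :=
    ((hy2 z hz).differentiableAt).hasDerivAt
  have hode' := hode z hz
  have hinv : HasDerivAt (fun z : ℂ => z⁻¹) (-(z ^ 2)⁻¹) z := hasDerivAt_inv hz0
  have hsub : HasDerivAt (fun z : ℂ => z - 1) 1 z := (hasDerivAt_id z).sub_const 1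
  rw [hasDerivAt_pi]
  intro i
  fin_cases i
  · simp only [Matrix.cons_val_zero, Matrix.cons_val_one, Matrix.head_cons, fuchsA, fuchsB,
      Matrix.mulVec, dotProduct, Fin.sum_univ_three, Matrix.add_apply, Matrix.smul_apply,
      Matrix.cons_val', Matrix.empty_val', Matrix.cons_val_fin_one, Matrix.cons_val_two,
      Matrix.tail_cons, Matrix.of_apply, smul_eq_mul, Fin.zero_eta, Fin.mk_one, Fin.reduceFinMk]
    refine h0.congr_deriv (Eq.symm ?_)
    field_simp [hz0, hz1', sub_ne_zero]
    ring
  · simp only [Matrix.cons_val_zero, Matrix.cons_val_one, Matrix.head_cons, fuchsA, fuchsB,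
      Matrix.mulVec, dotProduct, Fin.sum_univ_three, Matrix.add_apply, Matrix.smul_apply,
      Matrix.cons_val', Matrix.empty_val', Matrix.cons_val_fin_one, Matrix.cons_val_two,
      Matrix.tail_cons, Matrix.of_apply, smul_eq_mul, Fin.zero_eta, Fin.mk_one, Fin.reduceFinMk]
    refine (hsub.mul h1).congr_deriv (Eq.symm ?_)
    field_simp [hz0, hz1', sub_ne_zero]
    ring
  · simp only [Matrix.cons_val_zero, Matrix.cons_val_one, Matrix.head_cons, fuchsA, fuchsB,
      Matrix.mulVec, dotProduct, Fin.sum_univ_three, Matrix.add_apply, Matrix.smul_apply,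
      Matrix.cons_val', Matrix.empty_val', Matrix.cons_val_fin_one, Matrix.cons_val_two,
      Matrix.tail_cons, Matrix.of_apply, smul_eq_mul, Fin.zero_eta, Fin.mk_one, Fin.reduceFinMk, Matrix.vecHead]
    have hy3 : deriv (deriv (deriv y)) z =
        -(((K₁ * z + K₂ * (z - 1)) / (z * (z - 1))) * deriv (deriv y) z
          + ((L₁ * z ^ 2 + (ζ - ζ * K₂ - ζ ^ 2) * (z - 1) ^ 2 + L₃ * z * (z - 1)) /
              (z ^ 2 * (z - 1) ^ 2)) * deriv y z
          + ((M₁ * z + (η - η * ζ - η * K₂) * (z - 1)) / (z ^ 2 * (z - 1) ^ 2)) * y z) := by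
      linear_combination hode'
    have hterm1 : HasDerivAt (fun z => (η / z) * y z)
        (η * -(z ^ 2)⁻¹ * y z + η / z * deriv y z) z := by
      simpa [div_eq_mul_inv, mul_assoc, Pi.mul_def] using ((hinv.const_mul η).mul h0)
    have hterm2 : HasDerivAt (fun z => ζ * ((z - 1) / z) * deriv y z)
        (ζ * (1 * z⁻¹ + (z - 1) * -(z ^ 2)⁻¹) * deriv y z
          + ζ * ((z - 1) / z) * deriv (deriv y) z) z := by
      simpa [div_eq_mul_inv, mul_assoc, Pi.mul_def] using (((hsub.mul hinv).const_mul ζ).mul h1)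
    have hterm3 : HasDerivAt (fun z => (z - 1) ^ 2 * deriv (deriv y) z)
        ((2 * (z - 1) ^ 1 * 1) * deriv (deriv y) z
          + (z - 1) ^ 2 * deriv (deriv (deriv y)) z) z := (hsub.pow 2).mul h2
    refine ((hterm1.add hterm2).add hterm3).congr_deriv (Eq.symm ?_)
    have hpoly := hode'
    field_simp [hz0, hz1'] at hpoly
    rw [hy3]
    field_simp [hz0, hz1']
    ring
end

section
/- Let K₁, K₂, L₁, L₂, L₃, M₁, M₂ ∈ ℂ, let U ⊆ ℂ∖{0,1} be a nonempty open set, and let η, ζ ∈ ℂ satisfy M₂ + ηζ + ηK₂ − η = 0 and L₂ + ζK₂ + ζ² − ζ = 0. Let V be the ℂ-vector space of holomorphic solutions y on U of y''' + ((K₁ z + K₂(z−1))/(z(z−1))) y'' + ((L₁ z² + L₂(z−1)² + L₃ z(z−1))/(z²(z−1)²)) y' + ((M₁ z + M₂(z−1))/(z²(z−1)²)) y = 0, and let W be the ℂ-vector space of holomorphic solutions f : U → ℂ³ of the system f'(z) = (A/z + B/(z−1)) f(z), with A = [[0,0,0],[η,ζ,0],[−M₁−M₂+(ζ+2−K₁)η,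 −η−L₂−L₃+ζ²+(1−K₁)ζ, −ζ−K₂]] and B = [[0,1,0],[−η,1−ζ,1],[(K₁−ζ−2)η, η−L₁−ζ²−(1−K₁)ζ, 2+ζ−K₁]]. Then the map y ↦ (y, (z−1)y', (η/z)y + ζ((z−1)/z)y' + (z−1)²y'') is a ℂ-linear isomorphism from V onto W. -/
open Matrix
open scoped Classical

/-- The gauge map `y ↦ (y, (z−1)y', (η/z)y + ζ((z−1)/z)y' + (z−1)²y'')`,
normalized to `0` outside `U` (solutions are regarded as functions on `U`,
encoded as functions on `ℂ` vanishing off `U`). -/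
noncomputable def gaugeMap (η ζ : ℂ) (U : Set ℂ) (y : ℂ → ℂ) : ℂ → Fin 3 → ℂ :=
  fun z => if z ∈ U then
    ![y z, (z - 1) * deriv y z,
      (η / z) * y z + ζ * ((z - 1) / z) * deriv y z + (z - 1) ^ 2 * deriv (deriv y) z]
  else 0

lemma gaugeMap_of_mem (η ζ : ℂ) (U : Set ℂ) (y : ℂ → ℂ) {z : ℂ} (hz : z ∈ U) :
    gaugeMap η ζ U y z = ![y z, (z - 1) * deriv y z,
      (η / z) * y z + ζ * ((z - 1) / z) * deriv y z + (z - 1) ^ 2 * deriv (deriv y) z] := by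
  simp [gaugeMap, hz]
lemma mulVec_expand (K₁ K₂ L₁ L₂ L₃ M₁ M₂ η ζ z : ℂ) (v : Fin 3 → ℂ) :
    ((z⁻¹ • fuchsA K₁ K₂ L₁ L₂ L₃ M₁ M₂ η ζ
      + (z - 1)⁻¹ • fuchsB K₁ K₂ L₁ L₂ L₃ M₁ M₂ η ζ).mulVec v) =
    ![ (z-1)⁻¹ * v 1,
       z⁻¹ * (η * v 0 + ζ * v 1) + (z-1)⁻¹ * (-(η * v 0) + (1 - ζ) * v 1 + v 2),
       z⁻¹ * ((-M₁ - M₂ + (ζ + 2 - K₁) * η) * v 0 + (-η - L₂ - L₃ + ζ ^ 2 + (1 - K₁) * ζ) * v 1 + (-ζ - K₂) * v 2)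
       + (z-1)⁻¹ * ((K₁ - ζ - 2) * η * v 0 + (η - L₁ - ζ ^ 2 - (1 - K₁) * ζ) * v 1 + (2 + ζ - K₁) * v 2) ] := by
  funext i
  fin_cases i <;>
    simp [fuchsA, fuchsB, Matrix.mulVec, dotProduct, Fin.sum_univ_three,
      Matrix.add_apply, Matrix.smul_apply] <;> ring


lemma gauge_hasDerivAt (K₁ K₂ L₁ L₂ L₃ M₁ M₂ η ζ : ℂ)
    (U : Set ℂ) (hU : IsOpen U) (hU01 : U ⊆ ({0, 1} : Set ℂ)ᶜ)
    (hη : M₂ + η * ζ + η * K₂ - η = 0) (hζ : L₂ + ζ * K₂ + ζ ^ 2 - ζ = 0)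
    (y : ℂ → ℂ) (hyd : DifferentiableOn ℂ y U)
    (hODE : ∀ z ∈ U,
        deriv (deriv (deriv y)) z
          + ((K₁ * z + K₂ * (z - 1)) / (z * (z - 1))) * deriv (deriv y) z
          + ((L₁ * z ^ 2 + L₂ * (z - 1) ^ 2 + L₃ * z * (z - 1)) /
              (z ^ 2 * (z - 1) ^ 2)) * deriv y z
          + ((M₁ * z + M₂ * (z - 1)) / (z ^ 2 * (z - 1) ^ 2)) * y z = 0)
    {z : ℂ} (hz : z ∈ U) :
    HasDerivAt (gaugeMap η ζ U y)
      ((z⁻¹ • fuchsA K₁ K₂ L₁ L₂ L₃ M₁ M₂ η ζ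
        + (z - 1)⁻¹ • fuchsB K₁ K₂ L₁ L₂ L₃ M₁ M₂ η ζ).mulVec (gaugeMap η ζ U y z)) z := by
  have hz01 := hU01 hz
  simp only [Set.mem_compl_iff, Set.mem_insert_iff, Set.mem_singleton_iff, not_or] at hz01
  have hz0 : z ≠ 0 := hz01.1
  have hz1 : z - 1 ≠ 0 := sub_ne_zero.mpr hz01.2
  have han : AnalyticOnNhd ℂ y U := hyd.analyticOnNhd hU
  have han1 : AnalyticOnNhd ℂ (deriv y) U := han.deriv
  have han2 : AnalyticOnNhd ℂ (deriv (deriv y)) U := han1.deriv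
  have hd1 : HasDerivAt y (deriv y z) z := (han z hz).differentiableAt.hasDerivAt
  have hd2 : HasDerivAt (deriv y) (deriv (deriv y) z) z :=
    (han1 z hz).differentiableAt.hasDerivAt
  have hd3 : HasDerivAt (deriv (deriv y)) (deriv (deriv (deriv y)) z) z :=
    (han2 z hz).differentiableAt.hasDerivAt
  have hODEz : z^2*(z-1)^2 * deriv (deriv (deriv y)) z
      + z*(z-1)*(K₁*z + K₂*(z-1)) * deriv (deriv y) z
      + (L₁*z^2 + L₂*(z-1)^2 + L₃*z*(z-1)) * deriv y z
      + (M₁*z + M₂*(z-1)) * y z = 0 := by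
    have h := hODE z hz
    have h2 : (z*(z-1))^3 * (z^2*(z-1)^2 * deriv (deriv (deriv y)) z
      + z*(z-1)*(K₁*z + K₂*(z-1)) * deriv (deriv y) z
      + (L₁*z^2 + L₂*(z-1)^2 + L₃*z*(z-1)) * deriv y z
      + (M₁*z + M₂*(z-1)) * y z) = 0 := by
      field_simp at h
      linear_combination (z*(z-1))^3 * h
    exact (mul_eq_zero.mp h2).resolve_left (pow_ne_zero 3 (mul_ne_zero hz0 hz1))
  have hev : gaugeMap η ζ U y =ᶠ[nhds z] (fun w => ![y w, (w - 1) * deriv y w,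
      (η / w) * y w + ζ * ((w - 1) / w) * deriv y w + (w - 1) ^ 2 * deriv (deriv y) w]) :=
    Filter.eventuallyEq_of_mem (hU.mem_nhds hz) fun w hw => gaugeMap_of_mem η ζ U y hw
  rw [gaugeMap_of_mem η ζ U y hz, mulVec_expand]
  simp only [Matrix.cons_val_zero, Matrix.cons_val_one, Matrix.head_cons,
    Matrix.cons_val_two, Matrix.tail_cons]
  refine HasDerivAt.congr_of_eventuallyEq ?_ hev
  rw [hasDerivAt_pi]
  intro i
  fin_cases i <;>
    simp only [Fin.zero_eta, Fin.mk_one, Fin.reduceFinMk, Matrix.cons_val, Matrix.cons_val_zero, Matrix.cons_val_one, Matrix.head_cons,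
      Matrix.cons_val_two, Matrix.tail_cons, Fin.isValue]
  · refine hd1.congr_deriv ?_
    field_simp
  · have h := ((hasDerivAt_id z).sub_const 1).fun_mul hd2
    refine h.congr_deriv ?_
    simp only [id]
    field_simp
    ring
  · have t1 := ((hasDerivAt_const z η).fun_div (hasDerivAt_id z) hz0).fun_mul hd1
    have t2 := ((((hasDerivAt_id z).sub_const 1).fun_div (hasDerivAt_id z) hz0).const_mul ζ).fun_mul hd2
    have t3 := (((hasDerivAt_id z).sub_const 1).fun_pow 2).fun_mul hd3
    have h := (t1.fun_add t2).fun_add t3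
    refine h.congr_deriv ?_
    linear_combination (norm := skip) (1/z^2) * hODEz + (1/z^2 * y z) * hη +
      ((z-1)/z^2 * deriv y z) * hζ
    simp only [id]
    field_simp
    ring

set_option maxHeartbeats 1000000 in
lemma gauge_surj_aux (K₁ K₂ L₁ L₂ L₃ M₁ M₂ η ζ : ℂ)
    (U : Set ℂ) (hU : IsOpen U) (hU01 : U ⊆ ({0, 1} : Set ℂ)ᶜ)
    (hη : M₂ + η * ζ + η * K₂ - η = 0) (hζ : L₂ + ζ * K₂ + ζ ^ 2 - ζ = 0)
    (f : ℂ → Fin 3 → ℂ) (hf0 : ∀ z ∉ U, f z = 0)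
    (hfd : ∀ z ∈ U, HasDerivAt f
      ((z⁻¹ • fuchsA K₁ K₂ L₁ L₂ L₃ M₁ M₂ η ζ
        + (z - 1)⁻¹ • fuchsB K₁ K₂ L₁ L₂ L₃ M₁ M₂ η ζ).mulVec (f z)) z) :
    (∀ z ∉ U, (fun w => f w 0) z = 0) ∧
    DifferentiableOn ℂ (fun w => f w 0) U ∧
    (∀ z ∈ U,
        deriv (deriv (deriv (fun w => f w 0))) z
          + ((K₁ * z + K₂ * (z - 1)) / (z * (z - 1))) * deriv (deriv (fun w => f w 0)) z
          + ((L₁ * z ^ 2 + L₂ * (z - 1) ^ 2 + L₃ * z * (z - 1)) /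
              (z ^ 2 * (z - 1) ^ 2)) * deriv (fun w => f w 0) z
          + ((M₁ * z + M₂ * (z - 1)) / (z ^ 2 * (z - 1) ^ 2)) * f z 0 = 0) ∧
    gaugeMap η ζ U (fun w => f w 0) = f := by
  have hne : ∀ z ∈ U, z ≠ 0 ∧ z - 1 ≠ 0 := by
    intro z hz
    have h := hU01 hz
    simp only [Set.mem_compl_iff, Set.mem_insert_iff, Set.mem_singleton_iff, not_or] at h
    exact ⟨h.1, sub_ne_zero.mpr h.2⟩
  have hD : ∀ z ∈ U, ∀ i, HasDerivAt (fun w => f w i)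
      (![ (z-1)⁻¹ * f z 1,
       z⁻¹ * (η * f z 0 + ζ * f z 1) + (z-1)⁻¹ * (-(η * f z 0) + (1 - ζ) * f z 1 + f z 2),
       z⁻¹ * ((-M₁ - M₂ + (ζ + 2 - K₁) * η) * f z 0 + (-η - L₂ - L₃ + ζ ^ 2 + (1 - K₁) * ζ) * f z 1 + (-ζ - K₂) * f z 2)
       + (z-1)⁻¹ * ((K₁ - ζ - 2) * η * f z 0 + (η - L₁ - ζ ^ 2 - (1 - K₁) * ζ) * f z 1 + (2 + ζ - K₁) * f z 2) ] i) z := by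
    intro z hz i
    have h := (hasDerivAt_pi.mp (hfd z hz)) i
    rwa [mulVec_expand] at h
  have h0 : ∀ z ∈ U, HasDerivAt (fun w => f w 0) ((z-1)⁻¹ * f z 1) z := by
    intro z hz
    simpa using hD z hz 0
  have hdy : ∀ z ∈ U, deriv (fun w => f w 0) z = (z-1)⁻¹ * f z 1 :=
    fun z hz => (h0 z hz).deriv
  have hydiff : DifferentiableOn ℂ (fun w => f w 0) U :=
    fun z hz => (h0 z hz).differentiableAt.differentiableWithinAt
  have hdd : ∀ z ∈ U, deriv (deriv (fun w => f w 0)) z =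
      (z * f z 2 - η * f z 0 - ζ * f z 1) / (z * (z - 1) ^ 2) := by
    intro z hz
    obtain ⟨hz0, hz1⟩ := hne z hz
    have h1 : HasDerivAt (fun w => f w 1)
        (z⁻¹ * (η * f z 0 + ζ * f z 1)
          + (z-1)⁻¹ * (-(η * f z 0) + (1 - ζ) * f z 1 + f z 2)) z := by
      simpa using hD z hz 1
    have hg1 := (((hasDerivAt_id z).sub_const 1).fun_inv hz1).fun_mul h1
    simp only [id_eq] at hg1
    have hev : deriv (fun w => f w 0) =ᶠ[nhds z] fun w => (w-1)⁻¹ * f w 1 :=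
      Filter.eventuallyEq_of_mem (hU.mem_nhds hz) fun w hw => hdy w hw
    rw [hev.deriv_eq, hg1.deriv]
    field_simp
    ring
  refine ⟨fun z hz => by simp [hf0 z hz], hydiff, ?_, ?_⟩
  · intro z hz
    obtain ⟨hz0, hz1⟩ := hne z hz
    have hF0 : HasDerivAt (fun w => f w 0) ((z-1)⁻¹ * f z 1) z := h0 z hz
    have hF1 : HasDerivAt (fun w => f w 1)
        (z⁻¹ * (η * f z 0 + ζ * f z 1)
          + (z-1)⁻¹ * (-(η * f z 0) + (1 - ζ) * f z 1 + f z 2)) z := by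
      simpa using hD z hz 1
    have hF2 : HasDerivAt (fun w => f w 2)
        (z⁻¹ * ((-M₁ - M₂ + (ζ + 2 - K₁) * η) * f z 0 + (-η - L₂ - L₃ + ζ ^ 2 + (1 - K₁) * ζ) * f z 1 + (-ζ - K₂) * f z 2)
          + (z-1)⁻¹ * ((K₁ - ζ - 2) * η * f z 0 + (η - L₁ - ζ ^ 2 - (1 - K₁) * ζ) * f z 1 + (2 + ζ - K₁) * f z 2)) z := by
      simpa using hD z hz 2
    have hN := (((hasDerivAt_id z).fun_mul hF2).fun_sub (hF0.const_mul η)).fun_sub (hF1.const_mul ζ)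
    have hDen := (hasDerivAt_id z).fun_mul (((hasDerivAt_id z).sub_const 1).fun_pow 2)
    simp only [id_eq] at hN hDen
    have key := hN.fun_div hDen (show z * (z - 1) ^ 2 ≠ 0 from
      mul_ne_zero hz0 (pow_ne_zero 2 hz1))
    have hev2 : deriv (deriv (fun w => f w 0)) =ᶠ[nhds z]
        (fun w => (w * f w 2 - η * f w 0 - ζ * f w 1) / (w * (w - 1) ^ 2)) :=
      Filter.eventuallyEq_of_mem (hU.mem_nhds hz) fun w hw => hdd w hw
    have hddd := hev2.deriv_eq.trans key.deriv
    have e3 : deriv (deriv (deriv (fun w => f w 0))) z =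
        (-(ζ * f z 1) + ζ^2 * f z 1 - η * f z 0 + η*ζ * f z 0 + z * (K₂ * f z 2 + L₃ * f z 1 + L₂ * f z 1 + ζ * f z 1 + ζ*K₁ * f z 1 - ζ^2 * f z 1 + M₂ * f z 0 + M₁ * f z 0 + η * f z 0 + η*K₁ * f z 0 - η*ζ * f z 0) - z^2 * ((K₂ + K₁) * f z 2 + (L₃ + L₂ + L₁) * f z 1 + (M₂ + M₁) * f z 0)) / (z^2 * (z-1)^3) := by
      rw [hddd, div_eq_div_iff (pow_ne_zero 2 (mul_ne_zero hz0 (pow_ne_zero 2 hz1)))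
        (mul_ne_zero (pow_ne_zero 2 hz0) (pow_ne_zero 3 hz1))]
      field_simp
      ring
    have t2 : (K₁ * z + K₂ * (z - 1)) / (z * (z - 1)) *
        ((z * f z 2 - η * f z 0 - ζ * f z 1) / (z * (z - 1) ^ 2))
        = ((K₁ * z + K₂ * (z - 1)) * (z * f z 2 - η * f z 0 - ζ * f z 1)) /
            (z ^ 2 * (z - 1) ^ 3) := by
      rw [div_mul_div_comm, div_eq_div_iff
        (mul_ne_zero (mul_ne_zero hz0 hz1) (mul_ne_zero hz0 (pow_ne_zero 2 hz1)))
        (mul_ne_zero (pow_ne_zero 2 hz0) (pow_ne_zero 3 hz1))]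
      ring
    have t3 : (L₁ * z ^ 2 + L₂ * (z - 1) ^ 2 + L₃ * z * (z - 1)) / (z ^ 2 * (z - 1) ^ 2) *
        ((z - 1)⁻¹ * f z 1)
        = ((L₁ * z ^ 2 + L₂ * (z - 1) ^ 2 + L₃ * z * (z - 1)) * f z 1) /
            (z ^ 2 * (z - 1) ^ 3) := by
      rw [inv_mul_eq_div, div_mul_div_comm, div_eq_div_iff
        (mul_ne_zero (mul_ne_zero (pow_ne_zero 2 hz0) (pow_ne_zero 2 hz1)) hz1)
        (mul_ne_zero (pow_ne_zero 2 hz0) (pow_ne_zero 3 hz1))]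
      ring
    have t4 : (M₁ * z + M₂ * (z - 1)) / (z ^ 2 * (z - 1) ^ 2) * f z 0
        = ((M₁ * z + M₂ * (z - 1)) * (z - 1) * f z 0) / (z ^ 2 * (z - 1) ^ 3) := by
      rw [div_mul_eq_mul_div, div_eq_div_iff
        (mul_ne_zero (pow_ne_zero 2 hz0) (pow_ne_zero 2 hz1))
        (mul_ne_zero (pow_ne_zero 2 hz0) (pow_ne_zero 3 hz1))]
      ring
    rw [e3, hdd z hz, hdy z hz, t2, t3, t4, ← add_div, ← add_div,
      ← add_div, div_eq_zero_iff]
    exact Or.inl (by linear_combination ((1 - z) * f z 0) * hη + ((1 - z) * f z 1) * hζ)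
  · funext w
    by_cases hw : w ∈ U
    · obtain ⟨hw0, hw1⟩ := hne w hw
      rw [gaugeMap_of_mem η ζ U (fun w => f w 0) hw]
      funext i
      fin_cases i <;>
        simp only [Matrix.cons_val_zero, Matrix.cons_val_one, Matrix.head_cons,
          Matrix.cons_val_two, Matrix.tail_cons, Fin.isValue]
      · rfl
      · show (w - 1) * deriv (fun w => f w 0) w = f w 1
        rw [hdy w hw]
        field_simp
      · show (η / w) * f w 0 + ζ * ((w - 1) / w) * deriv (fun w => f w 0) w
          + (w - 1) ^ 2 * deriv (deriv (fun w => f w 0)) w = f w 2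
        rw [hdy w hw, hdd w hw]
        field_simp
        ring
    · simp [gaugeMap, hw, hf0 w hw]

/-- final assertion of Proposition 4.  The gauge map is a ℂ-linear
isomorphism from the space `V` of holomorphic solutions of the third-order ODE
(8.1) on `U` onto the space `W` of holomorphic solutions of the first-order
Fuchsian system (solutions on `U` are encoded as functions vanishing off `U`). -/
theorem gauge_map_linear_isomorphism (K₁ K₂ L₁ L₂ L₃ M₁ M₂ η ζ : ℂ)
    (U : Set ℂ) (hU : IsOpen U) (hne : U.Nonempty) (hU01 : U ⊆ {0, 1}ᶜ)
    (hη : M₂ + η * ζ + η * K₂ - η = 0) (hζ : L₂ + ζ * K₂ + ζ ^ 2 - ζ = 0)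
    (V : Set (ℂ → ℂ))
    (hV : V = {y : ℂ → ℂ | (∀ z ∉ U, y z = 0) ∧ DifferentiableOn ℂ y U ∧
      ∀ z ∈ U,
        deriv (deriv (deriv y)) z
          + ((K₁ * z + K₂ * (z - 1)) / (z * (z - 1))) * deriv (deriv y) z
          + ((L₁ * z ^ 2 + L₂ * (z - 1) ^ 2 + L₃ * z * (z - 1)) /
              (z ^ 2 * (z - 1) ^ 2)) * deriv y z
          + ((M₁ * z + M₂ * (z - 1)) / (z ^ 2 * (z - 1) ^ 2)) * y z = 0})
    (W : Set (ℂ → Fin 3 → ℂ))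
    (hW : W = {f : ℂ → Fin 3 → ℂ | (∀ z ∉ U, f z = 0) ∧
      ∀ z ∈ U, HasDerivAt f
        ((z⁻¹ • fuchsA K₁ K₂ L₁ L₂ L₃ M₁ M₂ η ζ
          + (z - 1)⁻¹ • fuchsB K₁ K₂ L₁ L₂ L₃ M₁ M₂ η ζ).mulVec (f z)) z}) :
    (∀ y ∈ V, gaugeMap η ζ U y ∈ W) ∧
    (∀ y₁ ∈ V, ∀ y₂ ∈ V, gaugeMap η ζ U (y₁ + y₂) = gaugeMap η ζ U y₁ + gaugeMap η ζ U y₂) ∧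
    (∀ (c : ℂ), ∀ y ∈ V, gaugeMap η ζ U (c • y) = c • gaugeMap η ζ U y) ∧
    Set.InjOn (gaugeMap η ζ U) V ∧
    Set.SurjOn (gaugeMap η ζ U) V W := by
  refine ⟨?_, ?_, ?_, ?_, ?_⟩
  · -- the gauge map sends `V` into `W`
    intro y hy
    rw [hV] at hy
    obtain ⟨hy0, hyd, hODE⟩ := hy
    rw [hW]
    exact ⟨fun z hz => by simp [gaugeMap, hz],
      fun z hz => gauge_hasDerivAt K₁ K₂ L₁ L₂ L₃ M₁ M₂ η ζ U hU hU01 hη hζ y hyd hODE hz⟩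
  · -- additivity
    intro y₁ h₁ y₂ h₂
    rw [hV] at h₁ h₂
    funext w
    by_cases hw : w ∈ U
    · have d₁ : DifferentiableAt ℂ y₁ w := h₁.2.1.differentiableAt (hU.mem_nhds hw)
      have d₂ : DifferentiableAt ℂ y₂ w := h₂.2.1.differentiableAt (hU.mem_nhds hw)
      have a₁ : AnalyticOnNhd ℂ y₁ U := h₁.2.1.analyticOnNhd hU
      have a₂ : AnalyticOnNhd ℂ y₂ U := h₂.2.1.analyticOnNhd hU
      have hδ : deriv (y₁ + y₂) w = deriv y₁ w + deriv y₂ w := deriv_add d₁ d₂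
      have hδδ : deriv (deriv (y₁ + y₂)) w = deriv (deriv y₁) w + deriv (deriv y₂) w := by
        have hev : deriv (y₁ + y₂) =ᶠ[nhds w] fun x => deriv y₁ x + deriv y₂ x :=
          Filter.eventuallyEq_of_mem (hU.mem_nhds hw) fun x hx =>
            deriv_add (h₁.2.1.differentiableAt (hU.mem_nhds hx))
              (h₂.2.1.differentiableAt (hU.mem_nhds hx))
        rw [hev.deriv_eq,
          deriv_fun_add (a₁.deriv w hw).differentiableAt (a₂.deriv w hw).differentiableAt]
      simp only [gaugeMap, if_pos hw, Pi.add_apply]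
      funext i
      fin_cases i
      · simp
      · simp [hδ]; ring
      · simp [hδ, hδδ]; ring
    · simp only [gaugeMap, if_neg hw, Pi.add_apply]
      simp
  · -- homogeneity
    intro c y hy
    rw [hV] at hy
    funext w
    by_cases hw : w ∈ U
    · have d : DifferentiableAt ℂ y w := hy.2.1.differentiableAt (hU.mem_nhds hw)
      have a : AnalyticOnNhd ℂ y U := hy.2.1.analyticOnNhd hU
      have hδ : deriv (c • y) w = c * deriv y w := deriv_const_smul c d
      have hδδ : deriv (deriv (c • y)) w = c * deriv (deriv y) w := by
        have hev : deriv (c • y) =ᶠ[nhds w] fun x => c * deriv y x :=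
          Filter.eventuallyEq_of_mem (hU.mem_nhds hw) fun x hx =>
            deriv_const_smul c (hy.2.1.differentiableAt (hU.mem_nhds hx))
        rw [hev.deriv_eq]
        exact deriv_const_smul c (a.deriv w hw).differentiableAt
      simp only [gaugeMap, if_pos hw, Pi.smul_apply, smul_eq_mul]
      funext i
      fin_cases i
      · simp
      · simp [hδ]; ring
      · simp [hδ, hδδ]; ring
    · simp only [gaugeMap, if_neg hw, Pi.smul_apply, smul_eq_mul]
      simp
  · -- injectivity
    intro y₁ h₁ y₂ h₂ heq
    rw [hV] at h₁ h₂
    funext w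
    by_cases hw : w ∈ U
    · have h := congrFun heq w
      rw [gaugeMap_of_mem η ζ U y₁ hw, gaugeMap_of_mem η ζ U y₂ hw] at h
      simpa using congrFun h 0
    · rw [h₁.1 w hw, h₂.1 w hw]
  · -- surjectivity
    intro g hg
    rw [hW] at hg
    obtain ⟨hg0, hgd⟩ := hg
    obtain ⟨hv0, hvdiff, hvode, hgauge⟩ :=
      gauge_surj_aux K₁ K₂ L₁ L₂ L₃ M₁ M₂ η ζ U hU hU01 hη hζ g hg0 hgd
    refine ⟨fun w => g w 0, ?_, hgauge⟩
    rw [hV]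
    exact ⟨hv0, hvdiff, hvode⟩
end

section
/- With the notation of the context, I(w) = −(1/(ac))·I(h₁ + h₃ + h₅), where w(t,s) = 1/((t−x)s). -/
open MeasureTheory

/-- The Dotsenko–Fateev weight `Φ(t,s) = |t|^a|s|^a|t−1|^b|s−1|^b|t−x|^c|s−y|^c|t−s|^g`. -/
noncomputable def dfWeight (a b c g x y : ℝ) (p : ℝ × ℝ) : ℝ :=
  |p.1| ^ a * |p.2| ^ a * |p.1 - 1| ^ b * |p.2 - 1| ^ b *
    |p.1 - x| ^ c * |p.2 - y| ^ c * |p.1 - p.2| ^ g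

/-- The complement in `ℝ²` of the seven lines `t=0, t=1, t=x, s=0, s=1, s=y, t=s`. -/
def dfComplement (x y : ℝ) : Set (ℝ × ℝ) :=
  {p | p.1 ≠ 0 ∧ p.1 ≠ 1 ∧ p.1 ≠ x ∧ p.2 ≠ 0 ∧ p.2 ≠ 1 ∧ p.2 ≠ y ∧ p.1 ≠ p.2}

/-- `I(h) = ∫_σ Φ h`. -/
noncomputable def dfInt (a b c g x y : ℝ) (σ : Set (ℝ × ℝ)) (h : ℝ × ℝ → ℝ) : ℝ :=
  ∫ p in σ, dfWeight a b c g x y p * h p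

/-- `h₁ = bc/((t−x)(s−1))`. -/
noncomputable def h1 (b c x : ℝ) (p : ℝ × ℝ) : ℝ := b * c / ((p.1 - x) * (p.2 - 1))

/-- `h₂ = bc/((t−1)(s−y))`. -/
noncomputable def h2 (b c y : ℝ) (p : ℝ × ℝ) : ℝ := b * c / ((p.1 - 1) * (p.2 - y))

/-- `h₃ = −cg/((t−x)(t−s))`. -/
noncomputable def h3 (c g x : ℝ) (p : ℝ × ℝ) : ℝ := -(c * g) / ((p.1 - x) * (p.1 - p.2))

/-- `h₄ = −cg/((s−y)(t−s))`. -/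
noncomputable def h4 (c g y : ℝ) (p : ℝ × ℝ) : ℝ := -(c * g) / ((p.2 - y) * (p.1 - p.2))

/-- `h₅ = c²/((t−x)(s−y))`. -/
noncomputable def h5 (c x y : ℝ) (p : ℝ × ℝ) : ℝ := c ^ 2 / ((p.1 - x) * (p.2 - y))

/-- `h₆ = −bg/((t−1)(t−s)) − bg/((s−1)(t−s))`. -/
noncomputable def h6 (b g : ℝ) (p : ℝ × ℝ) : ℝ :=
  -(b * g) / ((p.1 - 1) * (p.1 - p.2)) - b * g / ((p.2 - 1) * (p.1 - p.2))

/-- `h₇ = b²/((t−1)(s−1)) + bg/((s−1)(t−s))`. -/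
noncomputable def h7 (b g : ℝ) (p : ℝ × ℝ) : ℝ :=
  b ^ 2 / ((p.1 - 1) * (p.2 - 1)) + b * g / ((p.2 - 1) * (p.1 - p.2))

section Aux
open Set

lemma myContinuous_abs_rpow {α : Type*} [TopologicalSpace α] (e : α → ℝ) (he : Continuous e)
    {r : ℝ} (hr : 0 < r) : Continuous fun v => |e v| ^ r :=
  (Real.continuous_rpow_const hr.le).comp (continuous_abs.comp he)

lemma myHasDerivAt_abs_rpow {r : ℝ} {u : ℝ} (hu : u ≠ 0) :
    HasDerivAt (fun v => |v| ^ r) (r * |u| ^ r / u) u := by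
  rcases hu.lt_or_gt with h | h
  · have h1 : HasDerivAt (fun v : ℝ => (-v) ^ r) (r * (-u) ^ (r - 1) * (-1)) u := by
      simpa [Function.comp_def] using (Real.hasDerivAt_rpow_const (x := -u) (p := r)
        (Or.inl (by linarith))).comp u (hasDerivAt_neg u)
    have h2 : (fun v : ℝ => |v| ^ r) =ᶠ[nhds u] fun v => (-v) ^ r := by
      filter_upwards [Iio_mem_nhds h] with v hv
      rw [abs_of_neg hv]
    have h3 := h1.congr_of_eventuallyEq h2
    refine h3.congr_deriv ?_
    rw [abs_of_neg h, Real.rpow_sub_one (by linarith : -u ≠ 0)]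
    field_simp
  · have h1 : HasDerivAt (fun v : ℝ => v ^ r) (r * u ^ (r - 1)) u :=
      Real.hasDerivAt_rpow_const (Or.inl hu)
    have h2 : (fun v : ℝ => |v| ^ r) =ᶠ[nhds u] fun v => v ^ r := by
      filter_upwards [Ioi_mem_nhds h] with v hv
      rw [abs_of_pos hv]
    have h3 := h1.congr_of_eventuallyEq h2
    refine h3.congr_deriv ?_
    rw [abs_of_pos h, Real.rpow_sub_one hu]
    ring

lemma convex_affine_pos (A B C : ℝ) : Convex ℝ {q : ℝ × ℝ | 0 < A * q.1 + B * q.2 + C} := by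
  intro q1 hq1 q2 hq2 a b ha hb hab
  simp only [mem_setOf_eq] at *
  simp only [Prod.fst_add, Prod.snd_add, Prod.smul_fst, Prod.smul_snd, smul_eq_mul]
  have hcc : a * C + b * C = C := by rw [← add_mul, hab, one_mul]
  have key : 0 < a * (A * q1.1 + B * q1.2 + C) + b * (A * q2.1 + B * q2.2 + C) := by
    rcases ha.eq_or_lt with h0 | h0
    · have hb1 : b = 1 := by linarith
      rw [← h0, hb1]; simpa using hq2
    · have h1 : 0 < a * (A * q1.1 + B * q1.2 + C) := mul_pos h0 hq1
      have h2 : 0 ≤ b * (A * q2.1 + B * q2.2 + C) := mul_nonneg hb hq2.le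
      linarith
  nlinarith [key, hcc]

lemma convex_affine_neg (A B C : ℝ) : Convex ℝ {q : ℝ × ℝ | A * q.1 + B * q.2 + C < 0} := by
  intro q1 hq1 q2 hq2 a b ha hb hab
  simp only [mem_setOf_eq] at *
  simp only [Prod.fst_add, Prod.snd_add, Prod.smul_fst, Prod.smul_snd, smul_eq_mul]
  have hcc : a * C + b * C = C := by rw [← add_mul, hab, one_mul]
  have key : a * (A * q1.1 + B * q1.2 + C) + b * (A * q2.1 + B * q2.2 + C) < 0 := by
    rcases ha.eq_or_lt with h0 | h0
    · have hb1 : b = 1 := by linarith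
      rw [← h0, hb1]; simpa using hq2
    · have h1 : a * (A * q1.1 + B * q1.2 + C) < 0 := mul_neg_of_pos_of_neg h0 hq1
      have h2 : b * (A * q2.1 + B * q2.2 + C) ≤ 0 := mul_nonpos_of_nonneg_of_nonpos hb hq2.le
      linarith
  nlinarith [key, hcc]

lemma cell_isOpen {n : ℕ} (f : Fin n → ℝ × ℝ → ℝ) (hfc : ∀ i, Continuous (f i)) (p : ℝ × ℝ) :
    IsOpen {q : ℝ × ℝ | ∀ i, if 0 < f i p then 0 < f i q else f i q < 0} := by
  have : {q : ℝ × ℝ | ∀ i, if 0 < f i p then 0 < f i q else f i q < 0}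
      = ⋂ i, {q | if 0 < f i p then 0 < f i q else f i q < 0} := by
    ext q; simp
  rw [this]
  refine isOpen_iInter_of_finite fun i => ?_
  split_ifs with h
  · exact isOpen_lt continuous_const (hfc i)
  · exact isOpen_lt (hfc i) continuous_const

lemma cell_convex {n : ℕ} (f : Fin n → ℝ × ℝ → ℝ)
    (hpos : ∀ i, Convex ℝ {q | 0 < f i q}) (hneg : ∀ i, Convex ℝ {q | f i q < 0}) (p : ℝ × ℝ) :
    Convex ℝ {q : ℝ × ℝ | ∀ i, if 0 < f i p then 0 < f i q else f i q < 0} := by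
  have : {q : ℝ × ℝ | ∀ i, if 0 < f i p then 0 < f i q else f i q < 0}
      = ⋂ i, {q | if 0 < f i p then 0 < f i q else f i q < 0} := by
    ext q; simp
  rw [this]
  refine convex_iInter fun i => ?_
  split_ifs with h
  · exact hpos i
  · exact hneg i

lemma component_eq_cell {n : ℕ} (f : Fin n → ℝ × ℝ → ℝ) (hfc : ∀ i, Continuous (f i))
    (hpos : ∀ i, Convex ℝ {q | 0 < f i q}) (hneg : ∀ i, Convex ℝ {q | f i q < 0})
    (p : ℝ × ℝ) (hp : ∀ i, f i p ≠ 0) :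
    connectedComponentIn {q : ℝ × ℝ | ∀ i, f i q ≠ 0} p =
      {q : ℝ × ℝ | ∀ i, if 0 < f i p then 0 < f i q else f i q < 0} := by
  set F : Set (ℝ × ℝ) := {q | ∀ i, f i q ≠ 0} with hF
  set C : Set (ℝ × ℝ) := {q | ∀ i, if 0 < f i p then 0 < f i q else f i q < 0} with hC
  have hCconv : Convex ℝ C := cell_convex f hpos hneg p
  have hCsub : C ⊆ F := by
    intro q hq i
    have := hq i
    split_ifs at this with h
    · exact ne_of_gt this
    · exact ne_of_lt this
  have hpC : p ∈ C := by
    intro i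
    split_ifs with h
    · exact h
    · exact lt_of_le_of_ne (not_lt.mp h) (hp i)
  apply le_antisymm
  · intro q hq
    have hqF : q ∈ F := connectedComponentIn_subset F p hq
    have hpre : IsPreconnected (connectedComponentIn F p) := isPreconnected_connectedComponentIn
    have hpK : p ∈ connectedComponentIn F p := mem_connectedComponentIn (hCsub hpC)
    intro i
    have himg : IsPreconnected (f i '' connectedComponentIn F p) :=
      hpre.image _ (hfc i).continuousOn
    have hoc := himg.ordConnected
    have key : (0 : ℝ) ∉ f i '' connectedComponentIn F p := by
      rintro ⟨z, hz, hz0⟩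
      exact (connectedComponentIn_subset F p hz) i hz0
    split_ifs with h
    · by_contra hq'
      have hlt : f i q < 0 := lt_of_le_of_ne (not_lt.mp hq') (hqF i)
      exact key (hoc.out ⟨q, hq, rfl⟩ ⟨p, hpK, rfl⟩ ⟨hlt.le, h.le⟩)
    · have hplt : f i p < 0 := lt_of_le_of_ne (not_lt.mp h) (hp i)
      by_contra hq'
      have hge : 0 < f i q := lt_of_le_of_ne (not_lt.mp hq') (Ne.symm (hqF i))
      exact key (hoc.out ⟨p, hpK, rfl⟩ ⟨q, hq, rfl⟩ ⟨hplt.le, hge.le⟩)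
  · exact hCconv.isPreconnected.subset_connectedComponentIn hpC hCsub

lemma slice_integral_zero (σ : Set (ℝ × ℝ)) (hσo : IsOpen σ) (hσc : Convex ℝ σ)
    (hσb : Bornology.IsBounded σ) (F D : ℝ × ℝ → ℝ) (hF : Continuous F)
    (hF0 : ∀ q ∈ frontier σ, F q = 0)
    (hDi : Integrable (σ.indicator D))
    (hderiv : ∀ q ∈ σ, HasDerivAt (fun s => F (q.1, s)) (D q) q.2) :
    ∫ q in σ, D q = 0 := by
  have hm : MeasurableSet σ := hσo.measurableSet
  rw [← integral_indicator hm]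
  rw [MeasureTheory.Measure.volume_eq_prod] at hDi ⊢
  rw [integral_prod _ hDi]
  rw [← integral_zero ℝ ℝ (μ := (volume : Measure ℝ))]
  apply integral_congr_ae
  filter_upwards [hDi.prod_right_ae] with t ht
  set S : Set ℝ := {s | (t, s) ∈ σ} with hSdef
  have hSo : IsOpen S := hσo.preimage (Continuous.prodMk_right t)
  have hind : (fun s => σ.indicator D (t, s)) = S.indicator (fun s => D (t, s)) := by
    funext s
    by_cases h : (t, s) ∈ σ
    · simp [Set.indicator_apply, h, hSdef]
    · simp [Set.indicator_apply, h, hSdef]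
  rw [hind] at ht ⊢
  rw [integral_indicator hSo.measurableSet]
  rcases S.eq_empty_or_nonempty with hS | hS
  · rw [hS]; simp
  · obtain ⟨r, hr⟩ := (Metric.isBounded_iff_subset_closedBall 0).mp hσb
    have hSsub : S ⊆ Icc (-r) r := by
      intro s hs
      have h1 : ‖(t, s)‖ ≤ r := by simpa using hr hs
      have h2 : |s| ≤ ‖(t, s)‖ := norm_snd_le (t, s)
      exact abs_le.mp (h2.trans h1)
    have hbb : BddBelow S := ⟨-r, fun s hs => (hSsub hs).1⟩
    have hba : BddAbove S := ⟨r, fun s hs => (hSsub hs).2⟩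
    set l := sInf S with hl
    set u := sSup S with hu
    have hSconv : Convex ℝ S := by
      intro s1 hs1 s2 hs2 a b ha hb hab
      have h := hσc hs1 hs2 ha hb hab
      have he : a • ((t, s1) : ℝ × ℝ) + b • (t, s2) = (t, a • s1 + b • s2) := by
        ext
        · simp only [Prod.fst_add, Prod.smul_fst, smul_eq_mul]
          rw [← add_mul, hab, one_mul]
        · simp [smul_eq_mul]
      rw [he] at h
      exact h
    have hlnot : l ∉ S := by
      intro hlS
      obtain ⟨ε, hε, hball⟩ := Metric.isOpen_iff.mp hSo l hlS
      have : l - ε / 2 ∈ S := hball (by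
        rw [Metric.mem_ball, Real.dist_eq, show l - ε / 2 - l = -(ε / 2) by ring, abs_neg,
          abs_of_pos (by linarith)]
        linarith)
      have := csInf_le hbb this
      linarith
    have hunot : u ∉ S := by
      intro huS
      obtain ⟨ε, hε, hball⟩ := Metric.isOpen_iff.mp hSo u huS
      have : u + ε / 2 ∈ S := hball (by
        rw [Metric.mem_ball, Real.dist_eq, show u + ε / 2 - u = ε / 2 by ring,
          abs_of_pos (by linarith)]
        linarith)
      have := le_csSup hba this
      linarith
    have hSIoo : S = Ioo l u := by
      ext z
      constructor
      · intro hz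
        have h1 : l ≤ z := csInf_le hbb hz
        have h2 : z ≤ u := le_csSup hba hz
        exact ⟨lt_of_le_of_ne h1 (fun h => hlnot (h ▸ hz)),
          lt_of_le_of_ne h2 (fun h => hunot (h ▸ hz))⟩
      · intro hz
        obtain ⟨a', ha', haz⟩ := exists_lt_of_csInf_lt hS hz.1
        obtain ⟨b', hb', hzb⟩ := exists_lt_of_lt_csSup hS hz.2
        exact hSconv.ordConnected.out ha' hb' ⟨haz.le, hzb.le⟩
    obtain ⟨s0, hs0⟩ := id hS
    have hle : l ≤ u := le_trans (csInf_le hbb hs0) (le_csSup hba hs0)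
    have hIoosub : Ioo l u ⊆ S := by rw [hSIoo]
    have hclosS : ∀ z, z ∈ closure S → (t, z) ∈ closure σ := by
      intro z hz
      exact (Continuous.prodMk_right t).closure_preimage_subset σ (by exact hz)
    have hfrontu : (t, u) ∈ frontier σ := by
      rw [frontier, hσo.interior_eq]
      exact ⟨hclosS u ((isLUB_csSup hS hba).mem_closure hS), hunot⟩
    have hfrontl : (t, l) ∈ frontier σ := by
      rw [frontier, hσo.interior_eq]
      exact ⟨hclosS l ((isGLB_csInf hS hbb).mem_closure hS), hlnot⟩
    have hti : IntervalIntegrable (fun s => D (t, s)) volume l u := by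
      rw [intervalIntegrable_iff_integrableOn_Ioo_of_le hle]
      have h2 : IntegrableOn (fun s => D (t, s)) S := by
        rwa [← integrable_indicator_iff hSo.measurableSet]
      rwa [hSIoo] at h2
    have hftc := intervalIntegral.integral_eq_sub_of_hasDeriv_right_of_le hle
      (f := fun s => F (t, s)) (f' := fun s => D (t, s))
      ((hF.comp (Continuous.prodMk_right t)).continuousOn)
      (fun z hz => ((hderiv (t, z) (hIoosub hz)).hasDerivWithinAt))
      hti
    rw [hSIoo, ← integral_Ioc_eq_integral_Ioo, ← intervalIntegral.integral_of_le hle, hftc]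
    show F (t, u) - F (t, l) = 0
    rw [hF0 _ hfrontu, hF0 _ hfrontl]
    ring

lemma integrableOn_of_le_cont (σ : Set (ℝ × ℝ)) (hσm : MeasurableSet σ)
    (hσb : Bornology.IsBounded σ) (f W : ℝ × ℝ → ℝ)
    (hfm : AEStronglyMeasurable f volume) (hW : Continuous W)
    (hbound : ∀ q ∈ σ, |f q| ≤ W q) : IntegrableOn f σ := by
  have hK : IsCompact (closure σ) :=
    Metric.isCompact_of_isClosed_isBounded isClosed_closure hσb.closure
  obtain ⟨M, hM⟩ := hK.exists_bound_of_continuousOn hW.continuousOn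
  apply Measure.integrableOn_of_bounded (M := M) (ne_of_lt hσb.measure_lt_top) hfm
  rw [ae_restrict_iff' hσm]
  filter_upwards with q hq
  have h1 : |f q| ≤ W q := hbound q hq
  have h2 : W q ≤ ‖W q‖ := le_abs_self _
  have h3 : ‖W q‖ ≤ M := hM q (subset_closure hq)
  calc ‖f q‖ = |f q| := rfl
    _ ≤ M := by linarith

end Aux


set_option maxHeartbeats 2000000 in
/-- the cohomological expansion ω₃₄ ∼ −(1/(ac))(η₁+η₃+η₅)
integrated over a bounded chamber `σ` of the Dotsenko–Fateev arrangement. -/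
theorem expansion_omega34 (x y a b c g : ℝ)
    (hx0 : x ≠ 0) (hx1 : x ≠ 1) (hy0 : y ≠ 0) (hy1 : y ≠ 1) (hxy : x ≠ y)
    (ha : 1 < a) (hb : 1 < b) (hc : 1 < c) (hg : 1 < g)
    (σ : Set (ℝ × ℝ)) (hbd : Bornology.IsBounded σ)
    (hcc : ∃ p ∈ dfComplement x y, σ = connectedComponentIn (dfComplement x y) p) :
    dfInt a b c g x y σ (fun p => 1 / ((p.1 - x) * p.2)) =
      -(1 / (a * c)) * dfInt a b c g x y σ (fun p => h1 b c x p + h3 c g x p + h5 c x y p) := by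
  -- numeric facts
  have ha0 : a ≠ 0 := by linarith
  have hc0 : c ≠ 0 := by linarith
  have hapos : (0:ℝ) < a := by linarith
  have hbpos : (0:ℝ) < b := by linarith
  have hcpos : (0:ℝ) < c := by linarith
  have hgpos : (0:ℝ) < g := by linarith
  have ha1 : (0:ℝ) < a - 1 := by linarith
  have hb1 : (0:ℝ) < b - 1 := by linarith
  have hc1 : (0:ℝ) < c - 1 := by linarith
  have hg1 : (0:ℝ) < g - 1 := by linarith
  obtain ⟨p, hp, hσeq⟩ := hcc
  set v : Fin 7 → ℝ × ℝ × ℝ :=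
    ![(1,0,0), (1,0,-1), (1,0,-x), (0,1,0), (0,1,-1), (0,1,-y), (1,-1,0)] with hv
  set f : Fin 7 → ℝ × ℝ → ℝ := fun i q => (v i).1 * q.1 + (v i).2.1 * q.2 + (v i).2.2 with hfdef
  have hfval : ∀ q : ℝ × ℝ, f 0 q = q.1 ∧ f 1 q = q.1 - 1 ∧ f 2 q = q.1 - x ∧ f 3 q = q.2
      ∧ f 4 q = q.2 - 1 ∧ f 5 q = q.2 - y ∧ f 6 q = q.1 - q.2 := by
    intro q
    have w0 : v 0 = (1,0,0) := rfl
    have w1 : v 1 = (1,0,-1) := rfl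
    have w2 : v 2 = (1,0,-x) := rfl
    have w3 : v 3 = (0,1,0) := rfl
    have w4 : v 4 = (0,1,-1) := rfl
    have w5 : v 5 = (0,1,-y) := rfl
    have w6 : v 6 = (1,-1,0) := rfl
    refine ⟨?_, ?_, ?_, ?_, ?_, ?_, ?_⟩ <;>
      simp only [hfdef, w0, w1, w2, w3, w4, w5, w6] <;> ring
  have hfc : ∀ i, Continuous (f i) := fun i =>
    ((continuous_const.mul continuous_fst).add (continuous_const.mul continuous_snd)).add
      continuous_const
  have hposconv : ∀ i, Convex ℝ {q | 0 < f i q} := fun i => by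
    simp only [hfdef]; exact convex_affine_pos _ _ _
  have hnegconv : ∀ i, Convex ℝ {q | f i q < 0} := fun i => by
    simp only [hfdef]; exact convex_affine_neg _ _ _
  have hcompl : dfComplement x y = {q | ∀ i, f i q ≠ 0} := by
    ext q
    simp only [dfComplement, Set.mem_setOf_eq]
    constructor
    · rintro ⟨a1, a2, a3, a4, a5, a6, a7⟩ i
      obtain ⟨e0, e1, e2, e3, e4, e5, e6⟩ := hfval q
      fin_cases i
      · show f 0 q ≠ 0; rw [e0]; exact a1
      · show f 1 q ≠ 0; rw [e1]; exact sub_ne_zero.mpr a2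
      · show f 2 q ≠ 0; rw [e2]; exact sub_ne_zero.mpr a3
      · show f 3 q ≠ 0; rw [e3]; exact a4
      · show f 4 q ≠ 0; rw [e4]; exact sub_ne_zero.mpr a5
      · show f 5 q ≠ 0; rw [e5]; exact sub_ne_zero.mpr a6
      · show f 6 q ≠ 0; rw [e6]; exact sub_ne_zero.mpr a7
    · intro h
      obtain ⟨e0, e1, e2, e3, e4, e5, e6⟩ := hfval q
      exact ⟨e0 ▸ h 0, sub_ne_zero.mp (e1 ▸ h 1), sub_ne_zero.mp (e2 ▸ h 2),
        e3 ▸ h 3, sub_ne_zero.mp (e4 ▸ h 4), sub_ne_zero.mp (e5 ▸ h 5),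
        sub_ne_zero.mp (e6 ▸ h 6)⟩
  rw [hcompl] at hσeq hp
  have hpm : ∀ i, f i p ≠ 0 := hp
  rw [component_eq_cell f hfc hposconv hnegconv p hpm] at hσeq
  subst hσeq
  set σ : Set (ℝ × ℝ) := {q | ∀ i, if 0 < f i p then 0 < f i q else f i q < 0} with hσdef
  have hopen : IsOpen σ := by rw [hσdef]; exact cell_isOpen f hfc p
  have hconv : Convex ℝ σ := by rw [hσdef]; exact cell_convex f hposconv hnegconv p
  have hm : MeasurableSet σ := hopen.measurableSet
  have hmem : ∀ q : ℝ × ℝ, q ∈ σ → ∀ i, (if 0 < f i p then 0 < f i q else f i q < 0) := by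
    intro q hq; rw [hσdef] at hq; exact hq
  have hmem2 : ∀ q : ℝ × ℝ, (∀ i, if 0 < f i p then 0 < f i q else f i q < 0) → q ∈ σ := by
    intro q h; rw [hσdef]; exact h
  set ε : Fin 7 → ℝ := fun i => if 0 < f i p then 1 else -1 with hεdef
  have hpos : ∀ i, ∀ q ∈ σ, 0 < ε i * f i q := by
    intro i q hq
    have hqi := hmem q hq i
    by_cases h : 0 < f i p
    · rw [if_pos h] at hqi
      simp only [hεdef, if_pos h, one_mul]
      exact hqi
    · rw [if_neg h] at hqi
      simp only [hεdef, if_neg h]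
      linarith
  have hne : ∀ i, ∀ q ∈ σ, f i q ≠ 0 := by
    intro i q hq h0
    have := hpos i q hq
    rw [h0, mul_zero] at this
    exact lt_irrefl _ this
  have hclosed : IsClosed {q : ℝ × ℝ | ∀ i, 0 ≤ ε i * f i q} := by
    have hrw : {q : ℝ × ℝ | ∀ i, 0 ≤ ε i * f i q} = ⋂ i, {q | 0 ≤ ε i * f i q} := by
      ext q; simp
    rw [hrw]
    exact isClosed_iInter fun i => isClosed_le continuous_const (continuous_const.mul (hfc i))
  have hclsub : closure σ ⊆ {q | ∀ i, 0 ≤ ε i * f i q} :=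
    closure_minimal (fun q hq i => (hpos i q hq).le) hclosed
  have habs : ∀ i, ∀ q ∈ closure σ, |f i q| = ε i * f i q := by
    intro i q hq
    have h0 := hclsub hq i
    by_cases h : 0 < f i p
    · simp only [hεdef, if_pos h, one_mul] at h0 ⊢
      exact abs_of_nonneg h0
    · simp only [hεdef, if_neg h] at h0 ⊢
      have h1 : f i q ≤ 0 := by linarith
      rw [abs_of_nonpos h1]; ring
  have hfront : ∀ q ∈ frontier σ, ∃ i, f i q = 0 := by
    intro q hq
    rw [frontier, hopen.interior_eq] at hq
    obtain ⟨hqc, hqn⟩ := hq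
    have hnot : ¬ ∀ i, (if 0 < f i p then 0 < f i q else f i q < 0) := fun hh => hqn (hmem2 q hh)
    obtain ⟨i, hi⟩ := not_forall.mp hnot
    refine ⟨i, ?_⟩
    have h0 := hclsub hqc i
    by_cases h : 0 < f i p
    · rw [if_pos h] at hi
      simp only [hεdef, if_pos h, one_mul] at h0
      exact le_antisymm (not_lt.mp hi) h0
    · rw [if_neg h] at hi
      simp only [hεdef, if_neg h] at h0
      have h1 : f i q ≤ 0 := by linarith
      exact le_antisymm h1 (not_lt.mp hi)
  have hnz : ∀ q ∈ σ, q.1 ≠ 0 ∧ q.1 - 1 ≠ 0 ∧ q.1 - x ≠ 0 ∧ q.2 ≠ 0 ∧ q.2 - 1 ≠ 0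
      ∧ q.2 - y ≠ 0 ∧ q.1 - q.2 ≠ 0 := by
    intro q hq
    obtain ⟨e0, e1, e2, e3, e4, e5, e6⟩ := hfval q
    exact ⟨e0 ▸ hne 0 q hq, e1 ▸ hne 1 q hq, e2 ▸ hne 2 q hq, e3 ▸ hne 3 q hq,
      e4 ▸ hne 4 q hq, e5 ▸ hne 5 q hq, e6 ▸ hne 6 q hq⟩
  set e : ℝ := ε 2 with hedef
  have habs2 : ∀ q ∈ closure σ, |q.1 - x| = e * (q.1 - x) := by
    intro q hq
    have h := habs 2 q hq
    rwa [(hfval q).2.2.1] at h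
  -- unfold the goal
  simp only [dfInt]
  set Φ := dfWeight a b c g x y with hΦdef
  -- the potential function
  set Ffun : ℝ × ℝ → ℝ := fun q => (e / a) * (|q.1| ^ a * |q.2| ^ a * |q.1 - 1| ^ b
    * |q.2 - 1| ^ b * |q.1 - x| ^ (c - 1) * |q.2 - y| ^ c * |q.1 - q.2| ^ g) with hFdef
  set wfun : ℝ × ℝ → ℝ := fun q => 1 / ((q.1 - x) * q.2) with hwdef
  set hsfun : ℝ × ℝ → ℝ := fun q => h1 b c x q + h3 c g x q + h5 c x y q with hhsdef
  set E : ℝ × ℝ → ℝ := fun q => Φ q * wfun q + (1 / (a * c)) * (Φ q * hsfun q) with hEdef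
  -- continuity
  have c1 : Continuous fun q : ℝ × ℝ => q.1 := continuous_fst
  have c2 : Continuous fun q : ℝ × ℝ => q.2 := continuous_snd
  have c3 : Continuous fun q : ℝ × ℝ => q.1 - 1 := continuous_fst.sub continuous_const
  have c4 : Continuous fun q : ℝ × ℝ => q.2 - 1 := continuous_snd.sub continuous_const
  have c5 : Continuous fun q : ℝ × ℝ => q.1 - x := continuous_fst.sub continuous_const
  have c6 : Continuous fun q : ℝ × ℝ => q.2 - y := continuous_snd.sub continuous_const
  have c7 : Continuous fun q : ℝ × ℝ => q.1 - q.2 := continuous_fst.sub continuous_snd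
  have hContΦ : Continuous Φ := by
    rw [hΦdef]
    unfold dfWeight
    exact ((((((myContinuous_abs_rpow _ c1 hapos).mul (myContinuous_abs_rpow _ c2 hapos)).mul
      (myContinuous_abs_rpow _ c3 hbpos)).mul (myContinuous_abs_rpow _ c4 hbpos)).mul
      (myContinuous_abs_rpow _ c5 hcpos)).mul (myContinuous_abs_rpow _ c6 hcpos)).mul
      (myContinuous_abs_rpow _ c7 hgpos)
  have hContF : Continuous Ffun := by
    rw [hFdef]
    exact continuous_const.mul (((((((myContinuous_abs_rpow _ c1 hapos).mul
      (myContinuous_abs_rpow _ c2 hapos)).mul (myContinuous_abs_rpow _ c3 hbpos)).mul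
      (myContinuous_abs_rpow _ c4 hbpos)).mul (myContinuous_abs_rpow _ c5 hc1)).mul
      (myContinuous_abs_rpow _ c6 hcpos)).mul (myContinuous_abs_rpow _ c7 hgpos))
  -- F vanishes on the frontier
  have hF0 : ∀ q ∈ frontier σ, Ffun q = 0 := by
    intro q hq
    obtain ⟨i, hi⟩ := hfront q hq
    obtain ⟨e0, e1, e2, e3, e4, e5, e6⟩ := hfval q
    simp only [hFdef]
    fin_cases i
    · have hz : q.1 = 0 := by have h' : f 0 q = 0 := hi; rwa [e0] at h'
      rw [hz, abs_zero, Real.zero_rpow (ne_of_gt hapos)]; ring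
    · have hz : q.1 - 1 = 0 := by have h' : f 1 q = 0 := hi; rwa [e1] at h'
      rw [hz, abs_zero, Real.zero_rpow (ne_of_gt hbpos)]; ring
    · have hz : q.1 - x = 0 := by have h' : f 2 q = 0 := hi; rwa [e2] at h'
      rw [hz, abs_zero, Real.zero_rpow (ne_of_gt hc1)]; ring
    · have hz : q.2 = 0 := by have h' : f 3 q = 0 := hi; rwa [e3] at h'
      rw [hz, abs_zero, Real.zero_rpow (ne_of_gt hapos)]; ring
    · have hz : q.2 - 1 = 0 := by have h' : f 4 q = 0 := hi; rwa [e4] at h'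
      rw [hz, abs_zero, Real.zero_rpow (ne_of_gt hbpos)]; ring
    · have hz : q.2 - y = 0 := by have h' : f 5 q = 0 := hi; rwa [e5] at h'
      rw [hz, abs_zero, Real.zero_rpow (ne_of_gt hcpos)]; ring
    · have hz : q.1 - q.2 = 0 := by have h' : f 6 q = 0 := hi; rwa [e6] at h'
      rw [hz, abs_zero, Real.zero_rpow (ne_of_gt hgpos)]; ring
  -- derivative identity
  have hderiv : ∀ q ∈ σ, HasDerivAt (fun s => Ffun (q.1, s)) (E q) q.2 := by
    rintro ⟨t, s0⟩ hq
    obtain ⟨n0, n1, n2, n3, n4, n5, n6⟩ := hnz (t, s0) hq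
    have d1 : HasDerivAt (fun s : ℝ => |s| ^ a) (a * |s0| ^ a / s0) s0 :=
      myHasDerivAt_abs_rpow n3
    have d2 : HasDerivAt (fun s : ℝ => |s - 1| ^ b) (b * |s0 - 1| ^ b / (s0 - 1)) s0 := by
      have h := (myHasDerivAt_abs_rpow (r := b) n4).comp s0 ((hasDerivAt_id s0).sub_const 1)
      simpa [Function.comp_def] using h
    have d3 : HasDerivAt (fun s : ℝ => |s - y| ^ c) (c * |s0 - y| ^ c / (s0 - y)) s0 := by
      have h := (myHasDerivAt_abs_rpow (r := c) n5).comp s0 ((hasDerivAt_id s0).sub_const y)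
      simpa [Function.comp_def] using h
    have d4 : HasDerivAt (fun s : ℝ => |t - s| ^ g) (g * |t - s0| ^ g / (t - s0) * (-1)) s0 := by
      have h := (myHasDerivAt_abs_rpow (r := g) n6).comp s0 ((hasDerivAt_id s0).const_sub t)
      simpa [Function.comp_def] using h
    have dP := d1.mul (d2.mul (d3.mul d4))
    have dF := dP.const_mul (e / a * (|t| ^ a * |t - 1| ^ b * |t - x| ^ (c - 1)))
    have hfun : (fun s => Ffun (t, s)) = fun s =>
        (e / a * (|t| ^ a * |t - 1| ^ b * |t - x| ^ (c - 1))) *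
        (|s| ^ a * (|s - 1| ^ b * (|s - y| ^ c * |t - s| ^ g))) := by
      funext s
      simp only [hFdef]
      ring
    rw [hfun]
    refine dF.congr_deriv ?_
    have habs2q : |t - x| = e * (t - x) := habs2 (t, s0) (subset_closure hq)
    have hX : |t - x| ^ (c - 1) * (e * (t - x)) = |t - x| ^ c := by
      rw [← habs2q, ← Real.rpow_add_one (abs_ne_zero.mpr n2) (c - 1)]
      norm_num
    simp only [hEdef, hΦdef, hwdef, hhsdef, h1, h3, h5, dfWeight, Pi.mul_apply]
    rw [← hX]
    field_simp
    ring
  -- measurability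
  have hmeasw : Measurable wfun := by
    simp only [hwdef]
    exact measurable_const.div ((measurable_fst.sub measurable_const).mul measurable_snd)
  have hmeashs : Measurable hsfun := by
    simp only [hhsdef, h1, h3, h5]
    exact ((measurable_const.div ((measurable_fst.sub measurable_const).mul
      (measurable_snd.sub measurable_const))).add
      (measurable_const.div ((measurable_fst.sub measurable_const).mul
      (measurable_fst.sub measurable_snd)))).add
      (measurable_const.div ((measurable_fst.sub measurable_const).mul
      (measurable_snd.sub measurable_const)))
  have hmw : AEStronglyMeasurable (fun q => Φ q * wfun q) volume :=
    (hContΦ.measurable.mul hmeasw).aestronglyMeasurable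
  have hmh : AEStronglyMeasurable (fun q => Φ q * hsfun q) volume :=
    (hContΦ.measurable.mul hmeashs).aestronglyMeasurable
  -- integrability
  have intW : IntegrableOn (fun q => Φ q * wfun q) σ := by
    apply integrableOn_of_le_cont σ hm hbd _
      (fun q : ℝ × ℝ => |q.1| ^ a * |q.2| ^ (a - 1) * |q.1 - 1| ^ b * |q.2 - 1| ^ b
        * |q.1 - x| ^ (c - 1) * |q.2 - y| ^ c * |q.1 - q.2| ^ g) hmw
    · exact ((((((myContinuous_abs_rpow _ c1 hapos).mul (myContinuous_abs_rpow _ c2 ha1)).mul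
        (myContinuous_abs_rpow _ c3 hbpos)).mul (myContinuous_abs_rpow _ c4 hbpos)).mul
        (myContinuous_abs_rpow _ c5 hc1)).mul (myContinuous_abs_rpow _ c6 hcpos)).mul
        (myContinuous_abs_rpow _ c7 hgpos)
    · intro q hq
      obtain ⟨m0, m1, m2, m3, m4, m5, m6⟩ := hnz q hq
      apply le_of_eq
      simp only [hΦdef, hwdef, dfWeight]
      have hnn : (0:ℝ) ≤ |q.1| ^ a * |q.2| ^ a * |q.1 - 1| ^ b * |q.2 - 1| ^ b
          * |q.1 - x| ^ c * |q.2 - y| ^ c * |q.1 - q.2| ^ g := by positivity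
      rw [abs_mul, abs_of_nonneg hnn, abs_div, abs_one, abs_mul,
        Real.rpow_sub_one (abs_ne_zero.mpr m3), Real.rpow_sub_one (abs_ne_zero.mpr m2)]
      ring
  have intH : IntegrableOn (fun q => Φ q * hsfun q) σ := by
    apply integrableOn_of_le_cont σ hm hbd _
      (fun q : ℝ × ℝ =>
        |b * c| * (|q.1| ^ a * |q.2| ^ a * |q.1 - 1| ^ b * |q.2 - 1| ^ (b - 1)
          * |q.1 - x| ^ (c - 1) * |q.2 - y| ^ c * |q.1 - q.2| ^ g)
        + |c * g| * (|q.1| ^ a * |q.2| ^ a * |q.1 - 1| ^ b * |q.2 - 1| ^ b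
          * |q.1 - x| ^ (c - 1) * |q.2 - y| ^ c * |q.1 - q.2| ^ (g - 1))
        + |c ^ 2| * (|q.1| ^ a * |q.2| ^ a * |q.1 - 1| ^ b * |q.2 - 1| ^ b
          * |q.1 - x| ^ (c - 1) * |q.2 - y| ^ (c - 1) * |q.1 - q.2| ^ g)) hmh
    · refine (Continuous.add (Continuous.add ?_ ?_) ?_) <;>
      · exact continuous_const.mul (by
          first
          | exact ((((((myContinuous_abs_rpow _ c1 hapos).mul (myContinuous_abs_rpow _ c2 hapos)).mul
              (myContinuous_abs_rpow _ c3 hbpos)).mul (myContinuous_abs_rpow _ c4 hb1)).mul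
              (myContinuous_abs_rpow _ c5 hc1)).mul (myContinuous_abs_rpow _ c6 hcpos)).mul
              (myContinuous_abs_rpow _ c7 hgpos)
          | exact ((((((myContinuous_abs_rpow _ c1 hapos).mul (myContinuous_abs_rpow _ c2 hapos)).mul
              (myContinuous_abs_rpow _ c3 hbpos)).mul (myContinuous_abs_rpow _ c4 hbpos)).mul
              (myContinuous_abs_rpow _ c5 hc1)).mul (myContinuous_abs_rpow _ c6 hcpos)).mul
              (myContinuous_abs_rpow _ c7 hg1)
          | exact ((((((myContinuous_abs_rpow _ c1 hapos).mul (myContinuous_abs_rpow _ c2 hapos)).mul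
              (myContinuous_abs_rpow _ c3 hbpos)).mul (myContinuous_abs_rpow _ c4 hbpos)).mul
              (myContinuous_abs_rpow _ c5 hc1)).mul (myContinuous_abs_rpow _ c6 hc1)).mul
              (myContinuous_abs_rpow _ c7 hgpos))
    · intro q hq
      obtain ⟨m0, m1, m2, m3, m4, m5, m6⟩ := hnz q hq
      simp only [hΦdef, hhsdef, h1, h3, h5, dfWeight]
      have hnn : (0:ℝ) ≤ |q.1| ^ a * |q.2| ^ a * |q.1 - 1| ^ b * |q.2 - 1| ^ b
          * |q.1 - x| ^ c * |q.2 - y| ^ c * |q.1 - q.2| ^ g := by positivity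
      set P : ℝ := |q.1| ^ a * |q.2| ^ a * |q.1 - 1| ^ b * |q.2 - 1| ^ b
          * |q.1 - x| ^ c * |q.2 - y| ^ c * |q.1 - q.2| ^ g with hP
      have tri : |P * (b * c / ((q.1 - x) * (q.2 - 1)) + -(c * g) / ((q.1 - x) * (q.1 - q.2))
            + c ^ 2 / ((q.1 - x) * (q.2 - y)))|
          ≤ |P * (b * c / ((q.1 - x) * (q.2 - 1)))| + |P * (-(c * g) / ((q.1 - x) * (q.1 - q.2)))|
            + |P * (c ^ 2 / ((q.1 - x) * (q.2 - y)))| := by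
        rw [mul_add, mul_add]
        exact (abs_add_le _ _).trans (add_le_add_left (abs_add_le _ _) _)
      refine tri.trans (le_of_eq ?_)
      have eq1 : |P * (b * c / ((q.1 - x) * (q.2 - 1)))|
          = |b * c| * (|q.1| ^ a * |q.2| ^ a * |q.1 - 1| ^ b * |q.2 - 1| ^ (b - 1)
            * |q.1 - x| ^ (c - 1) * |q.2 - y| ^ c * |q.1 - q.2| ^ g) := by
        rw [abs_mul, abs_of_nonneg (hP ▸ hnn), abs_div, abs_mul (q.1 - x) (q.2 - 1), hP,
          Real.rpow_sub_one (abs_ne_zero.mpr m4), Real.rpow_sub_one (abs_ne_zero.mpr m2)]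
        ring
      have eq3 : |P * (-(c * g) / ((q.1 - x) * (q.1 - q.2)))|
          = |c * g| * (|q.1| ^ a * |q.2| ^ a * |q.1 - 1| ^ b * |q.2 - 1| ^ b
            * |q.1 - x| ^ (c - 1) * |q.2 - y| ^ c * |q.1 - q.2| ^ (g - 1)) := by
        rw [abs_mul, abs_of_nonneg (hP ▸ hnn), abs_div, abs_neg, abs_mul (q.1 - x) (q.1 - q.2), hP,
          Real.rpow_sub_one (abs_ne_zero.mpr m6), Real.rpow_sub_one (abs_ne_zero.mpr m2)]
        ring
      have eq5 : |P * (c ^ 2 / ((q.1 - x) * (q.2 - y)))|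
          = |c ^ 2| * (|q.1| ^ a * |q.2| ^ a * |q.1 - 1| ^ b * |q.2 - 1| ^ b
            * |q.1 - x| ^ (c - 1) * |q.2 - y| ^ (c - 1) * |q.1 - q.2| ^ g) := by
        rw [abs_mul, abs_of_nonneg (hP ▸ hnn), abs_div, abs_mul (q.1 - x) (q.2 - y), hP,
          Real.rpow_sub_one (abs_ne_zero.mpr m5), Real.rpow_sub_one (abs_ne_zero.mpr m2)]
        ring
      rw [eq1, eq3, eq5]
  have intE : IntegrableOn E σ := by
    simp only [hEdef]
    exact intW.add (intH.const_mul (1 / (a * c)))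
  have hz : ∫ q in σ, E q = 0 :=
    slice_integral_zero σ hopen hconv hbd Ffun E hContF hF0
      ((integrable_indicator_iff hm).mpr intE) hderiv
  have hsplit : ∫ q in σ, E q
      = (∫ q in σ, Φ q * wfun q) + (1 / (a * c)) * ∫ q in σ, Φ q * hsfun q := by
    simp only [hEdef]
    rw [integral_add intW (intH.const_mul (1 / (a * c))), integral_const_mul]
  show (∫ q in σ, Φ q * wfun q) = -(1 / (a * c)) * ∫ q in σ, Φ q * hsfun q
  have := hsplit.symm.trans hz
  linarith
end

section
/- With the notation of the context, I(w) = −(1/(ac))·I(h₂ − h₄ + h₅), where w(t,s) = 1/(t(s−y)). -/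
open MeasureTheory

open Set Filter


noncomputable def psiDF (e u : ℝ) : ℝ := e * |u| ^ e / u

lemma psiDF_zero (e : ℝ) : psiDF e 0 = 0 := by simp [psiDF]

lemma hasDerivAt_absRpow {e : ℝ} (he : 1 < e) (u : ℝ) :
    HasDerivAt (fun v : ℝ => |v| ^ e) (psiDF e u) u := by
  rcases lt_trichotomy u 0 with hu | hu | hu
  · have h1 : HasDerivAt (fun v : ℝ => (-v) ^ e) (e * (-u) ^ (e - 1) * (-1)) u := by
      have hout : HasDerivAt (fun w : ℝ => w ^ e) (e * (-u) ^ (e - 1)) (-u) :=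
        Real.hasDerivAt_rpow_const (Or.inl (by linarith))
      exact hout.comp u ((hasDerivAt_id u).neg)
    have heq : (fun v : ℝ => |v| ^ e) =ᶠ[nhds u] fun v : ℝ => (-v) ^ e := by
      filter_upwards [eventually_lt_nhds hu] with v hv
      rw [abs_of_neg hv]
    have := h1.congr_of_eventuallyEq heq
    refine this.congr_deriv (Eq.symm ?_)
    rw [psiDF, abs_of_neg hu]
    rw [show e - 1 = e + (-1) by ring, Real.rpow_add (by linarith : (0:ℝ) < -u),
      Real.rpow_neg_one]
    field_simp
  · subst hu
    rw [psiDF_zero]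
    rw [hasDerivAt_iff_tendsto]
    have hfun : (fun x' : ℝ => ‖x' - 0‖⁻¹ * ‖|x'| ^ e - |(0:ℝ)| ^ e - (x' - 0) • (0:ℝ)‖)
        = fun x' : ℝ => |x'| ^ (e - 1) := by
      funext v
      rcases eq_or_ne v 0 with rfl | hv
      · simp [Real.zero_rpow (by linarith : e ≠ 0), Real.zero_rpow (by linarith : e - 1 ≠ 0)]
      · have h0 : (0:ℝ) < |v| := abs_pos.2 hv
        simp only [sub_zero, smul_zero, sub_zero, Real.norm_eq_abs, norm_inv]
        rw [abs_zero, Real.zero_rpow (by linarith : e ≠ 0), sub_zero,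
          abs_of_nonneg (Real.rpow_nonneg (abs_nonneg v) e),
          show e - 1 = e + (-1) by ring, Real.rpow_add h0, Real.rpow_neg_one]
        ring
    rw [hfun]
    have : ContinuousAt (fun v : ℝ => |v| ^ (e - 1)) 0 :=
      (Real.continuousAt_rpow_const _ _ (Or.inr (by linarith))).comp continuous_abs.continuousAt
    have h := this.tendsto
    simpa [Real.zero_rpow (by linarith : e - 1 ≠ 0)] using h
  · have h1 : HasDerivAt (fun v : ℝ => v ^ e) (e * u ^ (e - 1)) u :=
      Real.hasDerivAt_rpow_const (Or.inl (by linarith))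
    have heq : (fun v : ℝ => |v| ^ e) =ᶠ[nhds u] fun v : ℝ => v ^ e := by
      filter_upwards [eventually_gt_nhds hu] with v hv
      rw [abs_of_pos hv]
    have := h1.congr_of_eventuallyEq heq
    refine this.congr_deriv (Eq.symm ?_)
    rw [psiDF, abs_of_pos hu]
    rw [show e - 1 = e + (-1) by ring, Real.rpow_add hu, Real.rpow_neg_one]
    field_simp

lemma continuous_psiDF {e : ℝ} (he : 1 < e) : Continuous (psiDF e) := by
  rw [continuous_iff_continuousAt]
  intro u
  rcases eq_or_ne u 0 with rfl | hu
  · rw [ContinuousAt, psiDF_zero]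
    have hlim : Filter.Tendsto (fun v : ℝ => e * |v| ^ (e - 1)) (nhds 0) (nhds 0) := by
      have : ContinuousAt (fun v : ℝ => e * |v| ^ (e - 1)) 0 :=
        continuousAt_const.mul ((Real.continuousAt_rpow_const _ _
          (Or.inr (by linarith))).comp continuous_abs.continuousAt)
      simpa [Real.zero_rpow (by linarith : e - 1 ≠ 0)] using this.tendsto
    refine squeeze_zero_norm ?_ hlim
    intro v
    rcases eq_or_ne v 0 with rfl | hv
    · simp [psiDF_zero, Real.zero_rpow (by linarith : e - 1 ≠ 0)]
    · have h0 : (0:ℝ) < |v| := abs_pos.2 hv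
      rw [psiDF, Real.norm_eq_abs, abs_div, abs_mul,
        abs_of_nonneg (by linarith : (0:ℝ) ≤ e),
        abs_of_nonneg (Real.rpow_nonneg (abs_nonneg v) e),
        show e - 1 = e + (-1) by ring, Real.rpow_add h0, Real.rpow_neg_one,
        div_eq_mul_inv]
      exact le_of_eq (by ring)
  · show ContinuousAt (fun v : ℝ => e * |v| ^ e / v) u
    exact (continuousAt_const.mul ((Real.continuousAt_rpow_const _ _
      (Or.inl (abs_ne_zero.2 hu))).comp continuous_abs.continuousAt)).div continuousAt_id hu

lemma continuous_absRpow {e : ℝ} (he : 0 ≤ e) : Continuous fun v : ℝ => |v| ^ e :=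
  continuous_iff_continuousAt.2 fun _ =>
    (Real.continuousAt_rpow_const _ _ (Or.inr he)).comp continuous_abs.continuousAt

noncomputable def Gdf (a b c g x s t : ℝ) : ℝ := |t| ^ a * |t - 1| ^ b * |t - x| ^ c * |t - s| ^ g

noncomputable def Ddf (a b c g x s t : ℝ) : ℝ :=
  psiDF a t * (|t - 1| ^ b * |t - x| ^ c * |t - s| ^ g) +
  |t| ^ a * psiDF b (t - 1) * (|t - x| ^ c * |t - s| ^ g) +
  |t| ^ a * |t - 1| ^ b * psiDF c (t - x) * |t - s| ^ g +
  |t| ^ a * |t - 1| ^ b * |t - x| ^ c * psiDF g (t - s)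

lemma hasDerivAt_shift {e : ℝ} (he : 1 < e) (r t : ℝ) :
    HasDerivAt (fun v : ℝ => |v - r| ^ e) (psiDF e (t - r)) t := by
  have := (hasDerivAt_absRpow he (t - r)).comp t ((hasDerivAt_id t).sub_const r)
  simpa [Function.comp_def] using this

lemma hasDerivAt_Gdf {a b c g : ℝ} (ha : 1 < a) (hb : 1 < b) (hc : 1 < c) (hg : 1 < g)
    (x s t : ℝ) : HasDerivAt (fun v => Gdf a b c g x s v) (Ddf a b c g x s t) t := by
  have h1 : HasDerivAt (fun v : ℝ => |v| ^ a) (psiDF a t) t := hasDerivAt_absRpow ha t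
  have h2 := hasDerivAt_shift hb 1 t
  have h3 := hasDerivAt_shift hc x t
  have h4 := hasDerivAt_shift hg s t
  have H := ((h1.mul h2).mul h3).mul h4
  unfold Gdf Ddf
  refine H.congr_deriv (Eq.symm ?_)
  simp only [Pi.mul_apply]
  ring

lemma continuous_Ddf {a b c g : ℝ} (ha : 1 < a) (hb : 1 < b) (hc : 1 < c) (hg : 1 < g)
    (x : ℝ) : Continuous (fun p : ℝ × ℝ => Ddf a b c g x p.2 p.1) := by
  have h0 : (0:ℝ) ≤ a := by linarith
  have hA : Continuous fun p : ℝ × ℝ => |p.1| ^ a := (continuous_absRpow h0).comp continuous_fst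
  have hB : Continuous fun p : ℝ × ℝ => |p.1 - 1| ^ b :=
    (continuous_absRpow (by linarith)).comp (continuous_fst.sub continuous_const)
  have hC : Continuous fun p : ℝ × ℝ => |p.1 - x| ^ c :=
    (continuous_absRpow (by linarith)).comp (continuous_fst.sub continuous_const)
  have hG : Continuous fun p : ℝ × ℝ => |p.1 - p.2| ^ g :=
    (continuous_absRpow (by linarith)).comp (continuous_fst.sub continuous_snd)
  have pA : Continuous fun p : ℝ × ℝ => psiDF a p.1 :=
    (continuous_psiDF ha).comp continuous_fst
  have pB : Continuous fun p : ℝ × ℝ => psiDF b (p.1 - 1) :=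
    (continuous_psiDF hb).comp (continuous_fst.sub continuous_const)
  have pC : Continuous fun p : ℝ × ℝ => psiDF c (p.1 - x) :=
    (continuous_psiDF hc).comp (continuous_fst.sub continuous_const)
  have pG : Continuous fun p : ℝ × ℝ => psiDF g (p.1 - p.2) :=
    (continuous_psiDF hg).comp (continuous_fst.sub continuous_snd)
  unfold Ddf
  exact (((pA.mul ((hB.mul hC).mul hG)).add ((hA.mul pB).mul (hC.mul hG))).add
    (((hA.mul hB).mul pC).mul hG)).add (((hA.mul hB).mul hC).mul pG)

lemma samesign_lemma {σ : Set (ℝ × ℝ)} (hσ : IsPreconnected σ) {f : ℝ × ℝ → ℝ}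
    (hf : Continuous f) (h0 : ∀ q ∈ σ, f q ≠ 0) {q q' : ℝ × ℝ}
    (hq : q ∈ σ) (hq' : q' ∈ σ) : 0 < f q * f q' := by
  by_contra hcon
  push_neg at hcon
  rcases mul_nonpos_iff.mp hcon with ⟨h1, h2⟩ | ⟨h1, h2⟩
  · have := hσ.intermediate_value hq' hq hf.continuousOn
    obtain ⟨z, hz, hz0⟩ := this ⟨h2, h1⟩
    exact h0 z hz hz0
  · have := hσ.intermediate_value hq hq' hf.continuousOn
    obtain ⟨z, hz, hz0⟩ := this ⟨h1, h2⟩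
    exact h0 z hz hz0

lemma convex_comb_pos {A B k u v : ℝ} (hA : 0 < A * k) (hB : 0 < B * k)
    (hu : 0 ≤ u) (hv : 0 ≤ v) (huv : u + v = 1) : 0 < (u * A + v * B) * k := by
  have h : (u * A + v * B) * k = u * (A * k) + v * (B * k) := by ring
  rw [h]
  rcases eq_or_lt_of_le hu with rfl | hu'
  · have : v = 1 := by linarith
    simp [this, hB]
  · exact add_pos_of_pos_of_nonneg (mul_pos hu' hA) (mul_nonneg hv hB.le)

lemma ident1 {a b c g x y : ℝ} (ha : 1 < a) (hb : 1 < b) (hc : 1 < c) (hg : 1 < g) (p : ℝ × ℝ) :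
    dfWeight a b c g x y p * (1 / (p.1 * (p.2 - y))) =
      psiDF a p.1 * (|p.1 - 1| ^ b * |p.1 - x| ^ c * |p.1 - p.2| ^ g) *
        (|p.2| ^ a * |p.2 - 1| ^ b * psiDF c (p.2 - y)) / (a * c) := by
  obtain ⟨t, s⟩ := p
  have ha0 : a ≠ 0 := by linarith
  have hc0 : c ≠ 0 := by linarith
  simp only [dfWeight, psiDF]
  by_cases ht : t = 0
  · simp [ht, Real.zero_rpow ha0]
  by_cases hs : s = y
  · simp [hs, Real.zero_rpow hc0]
  have hsy : s - y ≠ 0 := sub_ne_zero.2 hs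
  field_simp

lemma ident2 {a b c g x y : ℝ} (ha : 1 < a) (hb : 1 < b) (hc : 1 < c) (hg : 1 < g) (p : ℝ × ℝ) :
    dfWeight a b c g x y p * h2 b c y p =
      psiDF b (p.1 - 1) * (|p.1| ^ a * |p.1 - x| ^ c * |p.1 - p.2| ^ g) *
        (|p.2| ^ a * |p.2 - 1| ^ b * psiDF c (p.2 - y)) := by
  obtain ⟨t, s⟩ := p
  have hb0 : b ≠ 0 := by linarith
  have hc0 : c ≠ 0 := by linarith
  simp only [dfWeight, h2, psiDF]
  by_cases ht : t = 1
  · simp [ht, Real.zero_rpow hb0]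
  by_cases hs : s = y
  · simp [hs, Real.zero_rpow hc0]
  have ht1 : t - 1 ≠ 0 := sub_ne_zero.2 ht
  have hsy : s - y ≠ 0 := sub_ne_zero.2 hs
  field_simp

lemma ident4 {a b c g x y : ℝ} (ha : 1 < a) (hb : 1 < b) (hc : 1 < c) (hg : 1 < g) (p : ℝ × ℝ) :
    dfWeight a b c g x y p * h4 c g y p =
      -(psiDF g (p.1 - p.2) * (|p.1| ^ a * |p.1 - 1| ^ b * |p.1 - x| ^ c) *
        (|p.2| ^ a * |p.2 - 1| ^ b * psiDF c (p.2 - y))) := by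
  obtain ⟨t, s⟩ := p
  have hg0 : g ≠ 0 := by linarith
  have hc0 : c ≠ 0 := by linarith
  simp only [dfWeight, h4, psiDF]
  by_cases ht : t = s
  · simp [ht, Real.zero_rpow hg0]
  by_cases hs : s = y
  · simp [hs, Real.zero_rpow hc0]
  have hts : t - s ≠ 0 := sub_ne_zero.2 ht
  have hsy : s - y ≠ 0 := sub_ne_zero.2 hs
  field_simp

lemma ident5 {a b c g x y : ℝ} (ha : 1 < a) (hb : 1 < b) (hc : 1 < c) (hg : 1 < g) (p : ℝ × ℝ) :
    dfWeight a b c g x y p * h5 c x y p =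
      psiDF c (p.1 - x) * (|p.1| ^ a * |p.1 - 1| ^ b * |p.1 - p.2| ^ g) *
        (|p.2| ^ a * |p.2 - 1| ^ b * psiDF c (p.2 - y)) := by
  obtain ⟨t, s⟩ := p
  have hc0 : c ≠ 0 := by linarith
  simp only [dfWeight, h5, psiDF]
  by_cases ht : t = x
  · simp [ht, Real.zero_rpow hc0]
  by_cases hs : s = y
  · simp [hs, Real.zero_rpow hc0]
  have htx : t - x ≠ 0 := sub_ne_zero.2 ht
  have hsy : s - y ≠ 0 := sub_ne_zero.2 hs
  field_simp

/-- The open chamber of the arrangement containing `p`. -/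
def dfC (x y : ℝ) (p : ℝ × ℝ) : Set (ℝ × ℝ) :=
  {q | 0 < q.1 * p.1 ∧ 0 < (q.1 - 1) * (p.1 - 1) ∧ 0 < (q.1 - x) * (p.1 - x) ∧
    0 < q.2 * p.2 ∧ 0 < (q.2 - 1) * (p.2 - 1) ∧ 0 < (q.2 - y) * (p.2 - y) ∧
    0 < (q.1 - q.2) * (p.1 - p.2)}

lemma dfC_open (x y : ℝ) (p : ℝ × ℝ) : IsOpen (dfC x y p) := by
  unfold dfC
  refine (isOpen_lt continuous_const (by fun_prop)).and
    ((isOpen_lt continuous_const (by fun_prop)).and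
    ((isOpen_lt continuous_const (by fun_prop)).and
    ((isOpen_lt continuous_const (by fun_prop)).and
    ((isOpen_lt continuous_const (by fun_prop)).and
    ((isOpen_lt continuous_const (by fun_prop)).and
    (isOpen_lt continuous_const (by fun_prop)))))))

lemma dfC_convex (x y : ℝ) (p : ℝ × ℝ) : Convex ℝ (dfC x y p) := by
  intro q hq q' hq' u v hu hv huv
  obtain ⟨c1, c2, c3, c4, c5, c6, c7⟩ := hq
  obtain ⟨d1, d2, d3, d4, d5, d6, d7⟩ := hq'
  refine ⟨?_, ?_, ?_, ?_, ?_, ?_, ?_⟩ <;>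
    simp only [Prod.fst_add, Prod.snd_add, Prod.smul_fst, Prod.smul_snd, smul_eq_mul]
  · exact convex_comb_pos c1 d1 hu hv huv
  · rw [show (u * q.1 + v * q'.1 - 1) * (p.1 - 1)
        = (u * (q.1 - 1) + v * (q'.1 - 1)) * (p.1 - 1) by linear_combination (p.1 - 1) * huv]
    exact convex_comb_pos c2 d2 hu hv huv
  · rw [show (u * q.1 + v * q'.1 - x) * (p.1 - x)
        = (u * (q.1 - x) + v * (q'.1 - x)) * (p.1 - x) by linear_combination (p.1 - x) * x * huv]
    exact convex_comb_pos c3 d3 hu hv huv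
  · exact convex_comb_pos c4 d4 hu hv huv
  · rw [show (u * q.2 + v * q'.2 - 1) * (p.2 - 1)
        = (u * (q.2 - 1) + v * (q'.2 - 1)) * (p.2 - 1) by linear_combination (p.2 - 1) * huv]
    exact convex_comb_pos c5 d5 hu hv huv
  · rw [show (u * q.2 + v * q'.2 - y) * (p.2 - y)
        = (u * (q.2 - y) + v * (q'.2 - y)) * (p.2 - y) by linear_combination (p.2 - y) * y * huv]
    exact convex_comb_pos c6 d6 hu hv huv
  · rw [show (u * q.1 + v * q'.1 - (u * q.2 + v * q'.2)) * (p.1 - p.2)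
        = (u * (q.1 - q.2) + v * (q'.1 - q'.2)) * (p.1 - p.2) by ring]
    exact convex_comb_pos c7 d7 hu hv huv

lemma dfC_subset (x y : ℝ) {p : ℝ × ℝ} (hp : p ∈ dfComplement x y) :
    dfC x y p ⊆ dfComplement x y := by
  rintro q ⟨c1, c2, c3, c4, c5, c6, c7⟩
  exact ⟨left_ne_zero_of_mul (ne_of_gt c1),
    sub_ne_zero.1 (left_ne_zero_of_mul (ne_of_gt c2)),
    sub_ne_zero.1 (left_ne_zero_of_mul (ne_of_gt c3)),
    left_ne_zero_of_mul (ne_of_gt c4),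
    sub_ne_zero.1 (left_ne_zero_of_mul (ne_of_gt c5)),
    sub_ne_zero.1 (left_ne_zero_of_mul (ne_of_gt c6)),
    sub_ne_zero.1 (left_ne_zero_of_mul (ne_of_gt c7))⟩

lemma dfC_mem (x y : ℝ) {p : ℝ × ℝ} (hp : p ∈ dfComplement x y) : p ∈ dfC x y p :=
  ⟨mul_self_pos.2 hp.1, mul_self_pos.2 (sub_ne_zero.2 hp.2.1),
    mul_self_pos.2 (sub_ne_zero.2 hp.2.2.1), mul_self_pos.2 hp.2.2.2.1,
    mul_self_pos.2 (sub_ne_zero.2 hp.2.2.2.2.1), mul_self_pos.2 (sub_ne_zero.2 hp.2.2.2.2.2.1),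
    mul_self_pos.2 (sub_ne_zero.2 hp.2.2.2.2.2.2)⟩

lemma chamber_eq (x y : ℝ) {p : ℝ × ℝ} (hp : p ∈ dfComplement x y) :
    connectedComponentIn (dfComplement x y) p = dfC x y p := by
  apply Subset.antisymm
  · intro q hq
    have hpre : IsPreconnected (connectedComponentIn (dfComplement x y) p) :=
      isPreconnected_connectedComponentIn
    have hsub := connectedComponentIn_subset (dfComplement x y) p
    have hpm : p ∈ connectedComponentIn (dfComplement x y) p := mem_connectedComponentIn hp
    refine ⟨?_, ?_, ?_, ?_, ?_, ?_, ?_⟩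
    · exact samesign_lemma hpre continuous_fst (fun q' hq' => (hsub hq').1) hq hpm
    · exact samesign_lemma hpre (continuous_fst.sub continuous_const)
        (fun q' hq' => sub_ne_zero.2 (hsub hq').2.1) hq hpm
    · exact samesign_lemma hpre (continuous_fst.sub continuous_const)
        (fun q' hq' => sub_ne_zero.2 (hsub hq').2.2.1) hq hpm
    · exact samesign_lemma hpre continuous_snd (fun q' hq' => (hsub hq').2.2.2.1) hq hpm
    · exact samesign_lemma hpre (continuous_snd.sub continuous_const)
        (fun q' hq' => sub_ne_zero.2 (hsub hq').2.2.2.2.1) hq hpm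
    · exact samesign_lemma hpre (continuous_snd.sub continuous_const)
        (fun q' hq' => sub_ne_zero.2 (hsub hq').2.2.2.2.2.1) hq hpm
    · exact samesign_lemma hpre (continuous_fst.sub continuous_snd)
        (fun q' hq' => sub_ne_zero.2 (hsub hq').2.2.2.2.2.2) hq hpm
  · exact (dfC_convex x y p).isPreconnected.subset_connectedComponentIn
      (dfC_mem x y hp) (dfC_subset x y hp)

noncomputable def Mdf (a b c y s : ℝ) : ℝ := |s| ^ a * |s - 1| ^ b * psiDF c (s - y)

lemma continuous_Mdf {a b c : ℝ} (ha : 1 < a) (hb : 1 < b) (hc : 1 < c) (y : ℝ) :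
    Continuous (fun s : ℝ => Mdf a b c y s) := by
  unfold Mdf
  exact ((continuous_absRpow (by linarith)).mul
    ((continuous_absRpow (by linarith)).comp (continuous_id.sub continuous_const))).mul
    ((continuous_psiDF hc).comp (continuous_id.sub continuous_const))

set_option maxHeartbeats 1000000 in
lemma key_vanish {x y a b c g : ℝ} (ha : 1 < a) (hb : 1 < b) (hc : 1 < c) (hg : 1 < g)
    (σ : Set (ℝ × ℝ)) (hbd : Bornology.IsBounded σ)
    (hcc : ∃ p ∈ dfComplement x y, σ = connectedComponentIn (dfComplement x y) p) :
    ∫ q in σ, Ddf a b c g x q.2 q.1 * Mdf a b c y q.2 = 0 := by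
  obtain ⟨p, hpF, rfl⟩ := hcc
  rw [chamber_eq x y hpF] at hbd ⊢
  set C := dfC x y p with hCdef
  have hCopen : IsOpen C := dfC_open x y p
  have hCconv : Convex ℝ C := dfC_convex x y p
  have hmeas : MeasurableSet C := hCopen.measurableSet
  obtain ⟨R, hR⟩ := isBounded_iff_forall_norm_le.1 hbd
  have hWcont : Continuous (fun q : ℝ × ℝ => Ddf a b c g x q.2 q.1 * Mdf a b c y q.2) :=
    (continuous_Ddf ha hb hc hg x).mul ((continuous_Mdf ha hb hc y).comp continuous_snd)
  have hK : IsCompact (closure C) := hbd.isCompact_closure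
  have hInt : IntegrableOn (fun q : ℝ × ℝ => Ddf a b c g x q.2 q.1 * Mdf a b c y q.2) C :=
    (hWcont.continuousOn.integrableOn_compact hK).mono_set subset_closure
  rw [← integral_indicator hmeas]
  have hIntInd : Integrable (C.indicator fun q : ℝ × ℝ => Ddf a b c g x q.2 q.1 * Mdf a b c y q.2)
      (volume.prod volume) := by
    rw [← Measure.volume_eq_prod]
    exact (integrable_indicator_iff hmeas).2 hInt
  rw [Measure.volume_eq_prod, integral_prod_symm _ hIntInd]
  have hinner : ∀ s : ℝ,
      (∫ t, (C.indicator fun q : ℝ × ℝ => Ddf a b c g x q.2 q.1 * Mdf a b c y q.2) (t, s)) = 0 := by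
    intro s
    have hAopen : IsOpen {t : ℝ | (t, s) ∈ C} :=
      hCopen.preimage (continuous_id.prodMk continuous_const)
    set A : Set ℝ := {t : ℝ | (t, s) ∈ C} with hAdef
    have hindeq : ∀ t : ℝ,
        (C.indicator fun q : ℝ × ℝ => Ddf a b c g x q.2 q.1 * Mdf a b c y q.2) (t, s)
          = A.indicator (fun t => Ddf a b c g x s t) t * Mdf a b c y s := by
      intro t
      by_cases h : (t, s) ∈ C
      · rw [Set.indicator_of_mem h, Set.indicator_of_mem (show t ∈ A from h)]
      · rw [Set.indicator_of_notMem h, Set.indicator_of_notMem (show t ∉ A from h), zero_mul]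
    simp only [hindeq]
    rw [integral_mul_const]
    suffices hDA : (∫ t, A.indicator (fun t => Ddf a b c g x s t) t) = 0 by
      rw [hDA, zero_mul]
    rw [integral_indicator hAopen.measurableSet]
    rcases A.eq_empty_or_nonempty with hAe | hAne
    · rw [hAe]; simp
    obtain ⟨t₀, ht₀⟩ := hAne
    have habs : ∀ t ∈ A, |t| ≤ R := by
      intro t ht
      calc |t| = ‖((t, s) : ℝ × ℝ).1‖ := rfl
        _ ≤ ‖((t, s) : ℝ × ℝ)‖ := norm_fst_le _
        _ ≤ R := hR (t, s) ht
    have hbb : BddBelow A := ⟨-R, fun t ht => (abs_le.1 (habs t ht)).1⟩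
    have hba : BddAbove A := ⟨R, fun t ht => (abs_le.1 (habs t ht)).2⟩
    have hAconv : Convex ℝ A := by
      intro u' hu' v' hv' ua va hua hva huva
      have h := hCconv (show ((u' : ℝ), s) ∈ C from hu') (show ((v' : ℝ), s) ∈ C from hv')
        hua hva huva
      have heq : ((ua • u' + va • v' : ℝ), s) = ua • ((u' : ℝ), s) + va • ((v' : ℝ), s) := by
        refine Prod.ext ?_ ?_ <;>
          simp only [Prod.fst_add, Prod.snd_add, Prod.smul_fst, Prod.smul_snd, smul_eq_mul]
        linear_combination (-s) * huva
      show ((ua • u' + va • v' : ℝ), s) ∈ C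
      rw [heq]; exact h
    have hAIoo : A = Ioo (sInf A) (sSup A) := by
      apply Subset.antisymm
      · intro z hz
        obtain ⟨ε, hε, hball⟩ := Metric.isOpen_iff.1 hAopen z hz
        have hz1 : z - ε / 2 ∈ A := by
          apply hball
          rw [Metric.mem_ball, Real.dist_eq, show z - ε / 2 - z = -(ε / 2) by ring, abs_neg,
            abs_of_pos (by linarith)]
          linarith
        have hz2 : z + ε / 2 ∈ A := by
          apply hball
          rw [Metric.mem_ball, Real.dist_eq, show z + ε / 2 - z = ε / 2 by ring,
            abs_of_pos (by linarith)]
          linarith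
        exact ⟨lt_of_le_of_lt (csInf_le hbb hz1) (by linarith),
          lt_of_lt_of_le (by linarith) (le_csSup hba hz2)⟩
      · intro z hz
        obtain ⟨u, huA, huz⟩ := exists_lt_of_csInf_lt ⟨t₀, ht₀⟩ hz.1
        obtain ⟨v, hvA, hzv⟩ := exists_lt_of_lt_csSup ⟨t₀, ht₀⟩ hz.2
        exact hAconv.ordConnected.out huA hvA ⟨huz.le, hzv.le⟩
    have hle : sInf A ≤ sSup A := csInf_le_csSup ⟨t₀, ht₀⟩ hbb hba
    have hGzero : ∀ z : ℝ, z ∈ closure A → z ∉ A → Gdf a b c g x s z = 0 := by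
      intro z hzc hzA
      have hzC : ((z : ℝ), s) ∈ closure C := by
        have h1 : ((z : ℝ), s) ∈ (fun t : ℝ => (t, s)) '' closure A := ⟨z, hzc, rfl⟩
        have h2 := image_closure_subset_closure_image
          (f := fun t : ℝ => (t, s)) (s := A) (continuous_id.prodMk continuous_const)
        have h3 : (fun t : ℝ => (t, s)) '' A ⊆ C := by
          rintro _ ⟨w, hw, rfl⟩; exact hw
        exact closure_mono h3 (h2 h1)
      have w1 : 0 ≤ z * p.1 :=
        closure_minimal (fun q (hq : q ∈ C) => hq.1.le)
          (isClosed_le continuous_const (g := fun q : ℝ × ℝ => q.1 * p.1) (by fun_prop)) hzC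
      have w2 : 0 ≤ (z - 1) * (p.1 - 1) :=
        closure_minimal (fun q (hq : q ∈ C) => hq.2.1.le)
          (isClosed_le continuous_const (g := fun q : ℝ × ℝ => (q.1 - 1) * (p.1 - 1)) (by fun_prop)) hzC
      have w3 : 0 ≤ (z - x) * (p.1 - x) :=
        closure_minimal (fun q (hq : q ∈ C) => hq.2.2.1.le)
          (isClosed_le continuous_const (g := fun q : ℝ × ℝ => (q.1 - x) * (p.1 - x)) (by fun_prop)) hzC
      have w7 : 0 ≤ (z - s) * (p.1 - p.2) :=
        closure_minimal (fun q (hq : q ∈ C) => hq.2.2.2.2.2.2.le)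
          (isClosed_le continuous_const (g := fun q : ℝ × ℝ => (q.1 - q.2) * (p.1 - p.2)) (by fun_prop)) hzC
      have hnot : ((z : ℝ), s) ∉ C := fun h => hzA h
      rw [hCdef] at hnot
      simp only [dfC, mem_setOf_eq, not_and_or, not_lt] at hnot
      have hw4 : 0 < s * p.2 := ht₀.2.2.2.1
      have hw5 : 0 < (s - 1) * (p.2 - 1) := ht₀.2.2.2.2.1
      have hw6 : 0 < (s - y) * (p.2 - y) := ht₀.2.2.2.2.2.1
      rcases hnot with h | h | h | h | h | h | h
      · have hz0 : z = 0 := by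
          rcases mul_eq_zero.1 (le_antisymm h w1) with h' | h'
          · exact h'
          · exact absurd h' hpF.1
        simp [Gdf, hz0, Real.zero_rpow (show a ≠ 0 by linarith)]
      · have hz1 : z = 1 := by
          rcases mul_eq_zero.1 (le_antisymm h w2) with h' | h'
          · exact sub_eq_zero.1 h'
          · exact absurd (sub_eq_zero.1 h') hpF.2.1
        simp [Gdf, hz1, Real.zero_rpow (show b ≠ 0 by linarith)]
      · have hzx : z = x := by
          rcases mul_eq_zero.1 (le_antisymm h w3) with h' | h'
          · exact sub_eq_zero.1 h'
          · exact absurd (sub_eq_zero.1 h') hpF.2.2.1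
        simp [Gdf, hzx, Real.zero_rpow (show c ≠ 0 by linarith)]
      · linarith
      · linarith
      · linarith
      · have hzs : z = s := by
          rcases mul_eq_zero.1 (le_antisymm h w7) with h' | h'
          · exact sub_eq_zero.1 h'
          · exact absurd (sub_eq_zero.1 h') hpF.2.2.2.2.2.2
        simp [Gdf, hzs, Real.zero_rpow (show g ≠ 0 by linarith)]
    have hα := hGzero (sInf A) (csInf_mem_closure ⟨t₀, ht₀⟩ hbb)
      (fun h => lt_irrefl _ (hAIoo.subset h).1)
    have hβ := hGzero (sSup A) (csSup_mem_closure ⟨t₀, ht₀⟩ hba)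
      (fun h => lt_irrefl _ (hAIoo.subset h).2)
    have hderiv : ∀ t ∈ uIcc (sInf A) (sSup A),
        HasDerivAt (fun v => Gdf a b c g x s v) (Ddf a b c g x s t) t :=
      fun t _ => hasDerivAt_Gdf ha hb hc hg x s t
    have hinteg : IntervalIntegrable (fun t => Ddf a b c g x s t) volume (sInf A) (sSup A) := by
      have : Continuous fun t : ℝ => Ddf a b c g x s t :=
        (continuous_Ddf ha hb hc hg x).comp (continuous_id.prodMk continuous_const)
      exact this.intervalIntegrable _ _
    have hFTC := intervalIntegral.integral_eq_sub_of_hasDerivAt hderiv hinteg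
    rw [hAIoo, ← integral_Ioc_eq_integral_Ioo, ← intervalIntegral.integral_of_le hle, hFTC,
      hα, hβ, sub_zero]
  simp only [hinner]
  exact integral_zero _ _

noncomputable def F1df (a b c g x y : ℝ) (q : ℝ × ℝ) : ℝ :=
  psiDF a q.1 * (|q.1 - 1| ^ b * |q.1 - x| ^ c * |q.1 - q.2| ^ g) *
    (|q.2| ^ a * |q.2 - 1| ^ b * psiDF c (q.2 - y)) / (a * c)

noncomputable def F2df (a b c g x y : ℝ) (q : ℝ × ℝ) : ℝ :=
  psiDF b (q.1 - 1) * (|q.1| ^ a * |q.1 - x| ^ c * |q.1 - q.2| ^ g) *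
    (|q.2| ^ a * |q.2 - 1| ^ b * psiDF c (q.2 - y))
  + psiDF g (q.1 - q.2) * (|q.1| ^ a * |q.1 - 1| ^ b * |q.1 - x| ^ c) *
    (|q.2| ^ a * |q.2 - 1| ^ b * psiDF c (q.2 - y))
  + psiDF c (q.1 - x) * (|q.1| ^ a * |q.1 - 1| ^ b * |q.1 - q.2| ^ g) *
    (|q.2| ^ a * |q.2 - 1| ^ b * psiDF c (q.2 - y))

lemma continuous_F1df {a b c g : ℝ} (ha : 1 < a) (hb : 1 < b) (hc : 1 < c) (hg : 1 < g)
    (x y : ℝ) : Continuous (F1df a b c g x y) := by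
  unfold F1df
  apply Continuous.div_const
  exact (((continuous_psiDF ha).comp continuous_fst).mul
    ((((continuous_absRpow (show (0:ℝ) ≤ b by linarith)).comp
        (continuous_fst.sub continuous_const)).mul
      ((continuous_absRpow (show (0:ℝ) ≤ c by linarith)).comp
        (continuous_fst.sub continuous_const))).mul
      ((continuous_absRpow (show (0:ℝ) ≤ g by linarith)).comp
        (continuous_fst.sub continuous_snd)))).mul
    ((((continuous_absRpow (show (0:ℝ) ≤ a by linarith)).comp continuous_snd).mul
      ((continuous_absRpow (show (0:ℝ) ≤ b by linarith)).comp
        (continuous_snd.sub continuous_const))).mul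
      ((continuous_psiDF hc).comp (continuous_snd.sub continuous_const)))

lemma continuous_F2df {a b c g : ℝ} (ha : 1 < a) (hb : 1 < b) (hc : 1 < c) (hg : 1 < g)
    (x y : ℝ) : Continuous (F2df a b c g x y) := by
  have hM : Continuous (fun q : ℝ × ℝ => |q.2| ^ a * |q.2 - 1| ^ b * psiDF c (q.2 - y)) :=
    (((continuous_absRpow (show (0:ℝ) ≤ a by linarith)).comp continuous_snd).mul
      ((continuous_absRpow (show (0:ℝ) ≤ b by linarith)).comp
        (continuous_snd.sub continuous_const))).mul
      ((continuous_psiDF hc).comp (continuous_snd.sub continuous_const))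
  have hA : Continuous (fun q : ℝ × ℝ => |q.1| ^ a) :=
    (continuous_absRpow (show (0:ℝ) ≤ a by linarith)).comp continuous_fst
  have hB : Continuous (fun q : ℝ × ℝ => |q.1 - 1| ^ b) :=
    (continuous_absRpow (show (0:ℝ) ≤ b by linarith)).comp
      (continuous_fst.sub continuous_const)
  have hC : Continuous (fun q : ℝ × ℝ => |q.1 - x| ^ c) :=
    (continuous_absRpow (show (0:ℝ) ≤ c by linarith)).comp
      (continuous_fst.sub continuous_const)
  have hG : Continuous (fun q : ℝ × ℝ => |q.1 - q.2| ^ g) :=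
    (continuous_absRpow (show (0:ℝ) ≤ g by linarith)).comp
      (continuous_fst.sub continuous_snd)
  have hpB : Continuous (fun q : ℝ × ℝ => psiDF b (q.1 - 1)) :=
    (continuous_psiDF hb).comp (continuous_fst.sub continuous_const)
  have hpC : Continuous (fun q : ℝ × ℝ => psiDF c (q.1 - x)) :=
    (continuous_psiDF hc).comp (continuous_fst.sub continuous_const)
  have hpG : Continuous (fun q : ℝ × ℝ => psiDF g (q.1 - q.2)) :=
    (continuous_psiDF hg).comp (continuous_fst.sub continuous_snd)
  unfold F2df
  exact (((hpB.mul ((hA.mul hC).mul hG)).mul hM).add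
    ((hpG.mul ((hA.mul hB).mul hC)).mul hM)).add
    ((hpC.mul ((hA.mul hB).mul hG)).mul hM)

set_option maxHeartbeats 1000000 in
/-- the cohomological expansion ω₁₆ ∼ −(1/(ac))(η₂−η₄+η₅)
integrated over a bounded chamber `σ` of the Dotsenko–Fateev arrangement. -/
theorem expansion_omega16 (x y a b c g : ℝ)
    (hx0 : x ≠ 0) (hx1 : x ≠ 1) (hy0 : y ≠ 0) (hy1 : y ≠ 1) (hxy : x ≠ y)
    (ha : 1 < a) (hb : 1 < b) (hc : 1 < c) (hg : 1 < g)
    (σ : Set (ℝ × ℝ)) (hbd : Bornology.IsBounded σ)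
    (hcc : ∃ p ∈ dfComplement x y, σ = connectedComponentIn (dfComplement x y) p) :
    dfInt a b c g x y σ (fun p => 1 / (p.1 * (p.2 - y))) =
      -(1 / (a * c)) * dfInt a b c g x y σ (fun p => h2 b c y p - h4 c g y p + h5 c x y p) := by
  have key := key_vanish ha hb hc hg σ hbd hcc
  obtain ⟨p, hpF, hσ⟩ := hcc
  have hσopen : IsOpen σ := by rw [hσ, chamber_eq x y hpF]; exact dfC_open x y p
  have hK : IsCompact (closure σ) := hbd.isCompact_closure
  have int1 : IntegrableOn (F1df a b c g x y) σ :=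
    ((continuous_F1df ha hb hc hg x y).continuousOn.integrableOn_compact hK).mono_set
      subset_closure
  have int2 : IntegrableOn (F2df a b c g x y) σ :=
    ((continuous_F2df ha hb hc hg x y).continuousOn.integrableOn_compact hK).mono_set
      subset_closure
  have e1 : dfInt a b c g x y σ (fun p => 1 / (p.1 * (p.2 - y)))
      = ∫ q in σ, F1df a b c g x y q := by
    unfold dfInt
    refine integral_congr_ae (Filter.Eventually.of_forall fun q => ?_)
    have := ident1 (a := a) (b := b) (c := c) (g := g) (x := x) (y := y) ha hb hc hg q
    simpa [F1df] using this
  have e2 : dfInt a b c g x y σ (fun p => h2 b c y p - h4 c g y p + h5 c x y p)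
      = ∫ q in σ, F2df a b c g x y q := by
    unfold dfInt
    refine integral_congr_ae (Filter.Eventually.of_forall fun q => ?_)
    show dfWeight a b c g x y q * (h2 b c y q - h4 c g y q + h5 c x y q) = F2df a b c g x y q
    rw [show dfWeight a b c g x y q * (h2 b c y q - h4 c g y q + h5 c x y q)
        = dfWeight a b c g x y q * h2 b c y q - dfWeight a b c g x y q * h4 c g y q
          + dfWeight a b c g x y q * h5 c x y q by ring,
      ident2 (g := g) (x := x) ha hb hc hg q, ident4 (b := b) (x := x) ha hb hc hg q,
      ident5 (b := b) (g := g) ha hb hc hg q]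
    unfold F2df
    ring
  rw [e1, e2]
  have hcomb : ∀ q : ℝ × ℝ, F1df a b c g x y q + (1 / (a * c)) * F2df a b c g x y q
      = (Ddf a b c g x q.2 q.1 * Mdf a b c y q.2) * (1 / (a * c)) := by
    intro q
    unfold F1df F2df Ddf Mdf
    ring
  have hsplit : ∫ q in σ, (F1df a b c g x y q + (1 / (a * c)) * F2df a b c g x y q)
      = (∫ q in σ, F1df a b c g x y q) + (1 / (a * c)) * ∫ q in σ, F2df a b c g x y q := by
    rw [integral_add int1 (int2.const_mul _), integral_const_mul]
  have hz : (∫ q in σ, F1df a b c g x y q) + (1 / (a * c)) * ∫ q in σ, F2df a b c g x y q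
      = 0 := by
    rw [← hsplit]
    calc ∫ q in σ, (F1df a b c g x y q + (1 / (a * c)) * F2df a b c g x y q)
        = ∫ q in σ, (Ddf a b c g x q.2 q.1 * Mdf a b c y q.2) * (1 / (a * c)) :=
          integral_congr_ae (Filter.Eventually.of_forall fun q => hcomb q)
      _ = (∫ q in σ, Ddf a b c g x q.2 q.1 * Mdf a b c y q.2) * (1 / (a * c)) :=
          integral_mul_const _ _
      _ = 0 := by rw [key, zero_mul]
  linarith
end

section
/- With the notation of the context, I(w) = −(1/(ab))·I(h₂ + h₆ + h₇), where w(t,s) = 1/((t−1)s). -/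
open MeasureTheory
open Filter Topology Set Bornology

private lemma contAR {e : ℝ} (he : 0 ≤ e) : Continuous fun r : ℝ => |r| ^ e :=
  continuous_abs.rpow_const (fun _ => Or.inr he)

private lemma df_deriv {e : ℝ} (he : 1 < e) (r : ℝ) :
    HasDerivAt (fun z : ℝ => |z| ^ e) (e * |r| ^ e / r) r := by
  have h := hasDerivAt_abs_rpow r he
  have hval : e * |r| ^ (e-2) * r = e * |r| ^ e / r := by
    rcases eq_or_ne r 0 with rfl | hr
    · simp [Real.zero_rpow (show e ≠ 0 by linarith)]
    · have h2 : |r| ^ (e-2) = |r| ^ e / |r| ^ (2:ℝ) := Real.rpow_sub (abs_pos.mpr hr) e 2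
      rw [h2, show |r| ^ (2:ℝ) = r ^ 2 by
        rw [show (2:ℝ) = ((2:ℕ):ℝ) by norm_num, Real.rpow_natCast, sq_abs]]
      have hr' : |r| ≠ 0 := abs_ne_zero.mpr hr
      field_simp
  rwa [hval] at h

private lemma df_deriv_shift {e : ℝ} (he : 1 < e) (α r : ℝ) :
    HasDerivAt (fun z : ℝ => |z - α| ^ e) (e * |r - α| ^ e / (r - α)) r := by
  have h := (df_deriv he (r - α)).comp r ((hasDerivAt_id r).sub_const α)
  simpa [Function.comp_def] using h

private lemma cont_dd {e : ℝ} (he : 1 < e) : Continuous fun r : ℝ => e * |r| ^ e / r := by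
  rw [continuous_iff_continuousAt]
  intro r
  rcases eq_or_ne r 0 with rfl | hr
  · have h0 : (fun r : ℝ => e * |r| ^ e / r) 0 = 0 := by simp
    unfold ContinuousAt
    rw [h0]
    apply squeeze_zero_norm (a := fun z : ℝ => e * |z| ^ (e-1))
    · intro z
      rcases eq_or_ne z 0 with rfl | hz
      · simp [Real.zero_rpow (by linarith : e - 1 ≠ 0)]
      · rw [Real.rpow_sub (abs_pos.mpr hz) e 1, Real.rpow_one]
        rw [norm_div, norm_mul, Real.norm_eq_abs, Real.norm_eq_abs, Real.norm_eq_abs,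
          abs_of_nonneg (Real.rpow_nonneg (abs_nonneg z) e), abs_of_pos (by linarith : (0:ℝ) < e)]
        rw [mul_div_assoc]
    · have hc : Tendsto (fun z : ℝ => e * |z| ^ (e-1)) (𝓝 0) (𝓝 (e * |(0:ℝ)| ^ (e-1))) :=
        (continuous_const.mul (contAR (by linarith))).tendsto 0
      simpa [Real.zero_rpow (by linarith : e - 1 ≠ 0)] using hc
  · exact ((continuous_const.mul (contAR (by linarith))).continuousAt).div continuousAt_id hr

private lemma df_key_integrable {σ : Set (ℝ × ℝ)} (ho : IsOpen σ) (hbd : Bornology.IsBounded σ)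
    {f G : ℝ × ℝ → ℝ} (hf : ContinuousOn f σ) (hG : Continuous G)
    (hle : ∀ p ∈ σ, ‖f p‖ ≤ G p) : IntegrableOn f σ volume := by
  obtain ⟨C, hC⟩ := (hbd.isCompact_closure).exists_bound_of_continuousOn hG.continuousOn
  refine ⟨hf.aestronglyMeasurable ho.measurableSet, ?_⟩
  apply MeasureTheory.HasFiniteIntegral.restrict_of_bounded (C := C) (hbd.measure_lt_top)
  filter_upwards [ae_restrict_mem ho.measurableSet] with p hp
  exact (hle p hp).trans ((le_abs_self _).trans (hC p (subset_closure hp)))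

private noncomputable def W (e1 e2 e3 e4 e5 e6 e7 x y : ℝ) (p : ℝ × ℝ) : ℝ :=
  |p.1| ^ e1 * |p.1 - 1| ^ e2 * |p.1 - x| ^ e3 * |p.2| ^ e4 * |p.2 - 1| ^ e5 *
    |p.2 - y| ^ e6 * |p.1 - p.2| ^ e7

private lemma contW {e1 e2 e3 e4 e5 e6 e7 : ℝ} (x y : ℝ)
    (h1 : 0 ≤ e1) (h2 : 0 ≤ e2) (h3 : 0 ≤ e3) (h4 : 0 ≤ e4) (h5 : 0 ≤ e5) (h6 : 0 ≤ e6)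
    (h7 : 0 ≤ e7) : Continuous (W e1 e2 e3 e4 e5 e6 e7 x y) := by
  unfold W
  exact (((((((contAR h1).comp continuous_fst).mul
    ((contAR h2).comp (continuous_fst.sub continuous_const))).mul
    ((contAR h3).comp (continuous_fst.sub continuous_const))).mul
    ((contAR h4).comp continuous_snd)).mul
    ((contAR h5).comp (continuous_snd.sub continuous_const))).mul
    ((contAR h6).comp (continuous_snd.sub continuous_const))).mul
    ((contAR h7).comp (continuous_fst.sub continuous_snd))

private lemma dfWeight_eq_W (a b c g x y : ℝ) :
    dfWeight a b c g x y = W a b c a b c g x y := by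
  funext p; unfold dfWeight W; ring

private lemma df_bound24 (a b c g x y : ℝ) (p : ℝ × ℝ) (hA : p.1 - 1 ≠ 0) (hB : p.2 ≠ 0)
    (K : ℝ) : ‖dfWeight a b c g x y p * (K / ((p.1 - 1) * p.2))‖
      ≤ |K| * W a (b-1) c (a-1) b c g x y p := by
  have hW : (0:ℝ) ≤ W a b c a b c g x y p := by unfold W; positivity
  apply le_of_eq
  rw [dfWeight_eq_W, Real.norm_eq_abs, abs_mul, abs_of_nonneg hW, abs_div, abs_mul]
  unfold W
  rw [Real.rpow_sub (abs_pos.mpr hA) b 1, Real.rpow_sub (abs_pos.mpr hB) a 1,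
    Real.rpow_one, Real.rpow_one]
  have hA' : |p.1 - 1| ≠ 0 := abs_ne_zero.mpr hA
  have hB' : |p.2| ≠ 0 := abs_ne_zero.mpr hB
  field_simp

private lemma df_bound26 (a b c g x y : ℝ) (p : ℝ × ℝ) (hA : p.1 - 1 ≠ 0) (hB : p.2 - y ≠ 0)
    (K : ℝ) : ‖dfWeight a b c g x y p * (K / ((p.1 - 1) * (p.2 - y)))‖
      ≤ |K| * W a (b-1) c a b (c-1) g x y p := by
  have hW : (0:ℝ) ≤ W a b c a b c g x y p := by unfold W; positivity
  apply le_of_eq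
  rw [dfWeight_eq_W, Real.norm_eq_abs, abs_mul, abs_of_nonneg hW, abs_div, abs_mul]
  unfold W
  rw [Real.rpow_sub (abs_pos.mpr hA) b 1, Real.rpow_sub (abs_pos.mpr hB) c 1,
    Real.rpow_one, Real.rpow_one]
  have hA' : |p.1 - 1| ≠ 0 := abs_ne_zero.mpr hA
  have hB' : |p.2 - y| ≠ 0 := abs_ne_zero.mpr hB
  field_simp

private lemma df_bound27 (a b c g x y : ℝ) (p : ℝ × ℝ) (hA : p.1 - 1 ≠ 0)
    (hB : p.1 - p.2 ≠ 0) (K : ℝ) : ‖dfWeight a b c g x y p * (K / ((p.1 - 1) * (p.1 - p.2)))‖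
      ≤ |K| * W a (b-1) c a b c (g-1) x y p := by
  have hW : (0:ℝ) ≤ W a b c a b c g x y p := by unfold W; positivity
  apply le_of_eq
  rw [dfWeight_eq_W, Real.norm_eq_abs, abs_mul, abs_of_nonneg hW, abs_div, abs_mul]
  unfold W
  rw [Real.rpow_sub (abs_pos.mpr hA) b 1, Real.rpow_sub (abs_pos.mpr hB) g 1,
    Real.rpow_one, Real.rpow_one]
  have hA' : |p.1 - 1| ≠ 0 := abs_ne_zero.mpr hA
  have hB' : |p.1 - p.2| ≠ 0 := abs_ne_zero.mpr hB
  field_simp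

private lemma df_bound57 (a b c g x y : ℝ) (p : ℝ × ℝ) (hA : p.2 - 1 ≠ 0)
    (hB : p.1 - p.2 ≠ 0) (K : ℝ) : ‖dfWeight a b c g x y p * (K / ((p.2 - 1) * (p.1 - p.2)))‖
      ≤ |K| * W a b c a (b-1) c (g-1) x y p := by
  have hW : (0:ℝ) ≤ W a b c a b c g x y p := by unfold W; positivity
  apply le_of_eq
  rw [dfWeight_eq_W, Real.norm_eq_abs, abs_mul, abs_of_nonneg hW, abs_div, abs_mul]
  unfold W
  rw [Real.rpow_sub (abs_pos.mpr hA) b 1, Real.rpow_sub (abs_pos.mpr hB) g 1,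
    Real.rpow_one, Real.rpow_one]
  have hA' : |p.2 - 1| ≠ 0 := abs_ne_zero.mpr hA
  have hB' : |p.1 - p.2| ≠ 0 := abs_ne_zero.mpr hB
  field_simp

private lemma df_bound25 (a b c g x y : ℝ) (p : ℝ × ℝ) (hA : p.1 - 1 ≠ 0) (hB : p.2 - 1 ≠ 0)
    (K : ℝ) : ‖dfWeight a b c g x y p * (K / ((p.1 - 1) * (p.2 - 1)))‖
      ≤ |K| * W a (b-1) c a (b-1) c g x y p := by
  have hW : (0:ℝ) ≤ W a b c a b c g x y p := by unfold W; positivity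
  apply le_of_eq
  rw [dfWeight_eq_W, Real.norm_eq_abs, abs_mul, abs_of_nonneg hW, abs_div, abs_mul]
  unfold W
  rw [Real.rpow_sub (abs_pos.mpr hA) b 1, Real.rpow_sub (abs_pos.mpr hB) b 1,
    Real.rpow_one, Real.rpow_one]
  have hA' : |p.1 - 1| ≠ 0 := abs_ne_zero.mpr hA
  have hB' : |p.2 - 1| ≠ 0 := abs_ne_zero.mpr hB
  field_simp

private noncomputable def Dfull (a b c g x y t s : ℝ) : ℝ :=
  (|t| ^ a * |t - 1| ^ b * |t - x| ^ c) *
    (a * |s| ^ a / s * (|s - 1| ^ b * (|s - y| ^ c * |s - t| ^ g)) +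
     |s| ^ a * (b * |s - 1| ^ b / (s - 1) * (|s - y| ^ c * |s - t| ^ g) +
       |s - 1| ^ b * (c * |s - y| ^ c / (s - y) * |s - t| ^ g +
         |s - y| ^ c * (g * |s - t| ^ g / (s - t)))))

private lemma df_psi_eq (a b c g x y t : ℝ) :
    (fun s : ℝ => dfWeight a b c g x y (t, s)) = fun s : ℝ =>
      (|t| ^ a * |t - 1| ^ b * |t - x| ^ c) *
        (|s| ^ a * (|s - 1| ^ b * (|s - y| ^ c * |s - t| ^ g))) := by
  funext s
  simp only [dfWeight]
  rw [abs_sub_comm t s]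
  ring

private lemma Dfull_hasDeriv {a b c g : ℝ} (ha : 1 < a) (hb : 1 < b) (hc : 1 < c) (hg : 1 < g)
    (x y t s : ℝ) :
    HasDerivAt (fun s : ℝ => dfWeight a b c g x y (t, s)) (Dfull a b c g x y t s) s := by
  rw [df_psi_eq]
  have H := HasDerivAt.const_mul (|t| ^ a * |t - 1| ^ b * |t - x| ^ c)
    ((df_deriv ha s).mul ((df_deriv_shift hb 1 s).mul
      ((df_deriv_shift hc y s).mul (df_deriv_shift hg t s))))
  exact H

private lemma Dfull_cont {a b c g : ℝ} (ha : 1 < a) (hb : 1 < b) (hc : 1 < c) (hg : 1 < g)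
    (x y t : ℝ) : Continuous (Dfull a b c g x y t) := by
  have f1c : Continuous fun s : ℝ => |s| ^ a := contAR (by linarith)
  have f2c : Continuous fun s : ℝ => |s - 1| ^ b :=
    (contAR (show (0:ℝ) ≤ b by linarith)).comp (continuous_id.sub continuous_const)
  have f3c : Continuous fun s : ℝ => |s - y| ^ c :=
    (contAR (show (0:ℝ) ≤ c by linarith)).comp (continuous_id.sub continuous_const)
  have f4c : Continuous fun s : ℝ => |s - t| ^ g :=
    (contAR (show (0:ℝ) ≤ g by linarith)).comp (continuous_id.sub continuous_const)
  have d1c : Continuous fun s : ℝ => a * |s| ^ a / s := cont_dd ha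
  have d2c : Continuous fun s : ℝ => b * |s - 1| ^ b / (s - 1) :=
    (cont_dd hb).comp (continuous_id.sub continuous_const)
  have d3c : Continuous fun s : ℝ => c * |s - y| ^ c / (s - y) :=
    (cont_dd hc).comp (continuous_id.sub continuous_const)
  have d4c : Continuous fun s : ℝ => g * |s - t| ^ g / (s - t) :=
    (cont_dd hg).comp (continuous_id.sub continuous_const)
  unfold Dfull
  exact continuous_const.mul ((d1c.mul (f2c.mul (f3c.mul f4c))).add
    (f1c.mul ((d2c.mul (f3c.mul f4c)).add
      (f2c.mul ((d3c.mul f4c).add (f3c.mul d4c))))))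

private lemma df_pointwise (a b c g x y t s : ℝ) (ht1 : t ≠ 1) (hs0 : s ≠ 0) (hs1 : s ≠ 1)
    (hsy : s ≠ y) (hst : t ≠ s) :
    a * b * (dfWeight a b c g x y (t, s) * (1 / ((t - 1) * s))) +
      (dfWeight a b c g x y (t, s) * h2 b c y (t, s) +
        dfWeight a b c g x y (t, s) * h6 b g (t, s) +
        dfWeight a b c g x y (t, s) * h7 b g (t, s)) =
    (b / (t - 1)) * Dfull a b c g x y t s := by
  have n1 : t - 1 ≠ 0 := sub_ne_zero.mpr ht1
  have n2 : s - 1 ≠ 0 := sub_ne_zero.mpr hs1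
  have n3 : s - y ≠ 0 := sub_ne_zero.mpr hsy
  have n4 : t - s ≠ 0 := sub_ne_zero.mpr hst
  have n5 : s - t ≠ 0 := fun h => n4 (by linarith)
  simp only [dfWeight, h2, h6, h7, Dfull]
  rw [abs_sub_comm t s]
  field_simp
  ring

private lemma df_chamber (x y : ℝ) (σ : Set (ℝ × ℝ))
    (hcc : ∃ p ∈ dfComplement x y, σ = connectedComponentIn (dfComplement x y) p) :
    ∃ p₀ ∈ dfComplement x y,
      σ = {q : ℝ × ℝ | 0 < q.1 * p₀.1 ∧ 0 < (q.1 - 1) * (p₀.1 - 1) ∧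
        0 < (q.1 - x) * (p₀.1 - x) ∧ 0 < q.2 * p₀.2 ∧ 0 < (q.2 - 1) * (p₀.2 - 1) ∧
        0 < (q.2 - y) * (p₀.2 - y) ∧ 0 < (q.1 - q.2) * (p₀.1 - p₀.2)} ∧
      IsOpen σ ∧ Convex ℝ σ ∧ σ ⊆ dfComplement x y := by
  obtain ⟨p₀, hp₀, hσcc⟩ := hcc
  have hp₀' := hp₀
  obtain ⟨n1, n2, n3, n4, n5, n6, n7⟩ := hp₀'
  set C : Set (ℝ × ℝ) := {q : ℝ × ℝ | 0 < q.1 * p₀.1 ∧ 0 < (q.1 - 1) * (p₀.1 - 1) ∧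
    0 < (q.1 - x) * (p₀.1 - x) ∧ 0 < q.2 * p₀.2 ∧ 0 < (q.2 - 1) * (p₀.2 - 1) ∧
    0 < (q.2 - y) * (p₀.2 - y) ∧ 0 < (q.1 - q.2) * (p₀.1 - p₀.2)} with hCdef
  have hCopen : IsOpen C := by
    refine IsOpen.and (isOpen_lt continuous_const (by fun_prop))
      (IsOpen.and (isOpen_lt continuous_const (by fun_prop))
      (IsOpen.and (isOpen_lt continuous_const (by fun_prop))
      (IsOpen.and (isOpen_lt continuous_const (by fun_prop))
      (IsOpen.and (isOpen_lt continuous_const (by fun_prop))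
      (IsOpen.and (isOpen_lt continuous_const (by fun_prop))
      (isOpen_lt continuous_const (by fun_prop)))))))
  have key2 : ∀ u v : ℝ, 0 ≤ u → 0 ≤ v → u + v = 1 → ∀ A B : ℝ, 0 < A → 0 < B →
      0 < u * A + v * B := by
    intro u v hu hv huv A B hA hB
    rcases hu.eq_or_lt with h | h
    · have hv1 : v = 1 := by linarith
      rw [← h, hv1]; simpa using hB
    · exact add_pos_of_pos_of_nonneg (mul_pos h hA) (mul_nonneg hv hB.le)
  have hCconv : Convex ℝ C := by
    intro q hq r hr u v hu hv huv
    obtain ⟨hq1, hq2, hq3, hq4, hq5, hq6, hq7⟩ := hq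
    obtain ⟨hr1, hr2, hr3, hr4, hr5, hr6, hr7⟩ := hr
    have hfst : (u • q + v • r).1 = u * q.1 + v * r.1 := rfl
    have hsnd : (u • q + v • r).2 = u * q.2 + v * r.2 := rfl
    have hv' : v = 1 - u := by linarith
    refine ⟨?_, ?_, ?_, ?_, ?_, ?_, ?_⟩
    · rw [hfst]
      have h := key2 u v hu hv huv _ _ hq1 hr1
      have e : (u * q.1 + v * r.1) * p₀.1 = u * (q.1 * p₀.1) + v * (r.1 * p₀.1) := by ring
      rw [e]; exact h
    · rw [hfst]
      have h := key2 u v hu hv huv _ _ hq2 hr2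
      have e : (u * q.1 + v * r.1 - 1) * (p₀.1 - 1)
          = u * ((q.1 - 1) * (p₀.1 - 1)) + v * ((r.1 - 1) * (p₀.1 - 1)) := by
        rw [hv']; ring
      rw [e]; exact h
    · rw [hfst]
      have h := key2 u v hu hv huv _ _ hq3 hr3
      have e : (u * q.1 + v * r.1 - x) * (p₀.1 - x)
          = u * ((q.1 - x) * (p₀.1 - x)) + v * ((r.1 - x) * (p₀.1 - x)) := by
        rw [hv']; ring
      rw [e]; exact h
    · rw [hsnd]
      have h := key2 u v hu hv huv _ _ hq4 hr4
      have e : (u * q.2 + v * r.2) * p₀.2 = u * (q.2 * p₀.2) + v * (r.2 * p₀.2) := by ring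
      rw [e]; exact h
    · rw [hsnd]
      have h := key2 u v hu hv huv _ _ hq5 hr5
      have e : (u * q.2 + v * r.2 - 1) * (p₀.2 - 1)
          = u * ((q.2 - 1) * (p₀.2 - 1)) + v * ((r.2 - 1) * (p₀.2 - 1)) := by
        rw [hv']; ring
      rw [e]; exact h
    · rw [hsnd]
      have h := key2 u v hu hv huv _ _ hq6 hr6
      have e : (u * q.2 + v * r.2 - y) * (p₀.2 - y)
          = u * ((q.2 - y) * (p₀.2 - y)) + v * ((r.2 - y) * (p₀.2 - y)) := by
        rw [hv']; ring
      rw [e]; exact h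
    · rw [hfst, hsnd]
      have h := key2 u v hu hv huv _ _ hq7 hr7
      have e : (u * q.1 + v * r.1 - (u * q.2 + v * r.2)) * (p₀.1 - p₀.2)
          = u * ((q.1 - q.2) * (p₀.1 - p₀.2)) + v * ((r.1 - r.2) * (p₀.1 - p₀.2)) := by ring
      rw [e]; exact h
  have hp₀C : p₀ ∈ C :=
    ⟨mul_self_pos.mpr n1, mul_self_pos.mpr (sub_ne_zero.mpr n2),
      mul_self_pos.mpr (sub_ne_zero.mpr n3), mul_self_pos.mpr n4,
      mul_self_pos.mpr (sub_ne_zero.mpr n5), mul_self_pos.mpr (sub_ne_zero.mpr n6),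
      mul_self_pos.mpr (sub_ne_zero.mpr n7)⟩
  have hCsub : C ⊆ dfComplement x y := by
    intro q hq
    obtain ⟨m1, m2, m3, m4, m5, m6, m7⟩ := hq
    have ne_of : ∀ A B : ℝ, 0 < A * B → A ≠ 0 := by
      intro A B h hA
      rw [hA, zero_mul] at h
      exact lt_irrefl 0 h
    exact ⟨ne_of _ _ m1, sub_ne_zero.mp (ne_of _ _ m2), sub_ne_zero.mp (ne_of _ _ m3),
      ne_of _ _ m4, sub_ne_zero.mp (ne_of _ _ m5), sub_ne_zero.mp (ne_of _ _ m6),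
      sub_ne_zero.mp (ne_of _ _ m7)⟩
  have hEq : σ = C := by
    apply Set.Subset.antisymm
    · set V : Set (ℝ × ℝ) := {q : ℝ × ℝ | q.1 * p₀.1 < 0 ∨ (q.1 - 1) * (p₀.1 - 1) < 0 ∨
        (q.1 - x) * (p₀.1 - x) < 0 ∨ q.2 * p₀.2 < 0 ∨ (q.2 - 1) * (p₀.2 - 1) < 0 ∨
        (q.2 - y) * (p₀.2 - y) < 0 ∨ (q.1 - q.2) * (p₀.1 - p₀.2) < 0} with hVdef
      have hVopen : IsOpen V := by
        rw [hVdef]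
        simp only [Set.setOf_or]
        refine IsOpen.union (isOpen_lt (by fun_prop) continuous_const)
          (IsOpen.union (isOpen_lt (by fun_prop) continuous_const)
          (IsOpen.union (isOpen_lt (by fun_prop) continuous_const)
          (IsOpen.union (isOpen_lt (by fun_prop) continuous_const)
          (IsOpen.union (isOpen_lt (by fun_prop) continuous_const)
          (IsOpen.union (isOpen_lt (by fun_prop) continuous_const)
          (isOpen_lt (by fun_prop) continuous_const))))))
      have hsub : dfComplement x y ⊆ C ∪ V := by
        intro q hq
        obtain ⟨m1, m2, m3, m4, m5, m6, m7⟩ := hq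
        rcases lt_or_ge 0 (q.1 * p₀.1) with h1 | h1
        swap
        · exact Or.inr (Or.inl (lt_of_le_of_ne h1 (mul_ne_zero m1 n1)))
        rcases lt_or_ge 0 ((q.1 - 1) * (p₀.1 - 1)) with h2 | h2
        swap
        · exact Or.inr (Or.inr (Or.inl (lt_of_le_of_ne h2
            (mul_ne_zero (sub_ne_zero.mpr m2) (sub_ne_zero.mpr n2)))))
        rcases lt_or_ge 0 ((q.1 - x) * (p₀.1 - x)) with h3 | h3
        swap
        · exact Or.inr (Or.inr (Or.inr (Or.inl (lt_of_le_of_ne h3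
            (mul_ne_zero (sub_ne_zero.mpr m3) (sub_ne_zero.mpr n3))))))
        rcases lt_or_ge 0 (q.2 * p₀.2) with h4 | h4
        swap
        · exact Or.inr (Or.inr (Or.inr (Or.inr (Or.inl (lt_of_le_of_ne h4
            (mul_ne_zero m4 n4))))))
        rcases lt_or_ge 0 ((q.2 - 1) * (p₀.2 - 1)) with h5 | h5
        swap
        · exact Or.inr (Or.inr (Or.inr (Or.inr (Or.inr (Or.inl (lt_of_le_of_ne h5
            (mul_ne_zero (sub_ne_zero.mpr m5) (sub_ne_zero.mpr n5))))))))
        rcases lt_or_ge 0 ((q.2 - y) * (p₀.2 - y)) with h6 | h6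
        swap
        · exact Or.inr (Or.inr (Or.inr (Or.inr (Or.inr (Or.inr (Or.inl (lt_of_le_of_ne h6
            (mul_ne_zero (sub_ne_zero.mpr m6) (sub_ne_zero.mpr n6)))))))))
        rcases lt_or_ge 0 ((q.1 - q.2) * (p₀.1 - p₀.2)) with h7 | h7
        swap
        · exact Or.inr (Or.inr (Or.inr (Or.inr (Or.inr (Or.inr (Or.inr (lt_of_le_of_ne h7
            (mul_ne_zero (sub_ne_zero.mpr m7) (sub_ne_zero.mpr n7)))))))))
        exact Or.inl ⟨h1, h2, h3, h4, h5, h6, h7⟩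
      have hdisj : Disjoint C V := by
        rw [Set.disjoint_left]
        intro q hqC hqV
        obtain ⟨c1, c2, c3, c4, c5, c6, c7⟩ := hqC
        rcases hqV with h | h | h | h | h | h | h <;> linarith
      have hpre : IsPreconnected σ := by
        rw [hσcc]; exact isPreconnected_connectedComponentIn
      have hσsubU : σ ⊆ dfComplement x y := by
        rw [hσcc]; exact connectedComponentIn_subset _ _
      refine hpre.subset_left_of_subset_union hCopen hVopen hdisj (hσsubU.trans hsub) ?_
      exact ⟨p₀, by rw [hσcc]; exact mem_connectedComponentIn ⟨n1,n2,n3,n4,n5,n6,n7⟩, hp₀C⟩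
    · rw [hσcc]
      exact hCconv.isPreconnected.subset_connectedComponentIn hp₀C hCsub
  exact ⟨p₀, hp₀, hEq, by rw [hEq]; exact hCopen, by rw [hEq]; exact hCconv,
    by rw [hEq]; exact hCsub⟩

private lemma df_master (x y a b c g : ℝ) (ha : 1 < a) (hb : 1 < b) (hc : 1 < c) (hg : 1 < g)
    (p₀ : ℝ × ℝ) (hp₀ : p₀ ∈ dfComplement x y)
    (σ : Set (ℝ × ℝ)) (hbd : Bornology.IsBounded σ)
    (hσopen : IsOpen σ) (hσconv : Convex ℝ σ) (hσsub : σ ⊆ dfComplement x y)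
    (hσeq : σ = {q : ℝ × ℝ | 0 < q.1 * p₀.1 ∧ 0 < (q.1 - 1) * (p₀.1 - 1) ∧
      0 < (q.1 - x) * (p₀.1 - x) ∧ 0 < q.2 * p₀.2 ∧ 0 < (q.2 - 1) * (p₀.2 - 1) ∧
      0 < (q.2 - y) * (p₀.2 - y) ∧ 0 < (q.1 - q.2) * (p₀.1 - p₀.2)})
    (iF : IntegrableOn (fun p : ℝ × ℝ =>
      a * b * (dfWeight a b c g x y p * (1 / ((p.1 - 1) * p.2))) +
        (dfWeight a b c g x y p * h2 b c y p + dfWeight a b c g x y p * h6 b g p +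
          dfWeight a b c g x y p * h7 b g p)) σ volume) :
    (∫ p in σ, (a * b * (dfWeight a b c g x y p * (1 / ((p.1 - 1) * p.2))) +
      (dfWeight a b c g x y p * h2 b c y p + dfWeight a b c g x y p * h6 b g p +
        dfWeight a b c g x y p * h7 b g p))) = 0 := by
  obtain ⟨n1, n2, n3, n4, n5, n6, n7⟩ := hp₀
  set F : ℝ × ℝ → ℝ := fun p =>
    a * b * (dfWeight a b c g x y p * (1 / ((p.1 - 1) * p.2))) +
      (dfWeight a b c g x y p * h2 b c y p + dfWeight a b c g x y p * h6 b g p +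
        dfWeight a b c g x y p * h7 b g p) with hF
  have hmem : ∀ q : ℝ × ℝ, q ∈ σ ↔ (0 < q.1 * p₀.1 ∧ 0 < (q.1 - 1) * (p₀.1 - 1) ∧
      0 < (q.1 - x) * (p₀.1 - x) ∧ 0 < q.2 * p₀.2 ∧ 0 < (q.2 - 1) * (p₀.2 - 1) ∧
      0 < (q.2 - y) * (p₀.2 - y) ∧ 0 < (q.1 - q.2) * (p₀.1 - p₀.2)) := by
    intro q; rw [hσeq]; exact Iff.rfl
  obtain ⟨R, hR⟩ := isBounded_iff_forall_norm_le.mp hbd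
  -- the inner integrals all vanish
  have hinner : ∀ t : ℝ, (∫ s : ℝ, (σ.indicator F) (t, s)) = 0 := by
    intro t
    have hopS : IsOpen {s : ℝ | (t, s) ∈ σ} := hσopen.preimage (Continuous.prodMk_right t)
    have hindEq : ∀ s : ℝ, σ.indicator F (t, s)
        = ({s : ℝ | (t, s) ∈ σ}).indicator (fun s => F (t, s)) s := by
      intro s
      by_cases h : (t, s) ∈ σ
      · rw [Set.indicator_of_mem h F]
        exact (Set.indicator_of_mem (show s ∈ {s : ℝ | (t, s) ∈ σ} from h) (fun s => F (t, s))).symm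
      · rw [Set.indicator_of_notMem h F]
        exact (Set.indicator_of_notMem (show s ∉ {s : ℝ | (t, s) ∈ σ} from h) (fun s => F (t, s))).symm
    simp only [hindEq]
    rw [integral_indicator hopS.measurableSet]
    set S : Set ℝ := {s : ℝ | (t, s) ∈ σ} with hSdef
    rcases Set.eq_empty_or_nonempty S with hS | ⟨s₁, hs₁⟩
    · rw [hS]; simp
    · have hs₁' : ((t : ℝ), s₁) ∈ σ := hs₁
      obtain ⟨c1, c2, c3, c4, c5, c6, c7⟩ := (hmem _).mp hs₁'
      have hSconv : Convex ℝ S := by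
        intro z1 hz1 z2 hz2 u v hu hv huv
        have h := hσconv hz1 hz2 hu hv huv
        have he : u • ((t : ℝ), z1) + v • ((t : ℝ), z2) = (u * t + v * t, u * z1 + v * z2) :=
          rfl
        have ht : u * t + v * t = t := by
          rw [show v = 1 - u from by linarith]; ring
        rw [he, ht] at h
        exact h
      have habs : ∀ z ∈ S, |z| ≤ R := by
        intro z hz
        have h1 : ‖(((t : ℝ), z) : ℝ × ℝ).2‖ ≤ ‖(((t : ℝ), z) : ℝ × ℝ)‖ := norm_snd_le _
        have h2 := hR _ hz
        simpa using le_trans h1 h2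
      have hbddA : BddAbove S := ⟨R, fun z hz => (abs_le.mp (habs z hz)).2⟩
      have hbddB : BddBelow S := ⟨-R, fun z hz => (abs_le.mp (habs z hz)).1⟩
      have hSne : S.Nonempty := ⟨s₁, hs₁⟩
      set l := sInf S with hldef
      set u := sSup S with hudef
      have hIoo : S = Ioo l u := by
        apply Subset.antisymm
        · intro z hz
          obtain ⟨ε, hε, hball⟩ := Metric.isOpen_iff.mp hopS z hz
          have hz1 : z + ε / 2 ∈ S := by
            apply hball
            rw [Metric.mem_ball, Real.dist_eq, show z + ε / 2 - z = ε / 2 from by ring,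
              abs_of_pos (by linarith)]
            linarith
          have hz2 : z - ε / 2 ∈ S := by
            apply hball
            rw [Metric.mem_ball, Real.dist_eq, show z - ε / 2 - z = -(ε / 2) from by ring,
              abs_neg, abs_of_pos (by linarith)]
            linarith
          exact ⟨lt_of_le_of_lt (csInf_le hbddB hz2) (by linarith),
            lt_of_lt_of_le (by linarith) (le_csSup hbddA hz1)⟩
        · intro z hz
          obtain ⟨w1, hw1, hw1lt⟩ := exists_lt_of_csInf_lt hSne hz.1
          obtain ⟨w2, hw2, hw2gt⟩ := exists_lt_of_lt_csSup hSne hz.2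
          exact hSconv.ordConnected.out hw1 hw2 ⟨hw1lt.le, hw2gt.le⟩
      have hlu : l < u := by
        have h := hIoo ▸ hs₁
        exact lt_trans h.1 h.2
      have hzero_at : ∀ w : ℝ, w ∈ closure S → w ∉ S → dfWeight a b c g x y (t, w) = 0 := by
        intro w hwc hwn
        have hge : ∀ f : ℝ → ℝ, Continuous f → (∀ z ∈ S, 0 < f z) → 0 ≤ f w := by
          intro f hf hpos
          have hsub2 : closure S ⊆ f ⁻¹' (Ici 0) :=
            closure_minimal (fun z hz => (hpos z hz).le) (isClosed_Ici.preimage hf)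
          exact hsub2 hwc
        have g4 := hge (fun z => z * p₀.2) (by fun_prop)
          (fun z hz => ((hmem _).mp hz).2.2.2.1)
        have g5 := hge (fun z => (z - 1) * (p₀.2 - 1)) (by fun_prop)
          (fun z hz => ((hmem _).mp hz).2.2.2.2.1)
        have g6 := hge (fun z => (z - y) * (p₀.2 - y)) (by fun_prop)
          (fun z hz => ((hmem _).mp hz).2.2.2.2.2.1)
        have g7 := hge (fun z => (t - z) * (p₀.1 - p₀.2)) (by fun_prop)
          (fun z hz => ((hmem _).mp hz).2.2.2.2.2.2)
        have hcases : w = 0 ∨ w = 1 ∨ w = y ∨ w = t := by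
          by_contra hcon
          push_neg at hcon
          obtain ⟨e0, e1, ey, et⟩ := hcon
          apply hwn
          show ((t : ℝ), w) ∈ σ
          apply (hmem _).mpr
          refine ⟨c1, c2, c3, ?_, ?_, ?_, ?_⟩
          · exact lt_of_le_of_ne g4 (Ne.symm (mul_ne_zero e0 n4))
          · exact lt_of_le_of_ne g5 (Ne.symm (mul_ne_zero (sub_ne_zero.mpr e1) (sub_ne_zero.mpr n5)))
          · exact lt_of_le_of_ne g6 (Ne.symm (mul_ne_zero (sub_ne_zero.mpr ey) (sub_ne_zero.mpr n6)))
          · exact lt_of_le_of_ne g7 (Ne.symm (mul_ne_zero (sub_ne_zero.mpr (Ne.symm et)) (sub_ne_zero.mpr n7)))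
        rcases hcases with rfl | rfl | rfl | rfl
        · simp [dfWeight, Real.zero_rpow (show a ≠ 0 by linarith)]
        · simp [dfWeight, Real.zero_rpow (show b ≠ 0 by linarith)]
        · simp [dfWeight, Real.zero_rpow (show c ≠ 0 by linarith)]
        · simp [dfWeight, Real.zero_rpow (show g ≠ 0 by linarith)]
      have hu_not : u ∉ S := by
        rw [hIoo]; exact fun h => lt_irrefl u h.2
      have hl_not : l ∉ S := by
        rw [hIoo]; exact fun h => lt_irrefl l h.1
      have hΨu := hzero_at u (csSup_mem_closure hSne hbddA) hu_not
      have hΨl := hzero_at l (csInf_mem_closure hSne hbddB) hl_not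
      calc ∫ s in S, F (t, s) = ∫ s in Ioo l u, F (t, s) := by rw [← hIoo]
        _ = ∫ s in Ioo l u, (b / (t - 1)) * Dfull a b c g x y t s := by
            apply setIntegral_congr_fun measurableSet_Ioo
            intro s hs
            have hsS : s ∈ S := by rw [hIoo]; exact hs
            have hmm := hσsub hsS
            exact df_pointwise a b c g x y t s hmm.2.1 hmm.2.2.2.1 hmm.2.2.2.2.1
              hmm.2.2.2.2.2.1 hmm.2.2.2.2.2.2
        _ = (b / (t - 1)) * ∫ s in Ioo l u, Dfull a b c g x y t s := integral_const_mul _ _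
        _ = 0 := by
            rw [← integral_Ioc_eq_integral_Ioo, ← intervalIntegral.integral_of_le hlu.le,
              intervalIntegral.integral_eq_sub_of_hasDerivAt
                (fun s _ => Dfull_hasDeriv ha hb hc hg x y t s)
                ((Dfull_cont ha hb hc hg x y t).intervalIntegrable l u),
              hΨu, hΨl]
            ring
  -- Fubini
  rw [← integral_indicator hσopen.measurableSet]
  have hInd : Integrable (σ.indicator F) (volume : Measure (ℝ × ℝ)) :=
    iF.integrable_indicator hσopen.measurableSet
  rw [show (volume : Measure (ℝ × ℝ)) = Measure.prod volume volume from rfl]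
  rw [MeasureTheory.integral_prod _ hInd]
  simp only [hinner]
  simp

/-- the cohomological expansion ω₂₄ ∼ −(1/(ab))(η₂+η₆+η₇)
integrated over a bounded chamber `σ` of the Dotsenko–Fateev arrangement. -/
theorem expansion_omega24 (x y a b c g : ℝ)
    (hx0 : x ≠ 0) (hx1 : x ≠ 1) (hy0 : y ≠ 0) (hy1 : y ≠ 1) (hxy : x ≠ y)
    (ha : 1 < a) (hb : 1 < b) (hc : 1 < c) (hg : 1 < g)
    (σ : Set (ℝ × ℝ)) (hbd : Bornology.IsBounded σ)
    (hcc : ∃ p ∈ dfComplement x y, σ = connectedComponentIn (dfComplement x y) p) :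
    dfInt a b c g x y σ (fun p => 1 / ((p.1 - 1) * p.2)) =
      -(1 / (a * b)) * dfInt a b c g x y σ (fun p => h2 b c y p + h6 b g p + h7 b g p) := by
  obtain ⟨p₀, hp₀, hσeq, hσopen, hσconv, hσsub⟩ := df_chamber x y σ hcc
  have hne : ∀ p ∈ σ, p.1 ≠ 0 ∧ p.1 ≠ 1 ∧ p.1 ≠ x ∧ p.2 ≠ 0 ∧ p.2 ≠ 1 ∧ p.2 ≠ y ∧
      p.1 ≠ p.2 := fun p hp => hσsub hp
  have ha0 : (0:ℝ) ≤ a := by linarith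
  have hb0 : (0:ℝ) ≤ b := by linarith
  have hc0 : (0:ℝ) ≤ c := by linarith
  have hg0 : (0:ℝ) ≤ g := by linarith
  have ha1 : (0:ℝ) ≤ a - 1 := by linarith
  have hb1 : (0:ℝ) ≤ b - 1 := by linarith
  have hc1 : (0:ℝ) ≤ c - 1 := by linarith
  have hg1 : (0:ℝ) ≤ g - 1 := by linarith
  have hΦcont : Continuous (dfWeight a b c g x y) := by
    rw [dfWeight_eq_W]; exact contW x y ha0 hb0 hc0 ha0 hb0 hc0 hg0
  -- integrability of the four pieces
  have iw : IntegrableOn (fun p : ℝ × ℝ => dfWeight a b c g x y p * (1 / ((p.1 - 1) * p.2)))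
      σ volume := by
    refine df_key_integrable hσopen hbd
      (G := fun p => |(1:ℝ)| * W a (b-1) c (a-1) b c g x y p) ?_
      (continuous_const.mul (contW x y ha0 hb1 hc0 ha1 hb0 hc0 hg0)) ?_
    · exact hΦcont.continuousOn.mul (ContinuousOn.div continuousOn_const
        ((by fun_prop : Continuous fun p : ℝ × ℝ => (p.1 - 1) * p.2).continuousOn)
        (fun p hp => mul_ne_zero (sub_ne_zero.mpr (hne p hp).2.1) (hne p hp).2.2.2.1))
    · intro p hp
      exact df_bound24 a b c g x y p (sub_ne_zero.mpr (hne p hp).2.1) (hne p hp).2.2.2.1 1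
  have i2 : IntegrableOn (fun p : ℝ × ℝ => dfWeight a b c g x y p * h2 b c y p) σ volume := by
    refine df_key_integrable hσopen hbd
      (G := fun p => |b * c| * W a (b-1) c a b (c-1) g x y p) ?_
      (continuous_const.mul (contW x y ha0 hb1 hc0 ha0 hb0 hc1 hg0)) ?_
    · exact hΦcont.continuousOn.mul (ContinuousOn.div continuousOn_const
        ((by fun_prop : Continuous fun p : ℝ × ℝ => (p.1 - 1) * (p.2 - y)).continuousOn)
        (fun p hp => mul_ne_zero (sub_ne_zero.mpr (hne p hp).2.1)
          (sub_ne_zero.mpr (hne p hp).2.2.2.2.2.1)))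
    · intro p hp
      exact df_bound26 a b c g x y p (sub_ne_zero.mpr (hne p hp).2.1)
        (sub_ne_zero.mpr (hne p hp).2.2.2.2.2.1) (b * c)
  have i6 : IntegrableOn (fun p : ℝ × ℝ => dfWeight a b c g x y p * h6 b g p) σ volume := by
    refine df_key_integrable hσopen hbd
      (G := fun p => |(-(b * g))| * W a (b-1) c a b c (g-1) x y p
        + |b * g| * W a b c a (b-1) c (g-1) x y p) ?_
      ((continuous_const.mul (contW x y ha0 hb1 hc0 ha0 hb0 hc0 hg1)).add
        (continuous_const.mul (contW x y ha0 hb0 hc0 ha0 hb1 hc0 hg1))) ?_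
    · refine hΦcont.continuousOn.mul (ContinuousOn.sub ?_ ?_)
      · exact ContinuousOn.div continuousOn_const
          ((by fun_prop : Continuous fun p : ℝ × ℝ => (p.1 - 1) * (p.1 - p.2)).continuousOn)
          (fun p hp => mul_ne_zero (sub_ne_zero.mpr (hne p hp).2.1)
            (sub_ne_zero.mpr (hne p hp).2.2.2.2.2.2))
      · exact ContinuousOn.div continuousOn_const
          ((by fun_prop : Continuous fun p : ℝ × ℝ => (p.2 - 1) * (p.1 - p.2)).continuousOn)
          (fun p hp => mul_ne_zero (sub_ne_zero.mpr (hne p hp).2.2.2.2.1)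
            (sub_ne_zero.mpr (hne p hp).2.2.2.2.2.2))
    · intro p hp
      have key : dfWeight a b c g x y p * h6 b g p =
          dfWeight a b c g x y p * ((-(b * g)) / ((p.1 - 1) * (p.1 - p.2))) -
            dfWeight a b c g x y p * ((b * g) / ((p.2 - 1) * (p.1 - p.2))) := by
        simp only [h6]; ring
      rw [key]
      refine (norm_sub_le _ _).trans (add_le_add ?_ ?_)
      · exact df_bound27 a b c g x y p (sub_ne_zero.mpr (hne p hp).2.1)
          (sub_ne_zero.mpr (hne p hp).2.2.2.2.2.2) (-(b * g))
      · exact df_bound57 a b c g x y p (sub_ne_zero.mpr (hne p hp).2.2.2.2.1)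
          (sub_ne_zero.mpr (hne p hp).2.2.2.2.2.2) (b * g)
  have i7 : IntegrableOn (fun p : ℝ × ℝ => dfWeight a b c g x y p * h7 b g p) σ volume := by
    refine df_key_integrable hσopen hbd
      (G := fun p => |b ^ 2| * W a (b-1) c a (b-1) c g x y p
        + |b * g| * W a b c a (b-1) c (g-1) x y p) ?_
      ((continuous_const.mul (contW x y ha0 hb1 hc0 ha0 hb1 hc0 hg0)).add
        (continuous_const.mul (contW x y ha0 hb0 hc0 ha0 hb1 hc0 hg1))) ?_
    · refine hΦcont.continuousOn.mul (ContinuousOn.add ?_ ?_)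
      · exact ContinuousOn.div continuousOn_const
          ((by fun_prop : Continuous fun p : ℝ × ℝ => (p.1 - 1) * (p.2 - 1)).continuousOn)
          (fun p hp => mul_ne_zero (sub_ne_zero.mpr (hne p hp).2.1)
            (sub_ne_zero.mpr (hne p hp).2.2.2.2.1))
      · exact ContinuousOn.div continuousOn_const
          ((by fun_prop : Continuous fun p : ℝ × ℝ => (p.2 - 1) * (p.1 - p.2)).continuousOn)
          (fun p hp => mul_ne_zero (sub_ne_zero.mpr (hne p hp).2.2.2.2.1)
            (sub_ne_zero.mpr (hne p hp).2.2.2.2.2.2))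
    · intro p hp
      have key : dfWeight a b c g x y p * h7 b g p =
          dfWeight a b c g x y p * ((b ^ 2) / ((p.1 - 1) * (p.2 - 1))) +
            dfWeight a b c g x y p * ((b * g) / ((p.2 - 1) * (p.1 - p.2))) := by
        simp only [h7]; ring
      rw [key]
      refine (norm_add_le _ _).trans (add_le_add ?_ ?_)
      · exact df_bound25 a b c g x y p (sub_ne_zero.mpr (hne p hp).2.1)
          (sub_ne_zero.mpr (hne p hp).2.2.2.2.1) (b ^ 2)
      · exact df_bound57 a b c g x y p (sub_ne_zero.mpr (hne p hp).2.2.2.2.1)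
          (sub_ne_zero.mpr (hne p hp).2.2.2.2.2.2) (b * g)
  have iF : IntegrableOn (fun p : ℝ × ℝ =>
      a * b * (dfWeight a b c g x y p * (1 / ((p.1 - 1) * p.2))) +
        (dfWeight a b c g x y p * h2 b c y p + dfWeight a b c g x y p * h6 b g p +
          dfWeight a b c g x y p * h7 b g p)) σ volume :=
    (iw.const_mul (a * b)).add ((i2.add i6).add i7)
  have iwc : IntegrableOn (fun p : ℝ × ℝ =>
      a * b * (dfWeight a b c g x y p * (1 / ((p.1 - 1) * p.2)))) σ volume :=
    iw.const_mul (a * b)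
  have i26 : IntegrableOn (fun p : ℝ × ℝ => dfWeight a b c g x y p * h2 b c y p +
      dfWeight a b c g x y p * h6 b g p) σ volume := i2.add i6
  have i267 : IntegrableOn (fun p : ℝ × ℝ => dfWeight a b c g x y p * h2 b c y p +
      dfWeight a b c g x y p * h6 b g p + dfWeight a b c g x y p * h7 b g p) σ volume :=
    i26.add i7
  have hzero := df_master x y a b c g ha hb hc hg p₀ hp₀ σ hbd hσopen hσconv hσsub hσeq iF
  rw [integral_add iwc i267, integral_add i26 i7, integral_add i2 i6,
    integral_const_mul] at hzero
  simp only [dfInt]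
  have hsplit2 : (∫ p in σ, dfWeight a b c g x y p * (h2 b c y p + h6 b g p + h7 b g p)) =
      (∫ p in σ, dfWeight a b c g x y p * h2 b c y p) +
        (∫ p in σ, dfWeight a b c g x y p * h6 b g p) +
        (∫ p in σ, dfWeight a b c g x y p * h7 b g p) := by
    rw [show (fun p : ℝ × ℝ => dfWeight a b c g x y p * (h2 b c y p + h6 b g p + h7 b g p))
        = fun p : ℝ × ℝ => dfWeight a b c g x y p * h2 b c y p +
            dfWeight a b c g x y p * h6 b g p + dfWeight a b c g x y p * h7 b g p
      from funext fun p => by ring]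
    rw [integral_add i26 i7, integral_add i2 i6]
  rw [hsplit2]
  set I0 := ∫ p in σ, dfWeight a b c g x y p * (1 / ((p.1 - 1) * p.2)) with hI0
  set IA := ∫ p in σ, dfWeight a b c g x y p * h2 b c y p with hIA
  set IB := ∫ p in σ, dfWeight a b c g x y p * h6 b g p with hIB
  set IC := ∫ p in σ, dfWeight a b c g x y p * h7 b g p with hIC
  have hab : a * b ≠ 0 := ne_of_gt (mul_pos (by linarith) (by linarith))
  field_simp
  linarith [hzero]
end

section
/- With the notation of the context, I(w) = −(1/(ab))·I(h₁ + h₇), where w(t,s) = 1/(t(s−1)). -/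
open MeasureTheory

open Set

section Aux

/-- derivative of `|u - r| ^ e` away from `r`, in logarithmic form. -/
lemma hasDerivAt_abs_sub_rpow (r : ℝ) {e : ℝ} (he : 1 < e) {t : ℝ} (ht : t ≠ r) :
    HasDerivAt (fun u : ℝ => |u - r| ^ e) (e * |t - r| ^ e / (t - r)) t := by
  have h0 := (hasDerivAt_abs_rpow (t - r) he).comp t ((hasDerivAt_id t).sub_const r)
  refine h0.congr_deriv ?_
  have hz : t - r ≠ 0 := sub_ne_zero.2 ht
  have habs : |t - r| ≠ 0 := abs_ne_zero.2 hz
  rw [show e - 2 = e - 1 - 1 by ring, Real.rpow_sub_one habs, Real.rpow_sub_one habs]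
  field_simp
  ring_nf; rw [sq_abs]; ring

/-- continuity of `|f u| ^ e` for `0 ≤ e`. -/
lemma continuous_abs_rpow {α : Type*} [TopologicalSpace α] {f : α → ℝ} (hf : Continuous f)
    {e : ℝ} (he : 0 ≤ e) : Continuous fun u => |f u| ^ e := by
  refine continuous_iff_continuousAt.2 fun u => ?_
  exact (Real.continuousAt_rpow_const _ _ (Or.inr he)).comp hf.abs.continuousAt

lemma convex_pos_affine {f : ℝ × ℝ → ℝ}
    (hf : ∀ (u v : ℝ) (q₁ q₂ : ℝ × ℝ), u + v = 1 →
      f (u • q₁ + v • q₂) = u * f q₁ + v * f q₂) :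
    Convex ℝ {q : ℝ × ℝ | 0 < f q} := by
  intro q₁ h₁ q₂ h₂ u v hu hv huv
  simp only [Set.mem_setOf_eq] at *
  rw [hf u v q₁ q₂ huv]
  rcases hu.eq_or_lt with h | h
  · rw [← h]; simp only [zero_mul, zero_add]
    have hv1 : v = 1 := by linarith
    rw [hv1]; linarith
  · have := mul_pos h h₁
    have := mul_nonneg hv h₂.le
    linarith

lemma sign_const_on_preconnected {S : Set (ℝ × ℝ)} (hS : IsPreconnected S)
    {f : ℝ × ℝ → ℝ} (hf : Continuous f) (hne : ∀ z ∈ S, f z ≠ 0)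
    {p q : ℝ × ℝ} (hp : p ∈ S) (hq : q ∈ S) : 0 < f p * f q := by
  by_contra hcon
  push_neg at hcon
  have hlt : f p * f q < 0 :=
    lt_of_le_of_ne hcon (mul_ne_zero (hne p hp) (hne q hq))
  rcases mul_neg_iff.1 hlt with ⟨h1, h2⟩ | ⟨h1, h2⟩
  · obtain ⟨z, hz, hz0⟩ := hS.intermediate_value hq hp hf.continuousOn ⟨h2.le, h1.le⟩
    exact hne z hz hz0
  · obtain ⟨z, hz, hz0⟩ := hS.intermediate_value hp hq hf.continuousOn ⟨h1.le, h2.le⟩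
    exact hne z hz hz0

lemma convex_connectedComponentIn_df (x y : ℝ) {p₀ : ℝ × ℝ} (hp : p₀ ∈ dfComplement x y) :
    Convex ℝ (connectedComponentIn (dfComplement x y) p₀) := by
  obtain ⟨e1, e2, e3, e4, e5, e6, e7⟩ := hp
  set K := dfComplement x y with hK
  set C : Set (ℝ × ℝ) :=
    {q | 0 < p₀.1 * q.1} ∩ ({q | 0 < (p₀.1 - 1) * (q.1 - 1)} ∩ ({q | 0 < (p₀.1 - x) * (q.1 - x)} ∩
      ({q | 0 < p₀.2 * q.2} ∩ ({q | 0 < (p₀.2 - 1) * (q.2 - 1)} ∩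
      ({q | 0 < (p₀.2 - y) * (q.2 - y)} ∩ {q | 0 < (p₀.1 - p₀.2) * (q.1 - q.2)}))))) with hC
  have smul_fst : ∀ (u v : ℝ) (q₁ q₂ : ℝ × ℝ), (u • q₁ + v • q₂).1 = u * q₁.1 + v * q₂.1 := by
    intro u v q₁ q₂; simp [smul_eq_mul]
  have smul_snd : ∀ (u v : ℝ) (q₁ q₂ : ℝ × ℝ), (u • q₁ + v • q₂).2 = u * q₁.2 + v * q₂.2 := by
    intro u v q₁ q₂; simp [smul_eq_mul]
  have hCconv : Convex ℝ C := by
    refine (convex_pos_affine ?_).inter ((convex_pos_affine ?_).inter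
      ((convex_pos_affine ?_).inter ((convex_pos_affine ?_).inter ((convex_pos_affine ?_).inter
      ((convex_pos_affine ?_).inter (convex_pos_affine ?_)))))) <;>
      intro u v q₁ q₂ huv <;> simp only [smul_fst u v q₁ q₂, smul_snd u v q₁ q₂]
    · ring
    · linear_combination (p₀.1 - 1) * huv
    · linear_combination x * (p₀.1 - x) * huv
    · ring
    · linear_combination (p₀.2 - 1) * huv
    · linear_combination y * (p₀.2 - y) * huv
    · ring
  have hCK : C ⊆ K := by
    rintro q ⟨c1, c2, c3, c4, c5, c6, c7⟩
    simp only [Set.mem_setOf_eq] at c1 c2 c3 c4 c5 c6 c7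
    refine ⟨?_, ?_, ?_, ?_, ?_, ?_, ?_⟩ <;> intro h
    · rw [h] at c1; simp at c1
    · rw [show q.1 - 1 = 0 by rw [h]; ring] at c2; simp at c2
    · rw [show q.1 - x = 0 by rw [h]; ring] at c3; simp at c3
    · rw [h] at c4; simp at c4
    · rw [show q.2 - 1 = 0 by rw [h]; ring] at c5; simp at c5
    · rw [show q.2 - y = 0 by rw [h]; ring] at c6; simp at c6
    · rw [show q.1 - q.2 = 0 by rw [h]; ring] at c7; simp at c7
  have hpC : p₀ ∈ C := by
    refine ⟨mul_self_pos.2 e1, mul_self_pos.2 (sub_ne_zero.2 e2),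
      mul_self_pos.2 (sub_ne_zero.2 e3), mul_self_pos.2 e4,
      mul_self_pos.2 (sub_ne_zero.2 e5), mul_self_pos.2 (sub_ne_zero.2 e6),
      mul_self_pos.2 (sub_ne_zero.2 e7)⟩
  have hpK : p₀ ∈ K := hCK hpC
  have hsub1 : C ⊆ connectedComponentIn K p₀ :=
    hCconv.isPreconnected.subset_connectedComponentIn hpC hCK
  have hsub2 : connectedComponentIn K p₀ ⊆ C := by
    intro q hq
    have hS : IsPreconnected (connectedComponentIn K p₀) := isPreconnected_connectedComponentIn
    have hqK : q ∈ K := connectedComponentIn_subset K p₀ hq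
    have hpσ : p₀ ∈ connectedComponentIn K p₀ := mem_connectedComponentIn hpK
    obtain ⟨f1, f2, f3, f4, f5, f6, f7⟩ := hqK
    refine ⟨?_, ?_, ?_, ?_, ?_, ?_, ?_⟩
    · exact sign_const_on_preconnected hS continuous_fst
        (fun z hz => (connectedComponentIn_subset K p₀ hz).1) hpσ hq
    · exact sign_const_on_preconnected hS (continuous_fst.sub continuous_const)
        (fun z hz => sub_ne_zero.2 (connectedComponentIn_subset K p₀ hz).2.1) hpσ hq
    · exact sign_const_on_preconnected hS (continuous_fst.sub continuous_const)
        (fun z hz => sub_ne_zero.2 (connectedComponentIn_subset K p₀ hz).2.2.1) hpσ hq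
    · exact sign_const_on_preconnected hS continuous_snd
        (fun z hz => (connectedComponentIn_subset K p₀ hz).2.2.2.1) hpσ hq
    · exact sign_const_on_preconnected hS (continuous_snd.sub continuous_const)
        (fun z hz => sub_ne_zero.2 (connectedComponentIn_subset K p₀ hz).2.2.2.2.1) hpσ hq
    · exact sign_const_on_preconnected hS (continuous_snd.sub continuous_const)
        (fun z hz => sub_ne_zero.2 (connectedComponentIn_subset K p₀ hz).2.2.2.2.2.1) hpσ hq
    · exact sign_const_on_preconnected hS (continuous_fst.sub continuous_snd)
        (fun z hz => sub_ne_zero.2 (connectedComponentIn_subset K p₀ hz).2.2.2.2.2.2) hpσ hq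
  have : connectedComponentIn K p₀ = C := le_antisymm hsub2 hsub1
  rw [this]
  exact hCconv

end Aux

lemma convex_open_bdd_eq_Ioo {S : Set ℝ} (hconv : Convex ℝ S) (ho : IsOpen S)
    (hba : BddAbove S) (hbb : BddBelow S) (hne : S.Nonempty) :
    S = Set.Ioo (sInf S) (sSup S) ∧ sInf S < sSup S := by
  have hmem : ∀ t ∈ S, sInf S < t ∧ t < sSup S := by
    intro t ht
    obtain ⟨ε, hε, hball⟩ := Metric.isOpen_iff.1 ho t ht
    constructor
    · have h1 : t - ε / 2 ∈ S := by
        apply hball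
        rw [Metric.mem_ball, Real.dist_eq]
        rw [abs_of_nonpos (by linarith)]
        linarith
      have := csInf_le hbb h1
      linarith
    · have h1 : t + ε / 2 ∈ S := by
        apply hball
        rw [Metric.mem_ball, Real.dist_eq]
        rw [abs_of_nonneg (by linarith)]
        linarith
      have := le_csSup hba h1
      linarith
  obtain ⟨t₀, ht₀⟩ := hne
  have hlu : sInf S < sSup S := lt_trans (hmem t₀ ht₀).1 (hmem t₀ ht₀).2
  refine ⟨le_antisymm ?_ ?_, hlu⟩
  · intro t ht; exact hmem t ht
  · intro t ht
    obtain ⟨a, haS, hat⟩ := exists_lt_of_csInf_lt ⟨t₀, ht₀⟩ ht.1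
    obtain ⟨d, hdS, htd⟩ := exists_lt_of_lt_csSup ⟨t₀, ht₀⟩ ht.2
    exact hconv.ordConnected.out haS hdS ⟨hat.le, htd.le⟩


set_option maxHeartbeats 2000000 in
/-- the cohomological expansion ω₁₅ ∼ −(1/(ab))(η₁+η₇)
integrated over a bounded chamber `σ` of the Dotsenko–Fateev arrangement. -/
theorem expansion_omega15 (x y a b c g : ℝ)
    (hx0 : x ≠ 0) (hx1 : x ≠ 1) (hy0 : y ≠ 0) (hy1 : y ≠ 1) (hxy : x ≠ y)
    (ha : 1 < a) (hb : 1 < b) (hc : 1 < c) (hg : 1 < g)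
    (σ : Set (ℝ × ℝ)) (hbd : Bornology.IsBounded σ)
    (hcc : ∃ p ∈ dfComplement x y, σ = connectedComponentIn (dfComplement x y) p) :
    dfInt a b c g x y σ (fun p => 1 / (p.1 * (p.2 - 1))) =
      -(1 / (a * b)) * dfInt a b c g x y σ (fun p => h1 b c x p + h7 b g p) := by
  obtain ⟨p₀, hp₀, hσ⟩ := hcc
  have ha0 : (0:ℝ) < a := by linarith
  have hb0 : (0:ℝ) < b := by linarith
  have hc0 : (0:ℝ) < c := by linarith
  have hg0 : (0:ℝ) < g := by linarith
  set K := dfComplement x y with hK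
  set Φ : ℝ × ℝ → ℝ := dfWeight a b c g x y with hΦ
  set w : ℝ × ℝ → ℝ := fun p => 1 / (p.1 * (p.2 - 1)) with hw
  set hh : ℝ × ℝ → ℝ := fun p => h1 b c x p + h7 b g p with hhh
  set D : ℝ × ℝ → ℝ := fun p => Φ p * w p + 1 / (a * b) * (Φ p * hh p) with hD
  -- geometry of σ
  have hKopen : IsOpen K := by
    have : K = {p : ℝ × ℝ | p.1 ≠ 0} ∩ ({p | p.1 ≠ 1} ∩ ({p | p.1 ≠ x} ∩ ({p | p.2 ≠ 0} ∩
        ({p | p.2 ≠ 1} ∩ ({p | p.2 ≠ y} ∩ {p | p.1 ≠ p.2}))))) := by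
      ext p; simp [hK, dfComplement, and_assoc]
    rw [this]
    refine (isOpen_ne_fun continuous_fst continuous_const).inter
      ((isOpen_ne_fun continuous_fst continuous_const).inter
      ((isOpen_ne_fun continuous_fst continuous_const).inter
      ((isOpen_ne_fun continuous_snd continuous_const).inter
      ((isOpen_ne_fun continuous_snd continuous_const).inter
      ((isOpen_ne_fun continuous_snd continuous_const).inter
      (isOpen_ne_fun continuous_fst continuous_snd))))))
  have hσo : IsOpen σ := hσ ▸ hKopen.connectedComponentIn
  have hσK : σ ⊆ K := hσ ▸ connectedComponentIn_subset K p₀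
  have hσconv : Convex ℝ σ := hσ ▸ convex_connectedComponentIn_df x y hp₀
  have hσmeas : MeasurableSet σ := hσo.measurableSet
  obtain ⟨R, hR⟩ : ∃ R : ℝ, ∀ p ∈ σ, ‖p‖ ≤ R := by
    obtain ⟨r, hr⟩ := hbd.subset_closedBall 0
    exact ⟨r, fun p hp => by simpa [Real.dist_eq, dist_zero_right] using hr hp⟩
  -- continuity and vanishing of the weight
  have hΦcont : Continuous Φ := by
    refine ((((((continuous_abs_rpow continuous_fst ha0.le).mul
      (continuous_abs_rpow continuous_snd ha0.le)).mul
      (continuous_abs_rpow (continuous_fst.sub continuous_const) hb0.le)).mul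
      (continuous_abs_rpow (continuous_snd.sub continuous_const) hb0.le)).mul
      (continuous_abs_rpow (continuous_fst.sub continuous_const) hc0.le)).mul
      (continuous_abs_rpow (continuous_snd.sub continuous_const) hc0.le)).mul
      (continuous_abs_rpow (continuous_fst.sub continuous_snd) hg0.le)
  have hΦnn : ∀ p, 0 ≤ Φ p := by
    intro p
    simp only [hΦ, dfWeight]
    positivity
  have hΦzero : ∀ t s : ℝ, (t = 0 ∨ t = 1 ∨ t = x ∨ t = s ∨ s = 0 ∨ s = 1 ∨ s = y) →
      Φ (t, s) = 0 := by
    intro t s hts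
    simp only [hΦ, dfWeight]
    rcases hts with h | h | h | h | h | h | h <;> rw [h] <;>
      simp [Real.zero_rpow ha0.ne', Real.zero_rpow hb0.ne', Real.zero_rpow hc0.ne',
        Real.zero_rpow hg0.ne', sub_self]
  -- integrability
  have hdom : ∀ G : ℝ × ℝ → ℝ, Continuous G → IntegrableOn G σ := fun G hG =>
    ((hG.continuousOn).integrableOn_compact hbd.isCompact_closure).mono_set subset_closure
  have habs_le : ∀ z e : ℝ, 0 < e → |z| ^ e * |z|⁻¹ ≤ |z| ^ (e - 1) := by
    intro z e he
    rcases eq_or_ne z 0 with rfl | hz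
    · simp only [abs_zero, Real.zero_rpow he.ne', zero_mul]
      exact Real.rpow_nonneg le_rfl _
    · rw [Real.rpow_sub_one (abs_ne_zero.2 hz), div_eq_mul_inv]
  have ha1 : (0:ℝ) < a - 1 + 1 := by linarith
  have hwmeas : Measurable w := by
    exact measurable_const.div (measurable_fst.mul (measurable_snd.sub measurable_const))
  set G1 : ℝ × ℝ → ℝ := fun p => |p.1| ^ (a-1) * |p.2| ^ a * |p.1-1| ^ b * |p.2-1| ^ (b-1) *
    |p.1-x| ^ c * |p.2-y| ^ c * |p.1-p.2| ^ g with hG1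
  have hG1cont : Continuous G1 := by
    exact ((((((continuous_abs_rpow continuous_fst (by linarith)).mul
        (continuous_abs_rpow continuous_snd ha0.le)).mul
        (continuous_abs_rpow (continuous_fst.sub continuous_const) hb0.le)).mul
        (continuous_abs_rpow (continuous_snd.sub continuous_const) (by linarith))).mul
        (continuous_abs_rpow (continuous_fst.sub continuous_const) hc0.le)).mul
        (continuous_abs_rpow (continuous_snd.sub continuous_const) hc0.le)).mul
        (continuous_abs_rpow (continuous_fst.sub continuous_snd) hg0.le)
  have bnd1 : ∀ p, ‖Φ p * w p‖ ≤ G1 p := by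
    intro p
    simp only [hG1]
    have habsw : |w p| = |p.1|⁻¹ * |p.2 - 1|⁻¹ := by
      simp only [hw, one_div, abs_inv, abs_mul, mul_inv]
    have heq : ‖Φ p * w p‖ = (|p.1| ^ a * |p.1|⁻¹) *
        (|p.2| ^ a * |p.1-1| ^ b * (|p.2-1| ^ b * |p.2-1|⁻¹) *
          |p.1-x| ^ c * |p.2-y| ^ c * |p.1-p.2| ^ g) := by
      rw [Real.norm_eq_abs, abs_mul, abs_of_nonneg (hΦnn p), habsw]
      simp only [hΦ, dfWeight]
      ring
    rw [heq]
    calc (|p.1| ^ a * |p.1|⁻¹) *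
        (|p.2| ^ a * |p.1-1| ^ b * (|p.2-1| ^ b * |p.2-1|⁻¹) *
          |p.1-x| ^ c * |p.2-y| ^ c * |p.1-p.2| ^ g)
        ≤ (|p.1| ^ (a-1)) *
        (|p.2| ^ a * |p.1-1| ^ b * (|p.2-1| ^ (b-1)) *
          |p.1-x| ^ c * |p.2-y| ^ c * |p.1-p.2| ^ g) := by
          have h1 := habs_le p.1 a ha0
          have h2 := habs_le (p.2-1) b hb0
          gcongr <;> positivity
      _ = |p.1| ^ (a-1) * |p.2| ^ a * |p.1-1| ^ b * |p.2-1| ^ (b-1) *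
          |p.1-x| ^ c * |p.2-y| ^ c * |p.1-p.2| ^ g := by ring
  have int1 : IntegrableOn (fun p => Φ p * w p) σ := by
    exact Integrable.mono' (hdom G1 hG1cont)
      ((hΦcont.measurable.mul hwmeas).aestronglyMeasurable)
      (Filter.Eventually.of_forall bnd1)
  have hhmeas : Measurable hh := by
    refine Measurable.add ?_ (Measurable.add ?_ ?_)
    · exact measurable_const.div ((measurable_fst.sub measurable_const).mul
        (measurable_snd.sub measurable_const))
    · exact measurable_const.div ((measurable_fst.sub measurable_const).mul
        (measurable_snd.sub measurable_const))
    · exact measurable_const.div ((measurable_snd.sub measurable_const).mul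
        (measurable_fst.sub measurable_snd))
  set G2 : ℝ × ℝ → ℝ := fun p =>
        b*c*(|p.1| ^ a * |p.2| ^ a * |p.1-1| ^ b * |p.2-1| ^ (b-1) * |p.1-x| ^ (c-1) *
          |p.2-y| ^ c * |p.1-p.2| ^ g) +
        (b^2*(|p.1| ^ a * |p.2| ^ a * |p.1-1| ^ (b-1) * |p.2-1| ^ (b-1) * |p.1-x| ^ c *
          |p.2-y| ^ c * |p.1-p.2| ^ g) +
        b*g*(|p.1| ^ a * |p.2| ^ a * |p.1-1| ^ b * |p.2-1| ^ (b-1) * |p.1-x| ^ c *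
          |p.2-y| ^ c * |p.1-p.2| ^ (g-1))) with hG2
  have hG2cont : Continuous G2 := by
    refine Continuous.add ?_ (Continuous.add ?_ ?_) <;>
      · refine continuous_const.mul ?_
        exact ((((((continuous_abs_rpow continuous_fst (by linarith)).mul
          (continuous_abs_rpow continuous_snd (by linarith))).mul
          (continuous_abs_rpow (continuous_fst.sub continuous_const) (by linarith))).mul
          (continuous_abs_rpow (continuous_snd.sub continuous_const) (by linarith))).mul
          (continuous_abs_rpow (continuous_fst.sub continuous_const) (by linarith))).mul
          (continuous_abs_rpow (continuous_snd.sub continuous_const) (by linarith))).mul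
          (continuous_abs_rpow (continuous_fst.sub continuous_snd) (by linarith))
  have bnd2 : ∀ p, ‖Φ p * hh p‖ ≤ G2 p := by
    intro p
    simp only [hG2]
    have hb1 : Φ p * |h1 b c x p| ≤ b*c*(|p.1| ^ a * |p.2| ^ a * |p.1-1| ^ b *
        |p.2-1| ^ (b-1) * |p.1-x| ^ (c-1) * |p.2-y| ^ c * |p.1-p.2| ^ g) := by
      have e1 : |h1 b c x p| = b*c*(|p.1-x|⁻¹ * |p.2-1|⁻¹) := by
        simp only [h1, abs_div, abs_mul, abs_inv, abs_of_pos hb0, abs_of_pos hc0, mul_inv,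
          div_eq_mul_inv]
      have heq : Φ p * (b*c*(|p.1-x|⁻¹ * |p.2-1|⁻¹)) =
          b*c*((|p.1-x| ^ c * |p.1-x|⁻¹) * ((|p.2-1| ^ b * |p.2-1|⁻¹) *
            (|p.1| ^ a * |p.2| ^ a * |p.1-1| ^ b * |p.2-y| ^ c * |p.1-p.2| ^ g))) := by
        simp only [hΦ, dfWeight]; ring
      rw [e1, heq]
      have h1' := habs_le (p.1-x) c hc0
      have h2' := habs_le (p.2-1) b hb0
      calc b*c*((|p.1-x| ^ c * |p.1-x|⁻¹) * ((|p.2-1| ^ b * |p.2-1|⁻¹) *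
            (|p.1| ^ a * |p.2| ^ a * |p.1-1| ^ b * |p.2-y| ^ c * |p.1-p.2| ^ g)))
          ≤ b*c*((|p.1-x| ^ (c-1)) * ((|p.2-1| ^ (b-1)) *
            (|p.1| ^ a * |p.2| ^ a * |p.1-1| ^ b * |p.2-y| ^ c * |p.1-p.2| ^ g))) := by
            gcongr <;> positivity
        _ = b*c*(|p.1| ^ a * |p.2| ^ a * |p.1-1| ^ b * |p.2-1| ^ (b-1) * |p.1-x| ^ (c-1) *
            |p.2-y| ^ c * |p.1-p.2| ^ g) := by ring
    have hb2 : Φ p * |b^2 / ((p.1-1)*(p.2-1))| ≤ b^2*(|p.1| ^ a * |p.2| ^ a *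
        |p.1-1| ^ (b-1) * |p.2-1| ^ (b-1) * |p.1-x| ^ c * |p.2-y| ^ c * |p.1-p.2| ^ g) := by
      have e1 : |b^2 / ((p.1-1)*(p.2-1))| = b^2*(|p.1-1|⁻¹ * |p.2-1|⁻¹) := by
        rw [abs_div, abs_mul, abs_pow, abs_of_pos hb0, div_eq_mul_inv, mul_inv]
      have heq : Φ p * (b^2*(|p.1-1|⁻¹ * |p.2-1|⁻¹)) =
          b^2*((|p.1-1| ^ b * |p.1-1|⁻¹) * ((|p.2-1| ^ b * |p.2-1|⁻¹) *
            (|p.1| ^ a * |p.2| ^ a * |p.1-x| ^ c * |p.2-y| ^ c * |p.1-p.2| ^ g))) := by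
        simp only [hΦ, dfWeight]; ring
      rw [e1, heq]
      have h1' := habs_le (p.1-1) b hb0
      have h2' := habs_le (p.2-1) b hb0
      calc b^2*((|p.1-1| ^ b * |p.1-1|⁻¹) * ((|p.2-1| ^ b * |p.2-1|⁻¹) *
            (|p.1| ^ a * |p.2| ^ a * |p.1-x| ^ c * |p.2-y| ^ c * |p.1-p.2| ^ g)))
          ≤ b^2*((|p.1-1| ^ (b-1)) * ((|p.2-1| ^ (b-1)) *
            (|p.1| ^ a * |p.2| ^ a * |p.1-x| ^ c * |p.2-y| ^ c * |p.1-p.2| ^ g))) := by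
            gcongr <;> positivity
        _ = b^2*(|p.1| ^ a * |p.2| ^ a * |p.1-1| ^ (b-1) * |p.2-1| ^ (b-1) * |p.1-x| ^ c *
            |p.2-y| ^ c * |p.1-p.2| ^ g) := by ring
    have hb3 : Φ p * |b*g / ((p.2-1)*(p.1-p.2))| ≤ b*g*(|p.1| ^ a * |p.2| ^ a *
        |p.1-1| ^ b * |p.2-1| ^ (b-1) * |p.1-x| ^ c * |p.2-y| ^ c * |p.1-p.2| ^ (g-1)) := by
      have e1 : |b*g / ((p.2-1)*(p.1-p.2))| = b*g*(|p.2-1|⁻¹ * |p.1-p.2|⁻¹) := by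
        rw [abs_div, abs_mul b g, abs_mul, abs_of_pos hb0, abs_of_pos hg0, div_eq_mul_inv,
          mul_inv]
      have heq : Φ p * (b*g*(|p.2-1|⁻¹ * |p.1-p.2|⁻¹)) =
          b*g*((|p.2-1| ^ b * |p.2-1|⁻¹) * ((|p.1-p.2| ^ g * |p.1-p.2|⁻¹) *
            (|p.1| ^ a * |p.2| ^ a * |p.1-1| ^ b * |p.1-x| ^ c * |p.2-y| ^ c))) := by
        simp only [hΦ, dfWeight]; ring
      rw [e1, heq]
      have h1' := habs_le (p.2-1) b hb0
      have h2' := habs_le (p.1-p.2) g hg0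
      calc b*g*((|p.2-1| ^ b * |p.2-1|⁻¹) * ((|p.1-p.2| ^ g * |p.1-p.2|⁻¹) *
            (|p.1| ^ a * |p.2| ^ a * |p.1-1| ^ b * |p.1-x| ^ c * |p.2-y| ^ c)))
          ≤ b*g*((|p.2-1| ^ (b-1)) * ((|p.1-p.2| ^ (g-1)) *
            (|p.1| ^ a * |p.2| ^ a * |p.1-1| ^ b * |p.1-x| ^ c * |p.2-y| ^ c))) := by
            gcongr <;> positivity
        _ = b*g*(|p.1| ^ a * |p.2| ^ a * |p.1-1| ^ b * |p.2-1| ^ (b-1) * |p.1-x| ^ c *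
            |p.2-y| ^ c * |p.1-p.2| ^ (g-1)) := by ring
    calc ‖Φ p * hh p‖ = Φ p * |h1 b c x p + (b^2 / ((p.1-1)*(p.2-1)) +
          b*g / ((p.2-1)*(p.1-p.2)))| := by
          rw [Real.norm_eq_abs, abs_mul, abs_of_nonneg (hΦnn p)]
          simp only [hhh, h7]
      _ ≤ Φ p * (|h1 b c x p| + (|b^2 / ((p.1-1)*(p.2-1))| + |b*g / ((p.2-1)*(p.1-p.2))|)) := by
          refine mul_le_mul_of_nonneg_left ?_ (hΦnn p)
          exact (abs_add_le _ _).trans (add_le_add le_rfl (abs_add_le _ _))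
      _ = Φ p * |h1 b c x p| + (Φ p * |b^2 / ((p.1-1)*(p.2-1))| +
          Φ p * |b*g / ((p.2-1)*(p.1-p.2))|) := by ring
      _ ≤ _ := add_le_add hb1 (add_le_add hb2 hb3)
  have int2 : IntegrableOn (fun p => Φ p * hh p) σ := by
    exact Integrable.mono' (hdom G2 hG2cont)
      ((hΦcont.measurable.mul hhmeas).aestronglyMeasurable)
      (Filter.Eventually.of_forall bnd2)
  have intD : IntegrableOn D σ := by
    exact int1.add (int2.const_mul _)
  -- the key vanishing
  have hDmeas : Measurable D :=
    (hΦcont.measurable.mul hwmeas).add (measurable_const.mul (hΦcont.measurable.mul hhmeas))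
  have hGD : ∀ p, ‖D p‖ ≤ G1 p + 1/(a*b) * G2 p := by
    intro p
    calc ‖D p‖ ≤ ‖Φ p * w p‖ + ‖1/(a*b) * (Φ p * hh p)‖ := norm_add_le _ _
      _ = ‖Φ p * w p‖ + 1/(a*b) * ‖Φ p * hh p‖ := by
          rw [norm_mul (1/(a*b)) (Φ p * hh p), Real.norm_eq_abs (1/(a*b)), abs_of_pos (by positivity)]
      _ ≤ G1 p + 1/(a*b) * G2 p :=
          add_le_add (bnd1 p) (mul_le_mul_of_nonneg_left (bnd2 p) (by positivity))
  have key : ∫ p in σ, D p = 0 := by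
    have hinner : ∀ s : ℝ, (∫ t, Set.indicator σ D (t, s) ∂volume) = 0 := by
      intro s
      have hconts : Continuous fun t : ℝ => ((t : ℝ), s) := continuous_id.prodMk continuous_const
      set S : Set ℝ := (fun t : ℝ => ((t : ℝ), s)) ⁻¹' σ with hSdef
      have hSopen : IsOpen S := hσo.preimage hconts
      have hSmeas : MeasurableSet S := hSopen.measurableSet
      have hindic : (fun t : ℝ => Set.indicator σ D (t, s)) =
          Set.indicator S (fun t => D (t, s)) := rfl
      rw [hindic, integral_indicator hSmeas]
      rcases Set.eq_empty_or_nonempty S with hSe | hne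
      · rw [hSe]; simp
      obtain ⟨t₀, ht₀⟩ := hne
      have ht₀σ : ((t₀ : ℝ), s) ∈ σ := ht₀
      obtain ⟨-, -, -, hs0, hs1, hsy, -⟩ := hσK ht₀σ
      have hSconv : Convex ℝ S := by
        intro t₁ h₁ t₂ h₂ u v hu hv huv
        have hmem := hσconv (h₁ : ((t₁ : ℝ), s) ∈ σ) (h₂ : ((t₂ : ℝ), s) ∈ σ) hu hv huv
        have hpt : u • ((t₁ : ℝ), s) + v • ((t₂ : ℝ), s) = (u • t₁ + v • t₂, s) := by
          rw [Prod.ext_iff]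
          constructor
          · simp [smul_eq_mul]
          · simp only [Prod.snd_add, Prod.smul_snd, smul_eq_mul]
            linear_combination s * huv
        rw [hpt] at hmem
        exact hmem
      have hSba : BddAbove S := by
        refine ⟨R, fun t ht => ?_⟩
        have h2 : ‖t‖ ≤ ‖((t : ℝ), s)‖ := norm_fst_le ((t, s) : ℝ × ℝ)
        rw [Real.norm_eq_abs] at h2
        have := hR _ (ht : ((t : ℝ), s) ∈ σ)
        linarith [le_abs_self t]
      have hSbb : BddBelow S := by
        refine ⟨-R, fun t ht => ?_⟩
        have h2 : ‖t‖ ≤ ‖((t : ℝ), s)‖ := norm_fst_le ((t, s) : ℝ × ℝ)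
        rw [Real.norm_eq_abs] at h2
        have := hR _ (ht : ((t : ℝ), s) ∈ σ)
        linarith [neg_abs_le t]
      obtain ⟨hSIoo, hlu⟩ := convex_open_bdd_eq_Ioo hSconv hSopen hSba hSbb ⟨t₀, ht₀⟩
      set l := sInf S with hldef
      set u := sSup S with hudef
      have hbdry : ∀ z : ℝ, z ∉ S → (∀ ε : ℝ, 0 < ε → ∃ t' ∈ S, |t' - z| < ε) →
          Φ (z, s) = 0 := by
        intro z hzS happ
        by_cases hzK : ((z : ℝ), s) ∈ K
        · exfalso
          have hop : IsOpen (connectedComponentIn K (z, s)) := hKopen.connectedComponentIn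
          have hmem0 : ((z : ℝ), s) ∈ connectedComponentIn K (z, s) :=
            mem_connectedComponentIn hzK
          obtain ⟨ε, hε, hball⟩ := Metric.isOpen_iff.1 hop _ hmem0
          obtain ⟨t', ht'S, ht'close⟩ := happ ε hε
          have hd : dist ((t' : ℝ), s) (z, s) < ε := by
            rw [Prod.dist_eq]
            apply max_lt
            · rw [Real.dist_eq]; exact ht'close
            · rw [dist_self]; exact hε
          have hc1 : ((t' : ℝ), s) ∈ connectedComponentIn K (z, s) :=
            hball (Metric.mem_ball.2 hd)
          have hc2 : ((t' : ℝ), s) ∈ connectedComponentIn K p₀ := hσ ▸ (ht'S : t' ∈ S)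
          have e1 := connectedComponentIn_eq hc1
          have e2 := connectedComponentIn_eq hc2
          have : ((z : ℝ), s) ∈ σ := by rw [hσ, e2, ← e1]; exact hmem0
          exact hzS (this : z ∈ S)
        · apply hΦzero
          simp only [hK, dfComplement, Set.mem_setOf_eq] at hzK
          push_neg at hzK
          by_cases hz0 : z = 0
          · exact Or.inl hz0
          by_cases hz1 : z = 1
          · exact Or.inr (Or.inl hz1)
          by_cases hzx : z = x
          · exact Or.inr (Or.inr (Or.inl hzx))
          exact Or.inr (Or.inr (Or.inr (Or.inl (hzK hz0 hz1 hzx hs0 hs1 hsy))))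
      have hΦl : Φ (l, s) = 0 := by
        refine hbdry l (by rw [hSIoo]; simp) fun ε hε => ?_
        obtain ⟨t', ht'S, ht'lt⟩ := exists_lt_of_csInf_lt ⟨t₀, ht₀⟩
          (show sInf S < l + ε/2 by rw [← hldef]; linarith)
        have hge : l ≤ t' := csInf_le hSbb ht'S
        exact ⟨t', ht'S, by rw [abs_of_nonneg (by linarith)]; linarith⟩
      have hΦu : Φ (u, s) = 0 := by
        refine hbdry u (by rw [hSIoo]; simp) fun ε hε => ?_
        obtain ⟨t', ht'S, ht'gt⟩ := exists_lt_of_lt_csSup ⟨t₀, ht₀⟩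
          (show u - ε/2 < sSup S by rw [← hudef]; linarith)
        have hle : t' ≤ u := le_csSup hSba ht'S
        exact ⟨t', ht'S, by rw [abs_of_nonpos (by linarith)]; linarith⟩
      have hs1' : s - 1 ≠ 0 := sub_ne_zero.2 hs1
      set Fs : ℝ → ℝ := fun t => Φ (t, s) / (a * (s - 1)) with hFsdef
      have hFl : Fs l = 0 := by simp only [hFsdef]; rw [hΦl, zero_div]
      have hFu : Fs u = 0 := by simp only [hFsdef]; rw [hΦu, zero_div]
      have hcontF : ContinuousOn Fs (Set.Icc l u) :=
        ((hΦcont.comp hconts).div_const _).continuousOn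
      have hderivF : ∀ t ∈ Set.Ioo l u, HasDerivAt Fs (D (t, s)) t := by
        intro t htIoo
        have htS : t ∈ S := by rw [hSIoo]; exact htIoo
        have htσ : ((t : ℝ), s) ∈ σ := htS
        obtain ⟨ht0, ht1, htx, -, -, -, hts⟩ := hσK htσ
        have d1 : HasDerivAt (fun u : ℝ => |u| ^ a) (a * |t| ^ a / t) t := by
          have := hasDerivAt_abs_sub_rpow 0 ha (show t ≠ 0 from ht0)
          simpa using this
        have d2 : HasDerivAt (fun u : ℝ => |u - 1| ^ b) (b * |t - 1| ^ b / (t - 1)) t :=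
          hasDerivAt_abs_sub_rpow 1 hb ht1
        have d3 : HasDerivAt (fun u : ℝ => |u - x| ^ c) (c * |t - x| ^ c / (t - x)) t :=
          hasDerivAt_abs_sub_rpow x hc htx
        have d4 : HasDerivAt (fun u : ℝ => |u - s| ^ g) (g * |t - s| ^ g / (t - s)) t :=
          hasDerivAt_abs_sub_rpow s hg hts
        have dΦ := ((((((d1.mul_const (|s| ^ a)).mul d2).mul_const (|s - 1| ^ b)).mul
          d3).mul_const (|s - y| ^ c)).mul d4)
        have dF := dΦ.div_const (a * (s - 1))
        have hfun : Fs = fun u : ℝ =>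
            (|u| ^ a * |s| ^ a * |u - 1| ^ b * |s - 1| ^ b * |u - x| ^ c * |s - y| ^ c *
              |u - s| ^ g) / (a * (s - 1)) := by
          funext u
          simp only [hFsdef, hΦ, dfWeight]
        rw [hfun]
        refine dF.congr_deriv ?_
        simp only [hD, hw, hhh, hΦ, dfWeight, h1, h7, Pi.mul_apply]
        have hts' : t - s ≠ 0 := sub_ne_zero.2 hts
        have ht1' : t - 1 ≠ 0 := sub_ne_zero.2 ht1
        have htx' : t - x ≠ 0 := sub_ne_zero.2 htx
        field_simp
        ring
      have hintD : IntervalIntegrable (fun t => D (t, s)) volume l u := by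
        refine IntervalIntegrable.mono_fun'
          (g := fun t => G1 (t, s) + 1/(a*b) * G2 (t, s)) ?_ ?_ ?_
        · exact ((hG1cont.comp hconts).add
            (continuous_const.mul (hG2cont.comp hconts))).intervalIntegrable _ _
        · exact (hDmeas.comp hconts.measurable).aestronglyMeasurable
        · exact Filter.Eventually.of_forall fun t => hGD (t, s)
      rw [hSIoo, ← integral_Ioc_eq_integral_Ioo, ← intervalIntegral.integral_of_le hlu.le]
      rw [intervalIntegral.integral_eq_sub_of_hasDerivAt_of_le hlu.le hcontF hderivF hintD]
      rw [hFu, hFl, sub_zero]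
    have hind : Integrable (Set.indicator σ D) := (integrable_indicator_iff hσmeas).2 intD
    calc ∫ p in σ, D p = ∫ p, Set.indicator σ D p := (integral_indicator hσmeas).symm
      _ = ∫ p, Set.indicator σ D p ∂((volume : Measure ℝ).prod volume) := by
          rw [← MeasureTheory.Measure.volume_eq_prod]
      _ = ∫ s, ∫ t, Set.indicator σ D (t, s) ∂volume ∂volume := by
          refine integral_prod_symm _ ?_
          rw [← MeasureTheory.Measure.volume_eq_prod]; exact hind
      _ = 0 := by simp only [hinner, integral_zero]
  -- conclusion
  have hsplit : ∫ p in σ, D p =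
      (∫ p in σ, Φ p * w p) + 1 / (a * b) * ∫ p in σ, Φ p * hh p := by
    rw [integral_add int1 (int2.const_mul _), integral_const_mul]
  have hgoal : (∫ p in σ, Φ p * w p) = -(1 / (a * b)) * ∫ p in σ, Φ p * hh p := by
    rw [hsplit] at key; linarith
  exact hgoal
end

section
/- With the notation of the context, I(w) = (1/(b(2b+g)))·I(h₆ + 2h₇), where w(t,s) = 1/((t−1)(s−1)). -/
open MeasureTheory

/-- the cohomological expansion ω₂₅ ∼ (1/(b(2b+g)))(η₆+2η₇)
integrated over a bounded chamber `σ` of the Dotsenko–Fateev arrangement. -/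
theorem expansion_omega25 (x y a b c g : ℝ)
    (hx0 : x ≠ 0) (hx1 : x ≠ 1) (hy0 : y ≠ 0) (hy1 : y ≠ 1) (hxy : x ≠ y)
    (ha : 1 < a) (hb : 1 < b) (hc : 1 < c) (hg : 1 < g)
    (σ : Set (ℝ × ℝ)) (hbd : Bornology.IsBounded σ)
    (hcc : ∃ p ∈ dfComplement x y, σ = connectedComponentIn (dfComplement x y) p) :
    dfInt a b c g x y σ (fun p => 1 / ((p.1 - 1) * (p.2 - 1))) =
      (1 / (b * (2 * b + g))) * dfInt a b c g x y σ (fun p => h6 b g p + 2 * h7 b g p) := by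
  obtain ⟨p₀, hp₀, hσ⟩ := hcc
  have hopenC : IsOpen (dfComplement x y) := by
    have : dfComplement x y =
        ({p : ℝ × ℝ | p.1 ≠ 0} ∩ {p | p.1 ≠ 1} ∩ {p | p.1 ≠ x} ∩ {p | p.2 ≠ 0}
          ∩ {p | p.2 ≠ 1} ∩ {p | p.2 ≠ y} ∩ {p | p.1 ≠ p.2}) := by
      ext q; simp [dfComplement]; tauto
    rw [this]
    refine (((((((isOpen_ne_fun continuous_fst continuous_const).inter
      (isOpen_ne_fun continuous_fst continuous_const)).inter
      (isOpen_ne_fun continuous_fst continuous_const)).inter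
      (isOpen_ne_fun continuous_snd continuous_const)).inter
      (isOpen_ne_fun continuous_snd continuous_const)).inter
      (isOpen_ne_fun continuous_snd continuous_const)).inter
      (isOpen_ne_fun continuous_fst continuous_snd))
  have hopen : IsOpen σ := hσ ▸ hopenC.connectedComponentIn
  have hsub : σ ⊆ dfComplement x y := hσ ▸ connectedComponentIn_subset _ _
  set K : ℝ := b * (2 * b + g) with hK
  have hKne : K ≠ 0 := by positivity
  have hpt : ∀ q ∈ σ, dfWeight a b c g x y q * (h6 b g q + 2 * h7 b g q)
      = dfWeight a b c g x y q * (K * (1 / ((q.1 - 1) * (q.2 - 1)))) := by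
    intro q hq
    obtain ⟨-, h1', -, -, h2', -, h3'⟩ := hsub hq
    have e1 : q.1 - 1 ≠ 0 := sub_ne_zero.mpr h1'
    have e2 : q.2 - 1 ≠ 0 := sub_ne_zero.mpr h2'
    have e3 : q.1 - q.2 ≠ 0 := sub_ne_zero.mpr h3'
    have : h6 b g q + 2 * h7 b g q = K * (1 / ((q.1 - 1) * (q.2 - 1))) := by
      simp only [h6, h7, hK]
      field_simp
      ring
    rw [this]
  have hI : dfInt a b c g x y σ (fun p => h6 b g p + 2 * h7 b g p)
      = K * dfInt a b c g x y σ (fun p => 1 / ((p.1 - 1) * (p.2 - 1))) := by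
    unfold dfInt
    rw [MeasureTheory.setIntegral_congr_fun hopen.measurableSet hpt]
    rw [← MeasureTheory.integral_const_mul]
    congr 1; ext q; ring
  rw [hI]
  field_simp
end
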